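/- arXiv:1009.4736 — 2 statements merged into one kernel-verified Lean document; each statement's English description precedes it below -/
import Mathlib

section
/- Every monochromatic transposition of Π that is 11-critical, 12-critical, or 13-critical involves at least one of the elements a_10, a_9, a_8, b_10, b_9, b_8, c_10, c_9, c_8. -/
/-- An `n`-half-period: a sequence `π_0, …, π_{n(n-1)/2}` of arrangements of `n`
labeled elements in the positions `1, …, n` (recorded by `pos t x` = the position of
element `x` at time `t`), in which consecutive arrangements differ by a transposition
of the elements in two adjacent positions, and the last arrangement is the reverse of
the first. -/
structure HalfPeriod (n : ℕ) where
  pos : ℕ → Fin n → ℕ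
  pos_mem : ∀ t, t ≤ n * (n - 1) / 2 → ∀ x, 1 ≤ pos t x ∧ pos t x ≤ n
  pos_inj : ∀ t, t ≤ n * (n - 1) / 2 → Function.Injective (pos t)
  step : ∀ t, t < n * (n - 1) / 2 → ∃ x y : Fin n,
    pos t y = pos t x + 1 ∧ pos (t + 1) x = pos t x + 1 ∧ pos (t + 1) y = pos t x ∧
    ∀ z, z ≠ x → z ≠ y → pos (t + 1) z = pos t z
  reverse : ∀ x, pos (n * (n - 1) / 2) x = n + 1 - pos 0 x

namespace HalfPeriod

variable {n : ℕ}

/-- The number of transposition steps of an `n`-half-period. -/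
def steps (n : ℕ) : ℕ := n * (n - 1) / 2

/-- Element `x` moves (changes position) at step `t`. -/
def Moved (hp : HalfPeriod n) (t : ℕ) (x : Fin n) : Prop :=
  hp.pos (t + 1) x ≠ hp.pos t x

/-- Step `t` is the transposition of the (distinct) elements `x` and `y`. -/
def SwapsAt (hp : HalfPeriod n) (t : ℕ) (x y : Fin n) : Prop :=
  x ≠ y ∧ hp.Moved t x ∧ hp.Moved t y

/-- Step `t` is an `i`-transposition: it swaps the elements at positions `i` and `i+1`. -/
def GateAt (hp : HalfPeriod n) (t i : ℕ) : Prop :=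
  ∃ x y : Fin n, hp.pos t x = i ∧ hp.pos t y = i + 1 ∧
    hp.pos (t + 1) x = i + 1 ∧ hp.pos (t + 1) y = i

/-- Step `t` is an `i`-critical transposition: an `i`- or an `(n-i)`-transposition. -/
def Critical (hp : HalfPeriod n) (t i : ℕ) : Prop :=
  hp.GateAt t i ∨ hp.GateAt t (n - i)

/-- Step `t` is a `(≤ k)`-critical transposition. -/
def LeCritical (hp : HalfPeriod n) (t k : ℕ) : Prop :=
  ∃ i, 1 ≤ i ∧ i ≤ k ∧ hp.Critical t i

/-- `N_{≤ k}`: the number of `(≤ k)`-critical transpositions of the half-period. -/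
noncomputable def NLe (hp : HalfPeriod n) (k : ℕ) : ℕ :=
  {t : ℕ | t < steps n ∧ hp.LeCritical t k}.ncard

end HalfPeriod
/-- `hp` is a 3-decomposable `30`-half-period, witnessed by the labeling
`A = {a 0, …, a 9}`, `B = {b 0, …, b 9}`, `C = {c 0, …, c 9}` (the element with
1-indexed subscript `j` is `a (j-1)`, etc.): the initial arrangement is
`(a_10, a_9, …, a_1, b_1, …, b_10, c_1, …, c_10)`, every transposition between `A`
and `B` occurs before every transposition between `C` and `A ∪ B`, and every
transposition between `A` and `C` occurs before every transposition between `B`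
and `C`. -/
def IsThreeDecompLabeling30 (hp : HalfPeriod 30) (a b c : Fin 10 → Fin 30) : Prop :=
  Function.Injective (Sum.elim a (Sum.elim b c)) ∧
  (∀ i : Fin 10, hp.pos 0 (a i) = 10 - (i : ℕ)) ∧
  (∀ i : Fin 10, hp.pos 0 (b i) = 11 + (i : ℕ)) ∧
  (∀ i : Fin 10, hp.pos 0 (c i) = 21 + (i : ℕ)) ∧
  (∀ s t, s < HalfPeriod.steps 30 → t < HalfPeriod.steps 30 →
    (∃ i j, hp.SwapsAt s (a i) (b j)) →
    (∃ i x, ((∃ j, x = a j) ∨ (∃ j, x = b j)) ∧ hp.SwapsAt t (c i) x) → s < t) ∧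
  (∀ s t, s < HalfPeriod.steps 30 → t < HalfPeriod.steps 30 →
    (∃ i j, hp.SwapsAt s (a i) (c j)) →
    (∃ i j, hp.SwapsAt t (b i) (c j)) → s < t)

/-- `x` and `y` belong to the same one of the three classes `A`, `B`, `C`. -/
def SameClass (a b c : Fin 10 → Fin 30) (x y : Fin 30) : Prop :=
  (∃ i j, x = a i ∧ y = a j) ∨ (∃ i j, x = b i ∧ y = b j) ∨ (∃ i j, x = c i ∧ y = c j)
/-- The relabeling of `B`: `b_10` is the (unique) element of `B` reaching position `1`
or position `30`, and for `i = 2, …, 10`, `b_{11-i}` is the (unique) element of `B`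
reaching position `i` or position `31-i` but reaching neither position `i-1` nor
position `32-i`. -/
def BLabelSpec (hp : HalfPeriod 30) (b : Fin 10 → Fin 30) : Prop :=
  ∀ j : Fin 10,
    (∃ t ≤ HalfPeriod.steps 30, hp.pos t (b j) = 11 - ((j : ℕ) + 1) ∨
      hp.pos t (b j) = 20 + ((j : ℕ) + 1)) ∧
    ((j : ℕ) + 1 ≤ 9 → ∀ t ≤ HalfPeriod.steps 30,
      hp.pos t (b j) ≠ 10 - ((j : ℕ) + 1) ∧ hp.pos t (b j) ≠ 21 + ((j : ℕ) + 1))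

namespace HalfPeriod
open Finset

variable (hp : HalfPeriod 30)

lemma pos_le {t : ℕ} (ht : t ≤ 435) (x : Fin 30) : 1 ≤ hp.pos t x ∧ hp.pos t x ≤ 30 :=
  hp.pos_mem t (by omega) x

lemma inj' {t : ℕ} (ht : t ≤ 435) {x y : Fin 30} (h : hp.pos t x = hp.pos t y) : x = y :=
  hp.pos_inj t (by omega) h

lemma step' {t : ℕ} (ht : t < 435) :
    ∃ x y : Fin 30, hp.pos t y = hp.pos t x + 1 ∧ hp.pos (t + 1) x = hp.pos t x + 1 ∧
      hp.pos (t + 1) y = hp.pos t x ∧ ∀ z, z ≠ x → z ≠ y → hp.pos (t + 1) z = hp.pos t z :=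
  hp.step t (by omega)

lemma rev' (x : Fin 30) : hp.pos 435 x = 31 - hp.pos 0 x := by
  have h := hp.reverse x
  have h2 : 30 * (30 - 1) / 2 = 435 := by norm_num
  rw [h2] at h
  simpa using h

lemma step_cases {t : ℕ} (ht : t < 435) (e : Fin 30) :
    hp.pos (t+1) e = hp.pos t e ∨ hp.pos (t+1) e = hp.pos t e + 1 ∨
      hp.pos t e = hp.pos (t+1) e + 1 := by
  obtain ⟨x, y, h1, h2, h3, h4⟩ := hp.step' ht
  by_cases hex : e = x
  · subst hex; omega
  by_cases hey : e = y
  · subst hey; right; right; omega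
  · left; exact h4 e hex hey

lemma order_step {t : ℕ} (ht : t < 435) {u v : Fin 30}
    (h : hp.pos t u < hp.pos t v) :
    hp.pos (t+1) u < hp.pos (t+1) v ∨
      (hp.pos t v = hp.pos t u + 1 ∧ hp.pos (t+1) u = hp.pos t u + 1 ∧
        hp.pos (t+1) v = hp.pos t u) := by
  obtain ⟨x, y, h1, h2, h3, h4⟩ := hp.step' ht
  have huv : u ≠ v := by rintro rfl; omega
  by_cases hux : u = x
  · subst hux
    by_cases hvy : v = y
    · subst hvy; exact Or.inr ⟨h1, h2, h3⟩
    · have hv := h4 v (fun hh => huv hh.symm) hvy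
      have hne2 : hp.pos (t+1) u ≠ hp.pos (t+1) v := fun hh => huv (hp.inj' (by omega) hh)
      left; omega
  · by_cases huy : u = y
    · subst huy
      by_cases hvx : v = x
      · subst hvx; omega
      · have hv := h4 v hvx (fun hh => huv hh.symm)
        left; omega
    · have hu := h4 u hux huy
      by_cases hvx : v = x
      · subst hvx; left; omega
      · by_cases hvy : v = y
        · subst hvy
          have hne1 : hp.pos t u ≠ hp.pos t x := fun hh => hux (hp.inj' (by omega) hh)
          left; omega
        · have hv := h4 v hvx hvy
          left; omega

/-- the predicate: at step `t` the pair `(u,v)` flips from `u` below `v`. -/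
def flipP (u v : Fin 30) (t : ℕ) : Prop :=
  hp.pos t u < hp.pos t v ∧ hp.pos (t+1) v ≤ hp.pos (t+1) u

instance (u v : Fin 30) (t : ℕ) : Decidable (hp.flipP u v t) := by
  unfold flipP; infer_instance

lemma flip_swap {t : ℕ} (ht : t < 435) {u v : Fin 30} (hf : hp.flipP u v t) :
    hp.pos t v = hp.pos t u + 1 ∧ hp.pos (t+1) u = hp.pos t u + 1 ∧
      hp.pos (t+1) v = hp.pos t u :=
  (hp.order_step ht hf.1).resolve_left (by have := hf.2; omega)

lemma up_eq {t : ℕ} (ht : t < 435) {u u' : Fin 30}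
    (hu : hp.pos (t+1) u = hp.pos t u + 1) (hu' : hp.pos (t+1) u' = hp.pos t u' + 1) :
    u = u' := by
  obtain ⟨x, y, h1, h2, h3, h4⟩ := hp.step' ht
  have key : ∀ w : Fin 30, hp.pos (t+1) w = hp.pos t w + 1 → w = x := by
    intro w hw
    by_cases hwx : w = x
    · exact hwx
    by_cases hwy : w = y
    · subst hwy; omega
    · have := h4 w hwx hwy; omega
  rw [key u hu, key u' hu']

lemma down_eq {t : ℕ} (ht : t < 435) {u u' : Fin 30}
    (hu : hp.pos t u = hp.pos (t+1) u + 1) (hu' : hp.pos t u' = hp.pos (t+1) u' + 1) :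
    u = u' := by
  obtain ⟨x, y, h1, h2, h3, h4⟩ := hp.step' ht
  have key : ∀ w : Fin 30, hp.pos t w = hp.pos (t+1) w + 1 → w = y := by
    intro w hw
    by_cases hwy : w = y
    · exact hwy
    by_cases hwx : w = x
    · subst hwx; omega
    · have := h4 w hwx hwy; omega
  rw [key u hu, key u' hu']

lemma flip_unique {t : ℕ} (ht : t < 435) {u v u' v' : Fin 30}
    (h1 : hp.flipP u v t) (h2 : hp.flipP u' v' t) : u = u' ∧ v = v' := by
  obtain ⟨e1, e2, e3⟩ := hp.flip_swap ht h1
  obtain ⟨f1, f2, f3⟩ := hp.flip_swap ht h2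
  exact ⟨hp.up_eq ht e2 f2, hp.down_eq ht (by omega) (by omega)⟩

/-- the set of ordered pairs in initial order. -/
def PP : Finset (Fin 30 × Fin 30) :=
  univ.filter (fun p => hp.pos 0 p.1 < hp.pos 0 p.2)

lemma mem_PP {p : Fin 30 × Fin 30} : p ∈ hp.PP ↔ hp.pos 0 p.1 < hp.pos 0 p.2 := by
  simp [PP]

lemma card_PP : hp.PP.card = 435 := by
  classical
  have hswap : (univ.filter (fun p : Fin 30 × Fin 30 => hp.pos 0 p.1 < hp.pos 0 p.2)).card
      = (univ.filter (fun p : Fin 30 × Fin 30 => hp.pos 0 p.2 < hp.pos 0 p.1)).card := by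
    refine Finset.card_bij (fun p _ => p.swap) ?_ ?_ ?_
    · intro p hq
      simp only [mem_filter, mem_univ, true_and] at hq ⊢
      exact hq
    · intro p _ q _ h
      exact Prod.swap_injective h
    · intro q hq
      simp only [mem_filter, mem_univ, true_and] at hq
      exact ⟨q.swap, by simp only [mem_filter, mem_univ, true_and]; simpa using hq, by simp⟩
  have hE : (univ.filter (fun p : Fin 30 × Fin 30 => p.1 = p.2)).card = 30 := by
    have himg : (univ.filter (fun p : Fin 30 × Fin 30 => p.1 = p.2))
        = (univ : Finset (Fin 30)).image (fun x => (x, x)) := by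
      ext p
      simp only [mem_filter, mem_univ, true_and, mem_image]
      constructor
      · intro h
        exact ⟨p.1, by rw [Prod.ext_iff]; exact ⟨rfl, h⟩⟩
      · rintro ⟨a, rfl⟩
        rfl
    rw [himg, Finset.card_image_of_injective]
    · simp
    · intro x y hxy
      simpa using congrArg Prod.fst hxy
  have key : ∀ p : Fin 30 × Fin 30,
      ((if hp.pos 0 p.1 < hp.pos 0 p.2 then 1 else 0)
        + (if hp.pos 0 p.2 < hp.pos 0 p.1 then 1 else 0))
        + (if p.1 = p.2 then (1:ℕ) else 0) = 1 := by
    intro p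
    by_cases h : p.1 = p.2
    · rw [h]; simp
    · have hne : hp.pos 0 p.1 ≠ hp.pos 0 p.2 := fun hh => h (hp.inj' (by omega) hh)
      rcases lt_trichotomy (hp.pos 0 p.1) (hp.pos 0 p.2) with hlt | heq | hgt
      · rw [if_pos hlt, if_neg (by omega), if_neg h]
      · exact absurd heq hne
      · rw [if_neg (by omega), if_pos hgt, if_neg h]
  have hsum : ∑ p : Fin 30 × Fin 30, (((if hp.pos 0 p.1 < hp.pos 0 p.2 then 1 else 0)
      + (if hp.pos 0 p.2 < hp.pos 0 p.1 then 1 else 0)) + (if p.1 = p.2 then (1:ℕ) else 0))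
      = 900 := by
    rw [Finset.sum_congr rfl (fun p _ => key p)]
    simp
  rw [Finset.sum_add_distrib, Finset.sum_add_distrib] at hsum
  rw [← Finset.card_filter, ← Finset.card_filter, ← Finset.card_filter] at hsum
  have : hp.PP.card = (univ.filter (fun p : Fin 30 × Fin 30 => hp.pos 0 p.1 < hp.pos 0 p.2)).card := rfl
  omega

end HalfPeriod
namespace HalfPeriod
open Finset

variable (hp : HalfPeriod 30)

/-- number of flips of the ordered pair. -/
def flips (u v : Fin 30) : ℕ := ((range 435).filter (hp.flipP u v)).card

lemma exists_flip {u v : Fin 30} (h0 : hp.pos 0 u < hp.pos 0 v) :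
    ∃ t ∈ range 435, hp.flipP u v t := by
  by_contra hno
  push_neg at hno
  have key : ∀ T, T ≤ 435 → hp.pos T u < hp.pos T v := by
    intro T
    induction T with
    | zero => intro _; exact h0
    | succ n ih =>
      intro hn
      have hlt : n < 435 := by omega
      have h1 := ih (by omega)
      rcases hp.order_step hlt h1 with h2 | h2
      · exact h2
      · exact absurd ⟨h1, by omega⟩ (hno n (mem_range.mpr hlt))
  have hfin := key 435 le_rfl
  have hu := hp.rev' u
  have hv := hp.rev' v
  have h0u := hp.pos_le (by omega : (0:ℕ) ≤ 435) u
  have h0v := hp.pos_le (by omega : (0:ℕ) ≤ 435) v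
  omega

lemma flips_pos {u v : Fin 30} (h0 : hp.pos 0 u < hp.pos 0 v) : 1 ≤ hp.flips u v := by
  obtain ⟨t, ht, hf⟩ := hp.exists_flip h0
  exact Finset.card_pos.mpr ⟨t, mem_filter.mpr ⟨ht, hf⟩⟩

lemma flip_card_le_one (t : ℕ) (ht : t < 435) :
    (hp.PP.filter (fun p => hp.flipP p.1 p.2 t)).card ≤ 1 := by
  apply Finset.card_le_one.mpr
  intro p h1 q h2
  simp only [mem_filter] at h1 h2
  obtain ⟨he1, he2⟩ := hp.flip_unique ht h1.2 h2.2
  exact Prod.ext he1 he2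

lemma flips_exact : (∀ p ∈ hp.PP, hp.flips p.1 p.2 = 1) ∧
    (∀ t, t < 435 → (hp.PP.filter (fun p => hp.flipP p.1 p.2 t)).card = 1) := by
  classical
  have hcomm : ∑ p ∈ hp.PP, hp.flips p.1 p.2
      = ∑ t ∈ range 435, (hp.PP.filter (fun p => hp.flipP p.1 p.2 t)).card := by
    simp only [flips, Finset.card_filter]
    rw [Finset.sum_comm]
  have hub : ∑ t ∈ range 435, (hp.PP.filter (fun p => hp.flipP p.1 p.2 t)).card ≤ 435 := by
    calc ∑ t ∈ range 435, (hp.PP.filter (fun p => hp.flipP p.1 p.2 t)).card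
        ≤ ∑ _t ∈ range 435, 1 :=
          Finset.sum_le_sum (fun t htr => hp.flip_card_le_one t (mem_range.mp htr))
      _ = 435 := by simp
  have hlb : 435 ≤ ∑ p ∈ hp.PP, hp.flips p.1 p.2 := by
    calc (435:ℕ) = ∑ _p ∈ hp.PP, 1 := by rw [Finset.sum_const, hp.card_PP]; simp
      _ ≤ ∑ p ∈ hp.PP, hp.flips p.1 p.2 :=
          Finset.sum_le_sum (fun p hpp => hp.flips_pos (hp.mem_PP.mp hpp))
  have heq : ∑ p ∈ hp.PP, hp.flips p.1 p.2 = 435 := by omega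
  constructor
  · intro p hpp
    by_contra hne
    have h2 : 2 ≤ hp.flips p.1 p.2 := by
      have := hp.flips_pos (hp.mem_PP.mp hpp); omega
    have hlt : ∑ _p ∈ hp.PP, 1 < ∑ p ∈ hp.PP, hp.flips p.1 p.2 :=
      Finset.sum_lt_sum (fun q hq => hp.flips_pos (hp.mem_PP.mp hq)) ⟨p, hpp, by omega⟩
    rw [Finset.sum_const, hp.card_PP, heq] at hlt
    simp at hlt
  · intro t ht
    by_contra hne
    have hz : (hp.PP.filter (fun p => hp.flipP p.1 p.2 t)).card = 0 := by
      have := hp.flip_card_le_one t ht; omega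
    have hlt : ∑ s ∈ range 435, (hp.PP.filter (fun p => hp.flipP p.1 p.2 s)).card
        < ∑ _s ∈ range 435, 1 := by
      apply Finset.sum_lt_sum
      · intro s hs; exact hp.flip_card_le_one s (mem_range.mp hs)
      · exact ⟨t, mem_range.mpr ht, by omega⟩
    rw [← hcomm, heq] at hlt
    simp at hlt

lemma flips_eq_one {u v : Fin 30} (h0 : hp.pos 0 u < hp.pos 0 v) : hp.flips u v = 1 :=
  hp.flips_exact.1 (u, v) (hp.mem_PP.mpr h0)

lemma exists_flip_pair {t : ℕ} (ht : t < 435) :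
    ∃ p ∈ hp.PP, hp.flipP p.1 p.2 t := by
  have h := hp.flips_exact.2 t ht
  obtain ⟨p, hppp⟩ := Finset.card_eq_one.mp h
  have : p ∈ hp.PP.filter (fun p => hp.flipP p.1 p.2 t) := by rw [hppp]; simp
  simp only [mem_filter] at this
  exact ⟨p, this.1, this.2⟩

/-- the (unique) time at which the pair `(u,v)` swaps. -/
noncomputable def st (u v : Fin 30) : ℕ := sInf {t | hp.flipP u v t}

/-- the gate at which the pair `(u,v)` swaps. -/
noncomputable def gam (u v : Fin 30) : ℕ := hp.pos (hp.st u v) u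

lemma st_spec {u v : Fin 30} (h0 : hp.pos 0 u < hp.pos 0 v) :
    hp.st u v < 435 ∧ hp.flipP u v (hp.st u v) := by
  obtain ⟨t0, ht0, hf⟩ := hp.exists_flip h0
  have hmem : hp.flipP u v (hp.st u v) :=
    Nat.sInf_mem (⟨t0, hf⟩ : {t | hp.flipP u v t}.Nonempty)
  have hle : hp.st u v ≤ t0 := Nat.sInf_le hf
  simp only [mem_range] at ht0
  exact ⟨by omega, hmem⟩

lemma flip_eq_st {u v : Fin 30} (h0 : hp.pos 0 u < hp.pos 0 v) {t : ℕ} (ht : t < 435)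
    (hf : hp.flipP u v t) : t = hp.st u v := by
  have h1 := hp.flips_eq_one h0
  unfold flips at h1
  have hmem1 : t ∈ (range 435).filter (hp.flipP u v) :=
    mem_filter.mpr ⟨mem_range.mpr ht, hf⟩
  obtain ⟨hs1, hs2⟩ := hp.st_spec h0
  have hmem2 : hp.st u v ∈ (range 435).filter (hp.flipP u v) :=
    mem_filter.mpr ⟨mem_range.mpr hs1, hs2⟩
  exact Finset.card_le_one.mp (by omega) _ hmem1 _ hmem2

lemma order_before {u v : Fin 30} (h0 : hp.pos 0 u < hp.pos 0 v) {τ : ℕ}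
    (hτ : τ ≤ hp.st u v) : hp.pos τ u < hp.pos τ v := by
  induction τ with
  | zero => exact h0
  | succ n ih =>
    have hst := hp.st_spec h0
    have h1 := ih (by omega)
    have hn : n < 435 := by omega
    rcases hp.order_step hn h1 with h2 | h2
    · exact h2
    · have : n = hp.st u v := hp.flip_eq_st h0 hn ⟨h1, by omega⟩
      omega

lemma order_after {u v : Fin 30} (h0 : hp.pos 0 u < hp.pos 0 v) {τ : ℕ}
    (h1 : hp.st u v < τ) (h2 : τ ≤ 435) : hp.pos τ v < hp.pos τ u := by
  induction τ with
  | zero => omega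
  | succ n ih =>
    have hst := hp.st_spec h0
    have hn : n < 435 := by omega
    by_cases hcase : hp.st u v = n
    · subst hcase
      obtain ⟨e1, e2, e3⟩ := hp.flip_swap hn hst.2
      omega
    · have h3 : hp.pos n v < hp.pos n u := ih (by omega) (by omega)
      rcases hp.order_step hn h3 with h4 | h4
      · exact h4
      · exfalso
        obtain ⟨q, hq, hqf⟩ := hp.exists_flip_pair hn
        obtain ⟨hh1, hh2⟩ := hp.flip_unique hn hqf ⟨h3, by omega⟩
        rw [hp.mem_PP] at hq
        rw [hh1, hh2] at hq
        omega

lemma gam_spec {u v : Fin 30} (h0 : hp.pos 0 u < hp.pos 0 v) :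
    hp.pos (hp.st u v) u = hp.gam u v ∧ hp.pos (hp.st u v) v = hp.gam u v + 1 ∧
      hp.pos (hp.st u v + 1) u = hp.gam u v + 1 ∧ hp.pos (hp.st u v + 1) v = hp.gam u v ∧
      1 ≤ hp.gam u v ∧ hp.gam u v ≤ 29 := by
  obtain ⟨hs1, hs2⟩ := hp.st_spec h0
  obtain ⟨e1, e2, e3⟩ := hp.flip_swap hs1 hs2
  have hb1 := hp.pos_le (show hp.st u v ≤ 435 by omega) u
  have hb2 := hp.pos_le (show hp.st u v ≤ 435 by omega) v
  unfold gam
  omega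

lemma swapsAt_st {u v : Fin 30} (h0 : hp.pos 0 u < hp.pos 0 v) :
    hp.SwapsAt (hp.st u v) u v := by
  obtain ⟨hs1, hs2⟩ := hp.st_spec h0
  obtain ⟨e1, e2, e3⟩ := hp.flip_swap hs1 hs2
  refine ⟨fun hh => ?_, ?_, ?_⟩
  · rw [hh] at e1; omega
  · unfold Moved; omega
  · unfold Moved; omega

lemma gateAt_iff {u v : Fin 30} (h0 : hp.pos 0 u < hp.pos 0 v) (i : ℕ) :
    hp.GateAt (hp.st u v) i ↔ i = hp.gam u v := by
  obtain ⟨hs1, hs2⟩ := hp.st_spec h0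
  obtain ⟨e1, e2, e3⟩ := hp.flip_swap hs1 hs2
  constructor
  · rintro ⟨x, y, g1, g2, g3, g4⟩
    have hx : x = u := hp.up_eq hs1 (by omega) (by omega)
    rw [hx] at g1
    unfold gam
    omega
  · rintro rfl
    obtain ⟨f1, f2, f3, f4, f5, f6⟩ := hp.gam_spec h0
    exact ⟨u, v, f1, f2, f3, f4⟩

lemma count_transfer (Q : ℕ → Prop) [DecidablePred Q] :
    ((range 435).filter Q).card = (hp.PP.filter (fun p => Q (hp.st p.1 p.2))).card := by
  symm
  refine Finset.card_bij (fun p _ => hp.st p.1 p.2) ?_ ?_ ?_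
  · intro p hpq
    simp only [mem_filter] at hpq ⊢
    have h0 := hp.mem_PP.mp hpq.1
    exact ⟨mem_range.mpr (hp.st_spec h0).1, hpq.2⟩
  · intro p hpq q hqq h
    simp only [mem_filter] at hpq hqq
    have h0p := hp.mem_PP.mp hpq.1
    have h0q := hp.mem_PP.mp hqq.1
    have hfp := (hp.st_spec h0p).2
    have hfq := (hp.st_spec h0q).2
    have h' : hp.st p.1 p.2 = hp.st q.1 q.2 := h
    rw [h'] at hfp
    obtain ⟨a1, a2⟩ := hp.flip_unique (hp.st_spec h0q).1 hfp hfq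
    exact Prod.ext a1 a2
  · intro t htq
    simp only [mem_filter, mem_range] at htq
    obtain ⟨p, hpp, hpf⟩ := hp.exists_flip_pair htq.1
    have hst : hp.st p.1 p.2 = t := (hp.flip_eq_st (hp.mem_PP.mp hpp) htq.1 hpf).symm
    refine ⟨p, ?_, hst⟩
    simp only [mem_filter]
    exact ⟨hpp, by rw [hst]; exact htq.2⟩

end HalfPeriod
namespace HalfPeriod
open Finset

variable (hp : HalfPeriod 30)

/-- number of upward crossings of the boundary between positions `g` and `g+1`
by element `e` during the time interval `[T1, T2)`. -/
def upcI (g : ℕ) (e : Fin 30) (T1 T2 : ℕ) : ℕ :=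
  ((Ico T1 T2).filter (fun t => hp.pos t e = g ∧ hp.pos (t+1) e = g + 1)).card

/-- number of downward crossings. -/
def dncI (g : ℕ) (e : Fin 30) (T1 T2 : ℕ) : ℕ :=
  ((Ico T1 T2).filter (fun t => hp.pos t e = g + 1 ∧ hp.pos (t+1) e = g)).card

lemma net (g : ℕ) (e : Fin 30) (T1 : ℕ) : ∀ T2, T1 ≤ T2 → T2 ≤ 435 →
    hp.upcI g e T1 T2 + (if g < hp.pos T1 e then 1 else 0)
      = hp.dncI g e T1 T2 + (if g < hp.pos T2 e then 1 else 0) := by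
  intro T2
  induction T2 with
  | zero =>
    intro h1 _
    have : T1 = 0 := by omega
    subst this
    simp [upcI, dncI]
  | succ n ih =>
    intro h1 h2
    by_cases hT : T1 = n + 1
    · subst hT; simp [upcI, dncI]
    · have h1n : T1 ≤ n := by omega
      have ihh := ih h1n (by omega)
      have hu : hp.upcI g e T1 (n+1) = hp.upcI g e T1 n
          + (if (hp.pos n e = g ∧ hp.pos (n+1) e = g+1) then 1 else 0) := by
        simp only [upcI, Finset.card_filter]
        rw [Finset.sum_Ico_succ_top h1n]
      have hd : hp.dncI g e T1 (n+1) = hp.dncI g e T1 n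
          + (if (hp.pos n e = g + 1 ∧ hp.pos (n+1) e = g) then 1 else 0) := by
        simp only [dncI, Finset.card_filter]
        rw [Finset.sum_Ico_succ_top h1n]
      have hc := hp.step_cases (show n < 435 by omega) e
      rw [hu, hd]
      rcases hc with h | h | h <;> (split_ifs at ihh ⊢ <;> omega)

lemma cnt_split (g : ℕ) (e : Fin 30) {T : ℕ} (hT : T ≤ 435) :
    hp.upcI g e 0 435 = hp.upcI g e 0 T + hp.upcI g e T 435 ∧
    hp.dncI g e 0 435 = hp.dncI g e 0 T + hp.dncI g e T 435 := by
  constructor <;>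
  · simp only [upcI, dncI, Finset.card_filter]
    rw [← Finset.sum_Ico_consecutive _ (Nat.zero_le T) hT]

/-- every upward crossing of `e` during `[0,T)` is the swap time of a pair `(e, w)`. -/
lemma upc_pairs (g : ℕ) (e : Fin 30) {T : ℕ} (hT : T ≤ 435) :
    hp.upcI g e 0 T = (hp.PP.filter (fun p =>
      p.1 = e ∧ hp.gam p.1 p.2 = g ∧ hp.st p.1 p.2 < T)).card := by
  symm
  refine Finset.card_bij (fun p _ => hp.st p.1 p.2) ?_ ?_ ?_
  · intro p hpq
    simp only [mem_filter] at hpq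
    obtain ⟨hpp, hpe, hpg, hpt⟩ := hpq
    have h0 := hp.mem_PP.mp hpp
    obtain ⟨f1, f2, f3, f4, f5, f6⟩ := hp.gam_spec h0
    subst hpe
    simp only [upcI, mem_filter, mem_Ico]
    refine ⟨⟨by omega, hpt⟩, by omega, by omega⟩
  · intro p hpq q hqq h
    simp only [mem_filter] at hpq hqq
    have h0p := hp.mem_PP.mp hpq.1
    have h0q := hp.mem_PP.mp hqq.1
    have hfp := (hp.st_spec h0p).2
    have hfq := (hp.st_spec h0q).2
    have h' : hp.st p.1 p.2 = hp.st q.1 q.2 := h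
    rw [h'] at hfp
    obtain ⟨a1, a2⟩ := hp.flip_unique (hp.st_spec h0q).1 hfp hfq
    exact Prod.ext a1 a2
  · intro t htq
    simp only [upcI, mem_filter, mem_Ico] at htq
    obtain ⟨⟨_, ht2⟩, he1, he2⟩ := htq
    have ht435 : t < 435 := by omega
    obtain ⟨p, hpp, hpf⟩ := hp.exists_flip_pair ht435
    have h0 := hp.mem_PP.mp hpp
    obtain ⟨e1, e2, e3⟩ := hp.flip_swap ht435 hpf
    have hx : p.1 = e := hp.up_eq ht435 e2 (by omega)
    have hst : hp.st p.1 p.2 = t := (hp.flip_eq_st h0 ht435 hpf).symm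
    refine ⟨p, ?_, hst⟩
    simp only [mem_filter]
    refine ⟨hpp, hx, ?_, by omega⟩
    unfold gam
    rw [hst, hx]
    exact he1

/-- every downward crossing of `e` during `[0,T)` is the swap time of a pair `(w, e)`. -/
lemma dnc_pairs (g : ℕ) (e : Fin 30) {T : ℕ} (hT : T ≤ 435) :
    hp.dncI g e 0 T = (hp.PP.filter (fun p =>
      p.2 = e ∧ hp.gam p.1 p.2 = g ∧ hp.st p.1 p.2 < T)).card := by
  symm
  refine Finset.card_bij (fun p _ => hp.st p.1 p.2) ?_ ?_ ?_
  · intro p hpq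
    simp only [mem_filter] at hpq
    obtain ⟨hpp, hpe, hpg, hpt⟩ := hpq
    have h0 := hp.mem_PP.mp hpp
    obtain ⟨f1, f2, f3, f4, f5, f6⟩ := hp.gam_spec h0
    subst hpe
    simp only [dncI, mem_filter, mem_Ico]
    refine ⟨⟨by omega, hpt⟩, by omega, by omega⟩
  · intro p hpq q hqq h
    simp only [mem_filter] at hpq hqq
    have h0p := hp.mem_PP.mp hpq.1
    have h0q := hp.mem_PP.mp hqq.1
    have hfp := (hp.st_spec h0p).2
    have hfq := (hp.st_spec h0q).2
    have h' : hp.st p.1 p.2 = hp.st q.1 q.2 := h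
    rw [h'] at hfp
    obtain ⟨a1, a2⟩ := hp.flip_unique (hp.st_spec h0q).1 hfp hfq
    exact Prod.ext a1 a2
  · intro t htq
    simp only [dncI, mem_filter, mem_Ico] at htq
    obtain ⟨⟨_, ht2⟩, he1, he2⟩ := htq
    have ht435 : t < 435 := by omega
    obtain ⟨p, hpp, hpf⟩ := hp.exists_flip_pair ht435
    have h0 := hp.mem_PP.mp hpp
    obtain ⟨e1, e2, e3⟩ := hp.flip_swap ht435 hpf
    have hy : p.2 = e := hp.down_eq ht435 (by omega) (by omega)
    have hst : hp.st p.1 p.2 = t := (hp.flip_eq_st h0 ht435 hpf).symm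
    refine ⟨p, ?_, hst⟩
    simp only [mem_filter]
    refine ⟨hpp, hy, ?_, by omega⟩
    unfold gam
    rw [hst]
    rw [hy] at e1
    omega

/-- summing upward crossings at gate `g` over all elements counts the pairs swapping at `g`. -/
lemma sum_upc (g : ℕ) :
    ∑ e : Fin 30, hp.upcI g e 0 435
      = (hp.PP.filter (fun p => hp.gam p.1 p.2 = g)).card := by
  have h1 : ∀ e : Fin 30, hp.upcI g e 0 435 = (hp.PP.filter (fun p =>
      p.1 = e ∧ hp.gam p.1 p.2 = g ∧ hp.st p.1 p.2 < 435)).card :=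
    fun e => hp.upc_pairs g e le_rfl
  rw [Finset.sum_congr rfl (fun e _ => h1 e)]
  rw [Finset.card_eq_sum_card_fiberwise
    (f := fun p : Fin 30 × Fin 30 => p.1) (t := univ) (fun p _ => mem_univ _)]
  apply Finset.sum_congr rfl
  intro e _
  congr 1
  rw [Finset.filter_filter]
  apply Finset.filter_congr
  intro p hpp
  have h0 := hp.mem_PP.mp hpp
  have hst := (hp.st_spec h0).1
  tauto

lemma sum_dnc (g : ℕ) :
    ∑ e : Fin 30, hp.dncI g e 0 435
      = (hp.PP.filter (fun p => hp.gam p.1 p.2 = g)).card := by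
  have h1 : ∀ e : Fin 30, hp.dncI g e 0 435 = (hp.PP.filter (fun p =>
      p.2 = e ∧ hp.gam p.1 p.2 = g ∧ hp.st p.1 p.2 < 435)).card :=
    fun e => hp.dnc_pairs g e le_rfl
  rw [Finset.sum_congr rfl (fun e _ => h1 e)]
  rw [Finset.card_eq_sum_card_fiberwise
    (f := fun p : Fin 30 × Fin 30 => p.2) (t := univ) (fun p _ => mem_univ _)]
  apply Finset.sum_congr rfl
  intro e _
  congr 1
  rw [Finset.filter_filter]
  apply Finset.filter_congr
  intro p hpp
  have h0 := hp.mem_PP.mp hpp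
  have hst := (hp.st_spec h0).1
  tauto

end HalfPeriod
namespace HalfPeriod
open Finset

variable (hp : HalfPeriod 30) (a b c : Fin 10 → Fin 30)

lemma steps_eq : steps 30 = 435 := by norm_num [steps]

lemma label_cover (h3 : IsThreeDecompLabeling30 hp a b c) (e : Fin 30) :
    (∃ i, e = a i) ∨ (∃ i, e = b i) ∨ (∃ i, e = c i) := by
  have hbij : Function.Bijective (Sum.elim a (Sum.elim b c)) := by
    rw [Fintype.bijective_iff_injective_and_card]
    exact ⟨h3.1, by simp⟩
  obtain ⟨s, hs⟩ := hbij.2 e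
  rcases s with i | i | i
  · exact Or.inl ⟨i, by simpa using hs.symm⟩
  · exact Or.inr (Or.inl ⟨i, by simpa using hs.symm⟩)
  · exact Or.inr (Or.inr ⟨i, by simpa using hs.symm⟩)

lemma below_a_char (h3 : IsThreeDecompLabeling30 hp a b c) {e : Fin 30} {i : Fin 10}
    (h : hp.pos 0 e < hp.pos 0 (a i)) : ∃ m : Fin 10, (i:ℕ) < (m:ℕ) ∧ e = a m := by
  have hvi := i.isLt
  rw [h3.2.1 i] at h
  rcases hp.label_cover a b c h3 e with ⟨m, rfl⟩ | ⟨m, rfl⟩ | ⟨m, rfl⟩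
  · have hvm := m.isLt
    rw [h3.2.1 m] at h
    exact ⟨m, by omega, rfl⟩
  · rw [h3.2.2.1 m] at h; omega
  · rw [h3.2.2.2.1 m] at h; omega

lemma above_c_char (h3 : IsThreeDecompLabeling30 hp a b c) {e : Fin 30} {i : Fin 10}
    (h : hp.pos 0 (c i) < hp.pos 0 e) : ∃ m : Fin 10, (i:ℕ) < (m:ℕ) ∧ e = c m := by
  have hvi := i.isLt
  rw [h3.2.2.2.1 i] at h
  rcases hp.label_cover a b c h3 e with ⟨m, rfl⟩ | ⟨m, rfl⟩ | ⟨m, rfl⟩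
  · have hvm := m.isLt
    rw [h3.2.1 m] at h; omega
  · rw [h3.2.2.1 m] at h; omega
  · have hvm := m.isLt
    rw [h3.2.2.2.1 m] at h
    exact ⟨m, by omega, rfl⟩

lemma above_b_char (h3 : IsThreeDecompLabeling30 hp a b c) {e : Fin 30} {j : Fin 10}
    (h : hp.pos 0 (b j) < hp.pos 0 e) :
    (∃ m : Fin 10, (j:ℕ) < (m:ℕ) ∧ e = b m) ∨ (∃ m : Fin 10, e = c m) := by
  have hvj := j.isLt
  rw [h3.2.2.1 j] at h
  rcases hp.label_cover a b c h3 e with ⟨m, rfl⟩ | ⟨m, rfl⟩ | ⟨m, rfl⟩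
  · have hvm := m.isLt
    rw [h3.2.1 m] at h; omega
  · rw [h3.2.2.1 m] at h
    exact Or.inl ⟨m, by omega, rfl⟩
  · exact Or.inr ⟨m, rfl⟩

lemma below_b_char (h3 : IsThreeDecompLabeling30 hp a b c) {e : Fin 30} {j : Fin 10}
    (h : hp.pos 0 e < hp.pos 0 (b j)) :
    (∃ m : Fin 10, e = a m) ∨ (∃ m : Fin 10, (m:ℕ) < (j:ℕ) ∧ e = b m) := by
  have hvj := j.isLt
  rw [h3.2.2.1 j] at h
  rcases hp.label_cover a b c h3 e with ⟨m, rfl⟩ | ⟨m, rfl⟩ | ⟨m, rfl⟩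
  · exact Or.inl ⟨m, rfl⟩
  · rw [h3.2.2.1 m] at h
    exact Or.inr ⟨m, by omega, rfl⟩
  · have hvm := m.isLt
    rw [h3.2.2.2.1 m] at h; omega

lemma h0ab (h3 : IsThreeDecompLabeling30 hp a b c) (m j : Fin 10) :
    hp.pos 0 (a m) < hp.pos 0 (b j) := by
  have := m.isLt
  rw [h3.2.1 m, h3.2.2.1 j]; omega

lemma h0bc (h3 : IsThreeDecompLabeling30 hp a b c) (j i : Fin 10) :
    hp.pos 0 (b j) < hp.pos 0 (c i) := by
  have := j.isLt
  rw [h3.2.2.1 j, h3.2.2.2.1 i]; omega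

lemma h0ac (h3 : IsThreeDecompLabeling30 hp a b c) (m i : Fin 10) :
    hp.pos 0 (a m) < hp.pos 0 (c i) := by
  have := m.isLt
  rw [h3.2.1 m, h3.2.2.2.1 i]; omega

/-- the time of the first swap between `B` and `C`. -/
noncomputable def tstar : ℕ := sInf {t | ∃ i j : Fin 10, hp.st (b j) (c i) = t}

lemma tstar_mem : ∃ i j : Fin 10, hp.st (b j) (c i) = hp.tstar b c :=
  Nat.sInf_mem (⟨hp.st (b 0) (c 0), 0, 0, rfl⟩ :
    {t | ∃ i j : Fin 10, hp.st (b j) (c i) = t}.Nonempty)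

lemma tstar_le (i j : Fin 10) : hp.tstar b c ≤ hp.st (b j) (c i) :=
  Nat.sInf_le ⟨i, j, rfl⟩

lemma tstar_lt (h3 : IsThreeDecompLabeling30 hp a b c) : hp.tstar b c < 435 := by
  obtain ⟨i, j, hij⟩ := hp.tstar_mem b c
  have := (hp.st_spec (hp.h0bc a b c h3 j i)).1
  omega

lemma ab_lt_tstar (h3 : IsThreeDecompLabeling30 hp a b c) (m j : Fin 10) :
    hp.st (a m) (b j) < hp.tstar b c := by
  obtain ⟨i0, j0, ht0⟩ := hp.tstar_mem b c
  have hs1 := (hp.st_spec (hp.h0ab a b c h3 m j)).1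
  have hs2 := (hp.st_spec (hp.h0bc a b c h3 j0 i0)).1
  have hsw1 := hp.swapsAt_st (hp.h0ab a b c h3 m j)
  have hsw2 := hp.swapsAt_st (hp.h0bc a b c h3 j0 i0)
  have hord := h3.2.2.2.2.1 (hp.st (a m) (b j)) (hp.tstar b c)
    (by rw [steps_eq]; omega) (by rw [steps_eq]; omega)
    ⟨m, j, hsw1⟩
    ⟨i0, b j0, Or.inr ⟨j0, rfl⟩, by rw [← ht0]; exact ⟨hsw2.1.symm, hsw2.2.2, hsw2.2.1⟩⟩
  exact hord

lemma b_below_at_tstar (h3 : IsThreeDecompLabeling30 hp a b c) (j : Fin 10) {e : Fin 30}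
    (he : (∃ m, e = a m) ∨ (∃ m, e = c m)) :
    hp.pos (hp.tstar b c) (b j) < hp.pos (hp.tstar b c) e := by
  rcases he with ⟨m, rfl⟩ | ⟨m, rfl⟩
  · exact hp.order_after (hp.h0ab a b c h3 m j) (hp.ab_lt_tstar a b c h3 m j)
      (le_of_lt (hp.tstar_lt a b c h3))
  · exact hp.order_before (hp.h0bc a b c h3 j m) (hp.tstar_le b c m j)

lemma b_tstar_le10 (h3 : IsThreeDecompLabeling30 hp a b c) (j : Fin 10) :
    hp.pos (hp.tstar b c) (b j) ≤ 10 := by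
  classical
  set T := hp.tstar b c with hT
  have hT435 : T ≤ 435 := le_of_lt (hp.tstar_lt a b c h3)
  by_contra hgt
  push_neg at hgt
  set S : Finset (Fin 30) := (univ.image a) ∪ (univ.image c) with hS
  have hainj : Function.Injective a := by
    intro x y hxy
    have h1 : hp.pos 0 (a x) = hp.pos 0 (a y) := by rw [hxy]
    rw [h3.2.1 x, h3.2.1 y] at h1
    have := x.isLt; have := y.isLt
    exact Fin.ext (by omega)
  have hcinj : Function.Injective c := by
    intro x y hxy
    have h1 : hp.pos 0 (c x) = hp.pos 0 (c y) := by rw [hxy]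
    rw [h3.2.2.2.1 x, h3.2.2.2.1 y] at h1
    exact Fin.ext (by omega)
  have hdisj : Disjoint (univ.image a) (univ.image c) := by
    rw [Finset.disjoint_left]
    rintro x hx hy
    simp only [mem_image, mem_univ, true_and] at hx hy
    obtain ⟨i1, rfl⟩ := hx
    obtain ⟨i2, hi2⟩ := hy
    have := hp.h0ac a b c h3 i1 i2
    rw [hi2] at this
    omega
  have hcardS : S.card = 20 := by
    rw [hS, Finset.card_union_of_disjoint hdisj,
      Finset.card_image_of_injective _ hainj, Finset.card_image_of_injective _ hcinj]
    simp
  have hmap : S.image (hp.pos T) ⊆ Icc (hp.pos T (b j) + 1) 30 := by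
    intro v hv
    simp only [mem_image] at hv
    obtain ⟨e, he, rfl⟩ := hv
    have hbound := hp.pos_le hT435 e
    have hbelow : hp.pos T (b j) < hp.pos T e := by
      apply hp.b_below_at_tstar a b c h3 j
      rw [hS] at he
      simp only [mem_union, mem_image, mem_univ, true_and] at he
      rcases he with ⟨m, hm⟩ | ⟨m, hm⟩
      · exact Or.inl ⟨m, hm.symm⟩
      · exact Or.inr ⟨m, hm.symm⟩
    rw [mem_Icc]
    omega
  have hinjim : (S.image (hp.pos T)).card = 20 := by
    rw [Finset.card_image_of_injOn (fun x _ y _ hxy => hp.inj' hT435 hxy), hcardS]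
  have hle := Finset.card_le_card hmap
  rw [hinjim, Nat.card_Icc] at hle
  omega

lemma b_floor (h3 : IsThreeDecompLabeling30 hp a b c) (hb : BLabelSpec hp b)
    (j : Fin 10) {t : ℕ} (ht : t ≤ 435) : 10 - (j:ℕ) ≤ hp.pos t (b j) := by
  have hvj := j.isLt
  by_cases hj : (j:ℕ) + 1 ≤ 9
  · have havoid := (hb j).2 hj
    suffices key : ∀ T, T ≤ 435 → 10 - (j:ℕ) ≤ hp.pos T (b j) from key t ht
    intro T
    induction T with
    | zero => intro _; rw [h3.2.2.1 j]; omega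
    | succ n ihh =>
      intro hn
      have h1 := ihh (by omega)
      have h2 := hp.step_cases (show n < 435 by omega) (b j)
      have h3' := (havoid (n+1) (by rw [steps_eq]; omega)).1
      omega
  · have h1 := (hp.pos_le ht (b j)).1
    omega

lemma pos_tstar_b (h3 : IsThreeDecompLabeling30 hp a b c) (hb : BLabelSpec hp b) :
    ∀ n : ℕ, n ≤ 9 → ∀ j : Fin 10, (j:ℕ) = n →
    hp.pos (hp.tstar b c) (b j) = 10 - n := by
  intro n
  induction n using Nat.strong_induction_on with
  | _ n ih =>
    intro hn j hj
    set T := hp.tstar b c with hTdef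
    have hT435 : T ≤ 435 := le_of_lt (hp.tstar_lt a b c h3)
    have h1 : 10 - (j:ℕ) ≤ hp.pos T (b j) := hp.b_floor a b c h3 hb j hT435
    have h2 : hp.pos T (b j) ≤ 10 := hp.b_tstar_le10 a b c h3 j
    rcases Nat.lt_or_ge (10 - n) (hp.pos T (b j)) with hlt | hge
    · exfalso
      have hv1 : 1 ≤ hp.pos T (b j) := (hp.pos_le hT435 (b j)).1
      obtain ⟨j', hj'⟩ : ∃ j' : Fin 10, (j':ℕ) = 10 - hp.pos T (b j) :=
        ⟨⟨10 - hp.pos T (b j), by omega⟩, rfl⟩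
      have hres := ih (10 - hp.pos T (b j)) (by omega) (by omega) j' hj'
      have heqp : hp.pos T (b j') = hp.pos T (b j) := by rw [hres]; omega
      have heb : b j' = b j := hp.inj' hT435 heqp
      have h0eq : hp.pos 0 (b j') = hp.pos 0 (b j) := by rw [heb]
      rw [h3.2.2.1, h3.2.2.1, hj'] at h0eq
      omega
    · omega

lemma bb_lt_tstar (h3 : IsThreeDecompLabeling30 hp a b c) (hb : BLabelSpec hp b)
    {i j : Fin 10} (hij : (i:ℕ) < (j:ℕ)) :
    hp.st (b i) (b j) < hp.tstar b c := by
  have hvj := j.isLt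
  have h0 : hp.pos 0 (b i) < hp.pos 0 (b j) := by
    rw [h3.2.2.1, h3.2.2.1]; omega
  by_contra hge
  push_neg at hge
  have horder := hp.order_before h0 hge
  rw [hp.pos_tstar_b a b c h3 hb (i:ℕ) (by omega) i rfl,
    hp.pos_tstar_b a b c h3 hb (j:ℕ) (by omega) j rfl] at horder
  omega

lemma b_no_down_post (h3 : IsThreeDecompLabeling30 hp a b c) (hb : BLabelSpec hp b)
    (j : Fin 10) (g : ℕ) : hp.dncI g (b j) (hp.tstar b c) 435 = 0 := by
  unfold dncI
  rw [Finset.card_eq_zero, Finset.filter_eq_empty_iff]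
  intro t htm
  simp only [mem_Ico] at htm
  rintro ⟨hd1, hd2⟩
  have ht435 : t < 435 := htm.2
  obtain ⟨p, hpp, hpf⟩ := hp.exists_flip_pair ht435
  obtain ⟨e1, e2, e3⟩ := hp.flip_swap ht435 hpf
  have hy : p.2 = b j := hp.down_eq ht435 (by omega) (by omega)
  have h0 := hp.mem_PP.mp hpp
  have hst : t = hp.st p.1 p.2 := hp.flip_eq_st h0 ht435 hpf
  have h0' : hp.pos 0 p.1 < hp.pos 0 (b j) := by rw [← hy]; exact h0
  rcases hp.below_b_char a b c h3 h0' with ⟨m, hm⟩ | ⟨m, hmlt, hm⟩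
  · have := hp.ab_lt_tstar a b c h3 m j
    rw [← hm, ← hy] at this
    omega
  · have := hp.bb_lt_tstar a b c h3 hb hmlt
    rw [← hm, ← hy] at this
    omega

end HalfPeriod
namespace HalfPeriod
open Finset

variable (hp : HalfPeriod 30) (a b c : Fin 10 → Fin 30)

/-- number of transpositions at gate `g`. -/
noncomputable def Gcnt (g : ℕ) : ℕ := (hp.PP.filter (fun p => hp.gam p.1 p.2 = g)).card

def e0 (g : ℕ) : ℕ := ((univ : Finset (Fin 10)).filter (fun i : Fin 10 => g < 10 - (i:ℕ))).card
def e1 (g : ℕ) : ℕ := ((univ : Finset (Fin 10)).filter (fun i : Fin 10 => g < 21 + (i:ℕ))).card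
def e2 (g : ℕ) : ℕ := ((univ : Finset (Fin 10)).filter (fun i : Fin 10 => g < 11 + (i:ℕ))).card
def e3 (g : ℕ) : ℕ := ((univ : Finset (Fin 10)).filter (fun i : Fin 10 => g < 20 - (i:ℕ))).card

lemma pos435_a (h3 : IsThreeDecompLabeling30 hp a b c) (i : Fin 10) :
    hp.pos 435 (a i) = 21 + (i:ℕ) := by
  have := i.isLt
  rw [hp.rev' (a i), h3.2.1 i]
  omega

lemma pos435_b (h3 : IsThreeDecompLabeling30 hp a b c) (i : Fin 10) :
    hp.pos 435 (b i) = 20 - (i:ℕ) := by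
  have := i.isLt
  rw [hp.rev' (b i), h3.2.2.1 i]
  omega

lemma pos435_c (h3 : IsThreeDecompLabeling30 hp a b c) (i : Fin 10) :
    hp.pos 435 (c i) = 10 - (i:ℕ) := by
  have := i.isLt
  rw [hp.rev' (c i), h3.2.2.2.1 i]
  omega

lemma sum_ite_card (P : Fin 10 → Prop) [DecidablePred P] :
    ∑ i : Fin 10, (if P i then 1 else 0) = ((univ : Finset (Fin 10)).filter P).card := by
  rw [Finset.card_filter]

lemma sum_split (h3 : IsThreeDecompLabeling30 hp a b c) (f : Fin 30 → ℕ) :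
    ∑ e : Fin 30, f e
      = ∑ i : Fin 10, f (a i) + ∑ i : Fin 10, f (b i) + ∑ i : Fin 10, f (c i) := by
  classical
  have hainj : Function.Injective a := by
    intro x y hxy
    have h1 : hp.pos 0 (a x) = hp.pos 0 (a y) := by rw [hxy]
    rw [h3.2.1 x, h3.2.1 y] at h1
    have := x.isLt; have := y.isLt
    exact Fin.ext (by omega)
  have hbinj : Function.Injective b := by
    intro x y hxy
    have h1 : hp.pos 0 (b x) = hp.pos 0 (b y) := by rw [hxy]
    rw [h3.2.2.1 x, h3.2.2.1 y] at h1
    exact Fin.ext (by omega)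
  have hcinj : Function.Injective c := by
    intro x y hxy
    have h1 : hp.pos 0 (c x) = hp.pos 0 (c y) := by rw [hxy]
    rw [h3.2.2.2.1 x, h3.2.2.2.1 y] at h1
    exact Fin.ext (by omega)
  have hd1 : Disjoint (univ.image a) (univ.image b) := by
    rw [Finset.disjoint_left]
    rintro x hx hy
    simp only [mem_image, mem_univ, true_and] at hx hy
    obtain ⟨i1, rfl⟩ := hx
    obtain ⟨i2, hi2⟩ := hy
    have := hp.h0ab a b c h3 i1 i2
    rw [hi2] at this; omega
  have hd2 : Disjoint (univ.image a ∪ univ.image b) (univ.image c) := by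
    rw [Finset.disjoint_left]
    rintro x hx hy
    simp only [mem_union, mem_image, mem_univ, true_and] at hx hy
    obtain ⟨i2, hi2⟩ := hy
    rcases hx with ⟨i1, rfl⟩ | ⟨i1, rfl⟩
    · have := hp.h0ac a b c h3 i1 i2
      rw [hi2] at this; omega
    · have := hp.h0bc a b c h3 i1 i2
      rw [hi2] at this; omega
  have huniv : (univ : Finset (Fin 30)) = (univ.image a ∪ univ.image b) ∪ univ.image c := by
    apply Finset.eq_of_subset_of_card_le
    · intro e _
      simp only [mem_union, mem_image, mem_univ, true_and]
      rcases hp.label_cover a b c h3 e with ⟨m, rfl⟩ | ⟨m, rfl⟩ | ⟨m, rfl⟩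
      · exact Or.inl (Or.inl ⟨m, rfl⟩)
      · exact Or.inl (Or.inr ⟨m, rfl⟩)
      · exact Or.inr ⟨m, rfl⟩
    · rw [Finset.card_union_of_disjoint hd2, Finset.card_union_of_disjoint hd1,
        Finset.card_image_of_injective _ hainj, Finset.card_image_of_injective _ hbinj,
        Finset.card_image_of_injective _ hcinj]
      simp
  rw [huniv, Finset.sum_union hd2, Finset.sum_union hd1,
    Finset.sum_image (fun x _ y _ h => hainj h), Finset.sum_image (fun x _ y _ h => hbinj h),
    Finset.sum_image (fun x _ y _ h => hcinj h)]

/-- the master census identity at an arbitrary gate `g`. -/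
lemma census (h3 : IsThreeDecompLabeling30 hp a b c) (hb : BLabelSpec hp b) (g : ℕ) :
    2 * hp.Gcnt g + 4 * e0 g
      = 2 * ((∑ i : Fin 10, hp.dncI g (a i) 0 435) + (∑ i : Fin 10, hp.upcI g (c i) 0 435)
          + (∑ j : Fin 10, hp.upcI g (b j) 0 (hp.tstar b c)))
        + 2 * e1 g + e2 g + e3 g := by
  classical
  set T := hp.tstar b c with hTdef
  have hT435 : T ≤ 435 := le_of_lt (hp.tstar_lt a b c h3)
  -- class A
  have hA : ∀ i : Fin 10, hp.upcI g (a i) 0 435 + (if g < 10 - (i:ℕ) then 1 else 0)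
      = hp.dncI g (a i) 0 435 + (if g < 21 + (i:ℕ) then 1 else 0) := by
    intro i
    have h := hp.net g (a i) 0 435 (by omega) le_rfl
    rw [h3.2.1 i, hp.pos435_a a b c h3 i] at h
    exact h
  have hAs : (∑ i : Fin 10, hp.upcI g (a i) 0 435) + e0 g
      = (∑ i : Fin 10, hp.dncI g (a i) 0 435) + e1 g := by
    have := Finset.sum_congr rfl (fun i (_ : i ∈ univ) => hA i)
    rw [Finset.sum_add_distrib, Finset.sum_add_distrib] at this
    rw [sum_ite_card, sum_ite_card] at this
    simpa only [e0, e1, e2, e3] using this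
  -- class C
  have hC : ∀ i : Fin 10, hp.upcI g (c i) 0 435 + (if g < 21 + (i:ℕ) then 1 else 0)
      = hp.dncI g (c i) 0 435 + (if g < 10 - (i:ℕ) then 1 else 0) := by
    intro i
    have h := hp.net g (c i) 0 435 (by omega) le_rfl
    rw [h3.2.2.2.1 i, hp.pos435_c a b c h3 i] at h
    exact h
  have hCs : (∑ i : Fin 10, hp.upcI g (c i) 0 435) + e1 g
      = (∑ i : Fin 10, hp.dncI g (c i) 0 435) + e0 g := by
    have := Finset.sum_congr rfl (fun i (_ : i ∈ univ) => hC i)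
    rw [Finset.sum_add_distrib, Finset.sum_add_distrib] at this
    rw [sum_ite_card, sum_ite_card] at this
    simpa only [e0, e1, e2, e3] using this
  -- class B, before tstar
  have hBpre : ∀ j : Fin 10, hp.upcI g (b j) 0 T + (if g < 11 + (j:ℕ) then 1 else 0)
      = hp.dncI g (b j) 0 T + (if g < 10 - (j:ℕ) then 1 else 0) := by
    intro j
    have h := hp.net g (b j) 0 T (by omega) hT435
    rw [h3.2.2.1 j, hp.pos_tstar_b a b c h3 hb (j:ℕ) (by have := j.isLt; omega) j rfl] at h
    exact h
  have hBpres : (∑ j : Fin 10, hp.upcI g (b j) 0 T) + e2 g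
      = (∑ j : Fin 10, hp.dncI g (b j) 0 T) + e0 g := by
    have := Finset.sum_congr rfl (fun j (_ : j ∈ univ) => hBpre j)
    rw [Finset.sum_add_distrib, Finset.sum_add_distrib] at this
    rw [sum_ite_card, sum_ite_card] at this
    simpa only [e0, e1, e2, e3] using this
  -- class B, after tstar
  have hBpost : ∀ j : Fin 10, hp.upcI g (b j) T 435 + (if g < 10 - (j:ℕ) then 1 else 0)
      = (if g < 20 - (j:ℕ) then 1 else 0) := by
    intro j
    have h := hp.net g (b j) T 435 hT435 le_rfl
    rw [hp.pos_tstar_b a b c h3 hb (j:ℕ) (by have := j.isLt; omega) j rfl,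
      hp.pos435_b a b c h3 j, hp.b_no_down_post a b c h3 hb j g] at h
    omega
  have hBposts : (∑ j : Fin 10, hp.upcI g (b j) T 435) + e0 g = e3 g := by
    have := Finset.sum_congr rfl (fun j (_ : j ∈ univ) => hBpost j)
    rw [Finset.sum_add_distrib] at this
    rw [sum_ite_card, sum_ite_card] at this
    simpa only [e0, e1, e2, e3] using this
  -- splits
  have hBsplitU : ∀ j : Fin 10, hp.upcI g (b j) 0 435
      = hp.upcI g (b j) 0 T + hp.upcI g (b j) T 435 :=
    fun j => (hp.cnt_split g (b j) hT435).1
  have hBsplitD : ∀ j : Fin 10, hp.dncI g (b j) 0 435 = hp.dncI g (b j) 0 T :=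
    fun j => by
      have h := (hp.cnt_split g (b j) hT435).2
      rw [hp.b_no_down_post a b c h3 hb j g] at h
      omega
  have hBU : (∑ j : Fin 10, hp.upcI g (b j) 0 435)
      = (∑ j : Fin 10, hp.upcI g (b j) 0 T) + (∑ j : Fin 10, hp.upcI g (b j) T 435) := by
    rw [← Finset.sum_add_distrib]
    exact Finset.sum_congr rfl (fun j _ => hBsplitU j)
  have hBD : (∑ j : Fin 10, hp.dncI g (b j) 0 435) = (∑ j : Fin 10, hp.dncI g (b j) 0 T) :=
    Finset.sum_congr rfl (fun j _ => hBsplitD j)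
  -- totals
  have hsumU : ∑ e : Fin 30, hp.upcI g e 0 435 = hp.Gcnt g := hp.sum_upc g
  have hsumD : ∑ e : Fin 30, hp.dncI g e 0 435 = hp.Gcnt g := hp.sum_dnc g
  rw [hp.sum_split a b c h3 (fun e => hp.upcI g e 0 435)] at hsumU
  rw [hp.sum_split a b c h3 (fun e => hp.dncI g e 0 435)] at hsumD
  omega

end HalfPeriod
namespace HalfPeriod
open Finset

def SixSet : Finset ℕ := {11, 12, 13, 17, 18, 19}
def LowSet : Finset ℕ := (Icc 1 10) ∪ (Icc 20 29)
def MidSet : Finset ℕ := {14, 15, 16}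

variable (hp : HalfPeriod 30) (a b c : Fin 10 → Fin 30)

attribute [local instance] Classical.propDecidable

lemma NLe_finset (k : ℕ) : hp.NLe k
    = ((range 435).filter (fun t => hp.LeCritical t k)).card := by
  classical
  rw [NLe]
  have hset : {t : ℕ | t < steps 30 ∧ hp.LeCritical t k}
      = ↑((range 435).filter (fun t => hp.LeCritical t k)) := by
    ext t
    simp only [Set.mem_setOf_eq, Finset.coe_filter, Finset.mem_range, steps_eq]
  rw [hset, Set.ncard_coe_finset]

lemma leCrit_iff {p : Fin 30 × Fin 30} (hpp : p ∈ hp.PP) {k : ℕ} (hk1 : 1 ≤ k)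
    (hk2 : k ≤ 13) :
    hp.LeCritical (hp.st p.1 p.2) k
      ↔ (hp.gam p.1 p.2 ≤ k ∨ 30 - k ≤ hp.gam p.1 p.2) := by
  have h0 := hp.mem_PP.mp hpp
  obtain ⟨f1, f2, f3, f4, f5, f6⟩ := hp.gam_spec h0
  constructor
  · rintro ⟨i, hi1, hi2, hcrit | hcrit⟩
    · rw [hp.gateAt_iff h0] at hcrit; omega
    · rw [hp.gateAt_iff h0] at hcrit; omega
  · intro h
    rcases h with h | h
    · exact ⟨hp.gam p.1 p.2, by omega, by omega, Or.inl ((hp.gateAt_iff h0 _).mpr rfl)⟩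
    · refine ⟨30 - hp.gam p.1 p.2, by omega, by omega, Or.inr ?_⟩
      rw [hp.gateAt_iff h0]
      omega

lemma NLe_pairs (k : ℕ) (hk1 : 1 ≤ k) (hk2 : k ≤ 13) :
    hp.NLe k = (hp.PP.filter (fun p =>
      hp.gam p.1 p.2 ≤ k ∨ 30 - k ≤ hp.gam p.1 p.2)).card := by
  classical
  rw [hp.NLe_finset k, hp.count_transfer (fun t => hp.LeCritical t k)]
  congr 1
  apply Finset.filter_congr
  intro p hpp
  constructor
  · intro h; exact (hp.leCrit_iff hpp hk1 hk2).mp h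
  · intro h; exact (hp.leCrit_iff hpp hk1 hk2).mpr h

lemma Gsum (S : Finset ℕ) :
    ∑ g ∈ S, hp.Gcnt g = (hp.PP.filter (fun p => hp.gam p.1 p.2 ∈ S)).card := by
  classical
  rw [Finset.card_eq_sum_card_fiberwise (f := fun p : Fin 30 × Fin 30 => hp.gam p.1 p.2)
    (s := hp.PP.filter (fun p => hp.gam p.1 p.2 ∈ S))
    (t := S) (fun p hq => (mem_filter.mp hq).2)]
  apply Finset.sum_congr rfl
  intro g hg
  unfold Gcnt
  rw [Finset.filter_filter]
  congr 1
  apply Finset.filter_congr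
  intro p _
  constructor
  · intro h
    refine ⟨?_, h⟩
    show hp.gam p.1 p.2 ∈ S
    rw [h]; exact hg
  · rintro ⟨_, h2⟩; exact h2

lemma low_G (hN10 : hp.NLe 10 = 165) : ∑ g ∈ LowSet, hp.Gcnt g = 165 := by
  classical
  rw [hp.Gsum LowSet]
  have hcong : hp.PP.filter (fun p => hp.gam p.1 p.2 ∈ LowSet)
      = hp.PP.filter (fun p => hp.gam p.1 p.2 ≤ 10 ∨ 30 - 10 ≤ hp.gam p.1 p.2) := by
    apply Finset.filter_congr
    intro p hpp
    have h0 := hp.mem_PP.mp hpp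
    obtain ⟨-, -, -, -, f5, f6⟩ := hp.gam_spec h0
    simp only [LowSet, Finset.mem_union, Finset.mem_Icc]
    omega
  rw [hcong, ← hp.NLe_pairs 10 (by omega) (by omega), hN10]

lemma six_G (hN10 : hp.NLe 10 = 165) (hN13 : hp.NLe 13 = 291) :
    ∑ g ∈ SixSet, hp.Gcnt g = 126 := by
  classical
  rw [hp.Gsum SixSet]
  have h10 := hp.NLe_pairs 10 (by omega) (by omega)
  have h13 := hp.NLe_pairs 13 (by omega) (by omega)
  rw [hN10] at h10
  rw [hN13] at h13
  have hsplit : hp.PP.filter (fun p => hp.gam p.1 p.2 ≤ 13 ∨ 30 - 13 ≤ hp.gam p.1 p.2)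
      = (hp.PP.filter (fun p => hp.gam p.1 p.2 ≤ 10 ∨ 30 - 10 ≤ hp.gam p.1 p.2))
        ∪ (hp.PP.filter (fun p => hp.gam p.1 p.2 ∈ SixSet)) := by
    rw [← Finset.filter_or]
    apply Finset.filter_congr
    intro p hpp
    have h0 := hp.mem_PP.mp hpp
    obtain ⟨-, -, -, -, f5, f6⟩ := hp.gam_spec h0
    simp only [SixSet, Finset.mem_insert, Finset.mem_singleton]
    omega
  have hdisj : Disjoint (hp.PP.filter (fun p => hp.gam p.1 p.2 ≤ 10 ∨ 30 - 10 ≤ hp.gam p.1 p.2))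
      (hp.PP.filter (fun p => hp.gam p.1 p.2 ∈ SixSet)) := by
    rw [Finset.disjoint_left]
    intro p hp1 hp2
    simp only [mem_filter] at hp1 hp2
    have h2 := hp2.2
    simp only [SixSet, Finset.mem_insert, Finset.mem_singleton] at h2
    have h1 := hp1.2
    omega
  rw [hsplit, Finset.card_union_of_disjoint hdisj, ← h10] at h13
  omega

lemma sum_sixM (h3 : IsThreeDecompLabeling30 hp a b c) (hb : BLabelSpec hp b)
    (hN10 : hp.NLe 10 = 165) (hN13 : hp.NLe 13 = 291) :
    ∑ g ∈ SixSet, ((∑ i : Fin 10, hp.dncI g (a i) 0 435)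
        + (∑ i : Fin 10, hp.upcI g (c i) 0 435)
        + (∑ j : Fin 10, hp.upcI g (b j) 0 (hp.tstar b c))) = 36 := by
  have hcensus := Finset.sum_congr rfl (fun g (_ : g ∈ SixSet) => hp.census a b c h3 hb g)
  rw [Finset.sum_add_distrib] at hcensus
  conv_rhs at hcensus => rw [Finset.sum_add_distrib, Finset.sum_add_distrib, Finset.sum_add_distrib]
  rw [← Finset.mul_sum, ← Finset.mul_sum, ← Finset.mul_sum, ← Finset.mul_sum] at hcensus
  have hG := hp.six_G hN10 hN13
  have he0 : ∑ g ∈ SixSet, e0 g = 0 := by decide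
  have he1 : ∑ g ∈ SixSet, e1 g = 60 := by decide
  have he2 : ∑ g ∈ SixSet, e2 g = 30 := by decide
  have he3 : ∑ g ∈ SixSet, e3 g = 30 := by decide
  rw [hG, he0, he1, he2, he3] at hcensus
  omega

lemma sum_lowM (h3 : IsThreeDecompLabeling30 hp a b c) (hb : BLabelSpec hp b)
    (hN10 : hp.NLe 10 = 165) :
    ∑ g ∈ LowSet, ((∑ i : Fin 10, hp.dncI g (a i) 0 435)
        + (∑ i : Fin 10, hp.upcI g (c i) 0 435)
        + (∑ j : Fin 10, hp.upcI g (b j) 0 (hp.tstar b c))) = 0 := by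
  have hcensus := Finset.sum_congr rfl (fun g (_ : g ∈ LowSet) => hp.census a b c h3 hb g)
  rw [Finset.sum_add_distrib] at hcensus
  conv_rhs at hcensus => rw [Finset.sum_add_distrib, Finset.sum_add_distrib, Finset.sum_add_distrib]
  rw [← Finset.mul_sum, ← Finset.mul_sum, ← Finset.mul_sum, ← Finset.mul_sum] at hcensus
  have hG := hp.low_G hN10
  have he0 : ∑ g ∈ LowSet, e0 g = 45 := by decide
  have he1 : ∑ g ∈ LowSet, e1 g = 155 := by decide
  have he2 : ∑ g ∈ LowSet, e2 g = 100 := by decide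
  have he3 : ∑ g ∈ LowSet, e3 g = 100 := by decide
  rw [hG, he0, he1, he2, he3] at hcensus
  omega

end HalfPeriod
namespace HalfPeriod
open Finset

variable (hp : HalfPeriod 30) (a b c : Fin 10 → Fin 30)

attribute [local instance] Classical.propDecidable

lemma a_inj (h3 : IsThreeDecompLabeling30 hp a b c) : Function.Injective a := by
  intro x y hxy
  have h1 : hp.pos 0 (a x) = hp.pos 0 (a y) := by rw [hxy]
  rw [h3.2.1 x, h3.2.1 y] at h1
  have := x.isLt; have := y.isLt
  exact Fin.ext (by omega)

lemma b_inj (h3 : IsThreeDecompLabeling30 hp a b c) : Function.Injective b := by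
  intro x y hxy
  have h1 : hp.pos 0 (b x) = hp.pos 0 (b y) := by rw [hxy]
  rw [h3.2.2.1 x, h3.2.2.1 y] at h1
  exact Fin.ext (by omega)

lemma c_inj (h3 : IsThreeDecompLabeling30 hp a b c) : Function.Injective c := by
  intro x y hxy
  have h1 : hp.pos 0 (c x) = hp.pos 0 (c y) := by rw [hxy]
  rw [h3.2.2.2.1 x, h3.2.2.2.1 y] at h1
  exact Fin.ext (by omega)

lemma h0aa (h3 : IsThreeDecompLabeling30 hp a b c) {i m : Fin 10} (him : (i:ℕ) < (m:ℕ)) :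
    hp.pos 0 (a m) < hp.pos 0 (a i) := by
  rw [h3.2.1, h3.2.1]; have := m.isLt; omega

lemma h0bb (h3 : IsThreeDecompLabeling30 hp a b c) {i m : Fin 10} (him : (i:ℕ) < (m:ℕ)) :
    hp.pos 0 (b i) < hp.pos 0 (b m) := by
  rw [h3.2.2.1, h3.2.2.1]; omega

lemma h0cc (h3 : IsThreeDecompLabeling30 hp a b c) {i m : Fin 10} (him : (i:ℕ) < (m:ℕ)) :
    hp.pos 0 (c i) < hp.pos 0 (c m) := by
  rw [h3.2.2.2.1, h3.2.2.2.1]; omega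

/-- conversion of the A-class critical pass count to a pair count. -/
lemma sumA_six (h3 : IsThreeDecompLabeling30 hp a b c) :
    ∑ g ∈ SixSet, ∑ i : Fin 10, hp.dncI g (a i) 0 435
      = (hp.PP.filter (fun p => (∃ i, p.2 = a i) ∧ hp.gam p.1 p.2 ∈ SixSet)).card := by
  rw [Finset.sum_comm]
  have h1 : ∀ i : Fin 10, ∑ g ∈ SixSet, hp.dncI g (a i) 0 435
      = (hp.PP.filter (fun p => p.2 = a i ∧ hp.gam p.1 p.2 ∈ SixSet)).card := by
    intro i
    rw [Finset.card_eq_sum_card_fiberwise (f := fun p : Fin 30 × Fin 30 => hp.gam p.1 p.2)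
      (t := SixSet) (fun p hq => (mem_filter.mp hq).2.2)]
    apply Finset.sum_congr rfl
    intro g hg
    rw [hp.dnc_pairs g (a i) le_rfl, Finset.filter_filter]
    congr 1
    apply Finset.filter_congr
    intro p hpp
    have h0 := hp.mem_PP.mp hpp
    have hst := (hp.st_spec h0).1
    have himp : hp.gam p.1 p.2 = g → hp.gam p.1 p.2 ∈ SixSet := fun h => by
      rw [h]; exact hg
    tauto
  rw [Finset.sum_congr rfl (fun i (_ : i ∈ univ) => h1 i)]
  rw [Finset.card_eq_sum_card_fiberwise (f := fun p : Fin 30 × Fin 30 => p.2)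
    (t := univ.image a) ?memA]
  case memA =>
    intro p hq
    obtain ⟨⟨i, hi⟩, -⟩ := (mem_filter.mp hq).2
    exact mem_image.mpr ⟨i, mem_univ _, hi.symm⟩
  rw [Finset.sum_image (fun x _ y _ h => hp.a_inj a b c h3 h)]
  apply Finset.sum_congr rfl
  intro i _
  congr 1
  rw [Finset.filter_filter]
  apply Finset.filter_congr
  intro p _
  constructor
  · rintro ⟨hpa, hmem⟩
    exact ⟨⟨⟨i, hpa⟩, hmem⟩, hpa⟩
  · rintro ⟨⟨-, hmem⟩, hpa⟩
    exact ⟨hpa, hmem⟩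

/-- conversion of the C-class critical pass count. -/
lemma sumC_six (h3 : IsThreeDecompLabeling30 hp a b c) :
    ∑ g ∈ SixSet, ∑ i : Fin 10, hp.upcI g (c i) 0 435
      = (hp.PP.filter (fun p => (∃ i, p.1 = c i) ∧ hp.gam p.1 p.2 ∈ SixSet)).card := by
  rw [Finset.sum_comm]
  have h1 : ∀ i : Fin 10, ∑ g ∈ SixSet, hp.upcI g (c i) 0 435
      = (hp.PP.filter (fun p => p.1 = c i ∧ hp.gam p.1 p.2 ∈ SixSet)).card := by
    intro i
    rw [Finset.card_eq_sum_card_fiberwise (f := fun p : Fin 30 × Fin 30 => hp.gam p.1 p.2)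
      (t := SixSet) (fun p hq => (mem_filter.mp hq).2.2)]
    apply Finset.sum_congr rfl
    intro g hg
    rw [hp.upc_pairs g (c i) le_rfl, Finset.filter_filter]
    congr 1
    apply Finset.filter_congr
    intro p hpp
    have h0 := hp.mem_PP.mp hpp
    have hst := (hp.st_spec h0).1
    have himp : hp.gam p.1 p.2 = g → hp.gam p.1 p.2 ∈ SixSet := fun h => by
      rw [h]; exact hg
    tauto
  rw [Finset.sum_congr rfl (fun i (_ : i ∈ univ) => h1 i)]
  rw [Finset.card_eq_sum_card_fiberwise (f := fun p : Fin 30 × Fin 30 => p.1)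
    (t := univ.image c) ?memC]
  case memC =>
    intro p hq
    obtain ⟨⟨i, hi⟩, -⟩ := (mem_filter.mp hq).2
    exact mem_image.mpr ⟨i, mem_univ _, hi.symm⟩
  rw [Finset.sum_image (fun x _ y _ h => hp.c_inj a b c h3 h)]
  apply Finset.sum_congr rfl
  intro i _
  congr 1
  rw [Finset.filter_filter]
  apply Finset.filter_congr
  intro p _
  constructor
  · rintro ⟨hpa, hmem⟩
    exact ⟨⟨⟨i, hpa⟩, hmem⟩, hpa⟩
  · rintro ⟨⟨-, hmem⟩, hpa⟩
    exact ⟨hpa, hmem⟩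

/-- conversion of the B-class critical pass count. -/
lemma sumB_six (h3 : IsThreeDecompLabeling30 hp a b c) :
    ∑ g ∈ SixSet, ∑ j : Fin 10, hp.upcI g (b j) 0 (hp.tstar b c)
      = (hp.PP.filter (fun p => (∃ j, p.1 = b j) ∧ hp.gam p.1 p.2 ∈ SixSet
          ∧ hp.st p.1 p.2 < hp.tstar b c)).card := by
  have hT435 : hp.tstar b c ≤ 435 := le_of_lt (hp.tstar_lt a b c h3)
  rw [Finset.sum_comm]
  have h1 : ∀ j : Fin 10, ∑ g ∈ SixSet, hp.upcI g (b j) 0 (hp.tstar b c)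
      = (hp.PP.filter (fun p => p.1 = b j ∧ hp.gam p.1 p.2 ∈ SixSet
          ∧ hp.st p.1 p.2 < hp.tstar b c)).card := by
    intro j
    rw [Finset.card_eq_sum_card_fiberwise (f := fun p : Fin 30 × Fin 30 => hp.gam p.1 p.2)
      (t := SixSet) (fun p hq => (mem_filter.mp hq).2.2.1)]
    apply Finset.sum_congr rfl
    intro g hg
    rw [hp.upc_pairs g (b j) hT435, Finset.filter_filter]
    congr 1
    apply Finset.filter_congr
    intro p hpp
    have himp : hp.gam p.1 p.2 = g → hp.gam p.1 p.2 ∈ SixSet := fun h => by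
      rw [h]; exact hg
    tauto
  rw [Finset.sum_congr rfl (fun j (_ : j ∈ univ) => h1 j)]
  rw [Finset.card_eq_sum_card_fiberwise (f := fun p : Fin 30 × Fin 30 => p.1)
    (t := univ.image b) ?memB]
  case memB =>
    intro p hq
    obtain ⟨⟨j, hj⟩, -⟩ := (mem_filter.mp hq).2
    exact mem_image.mpr ⟨j, mem_univ _, hj.symm⟩
  rw [Finset.sum_image (fun x _ y _ h => hp.b_inj a b c h3 h)]
  apply Finset.sum_congr rfl
  intro j _
  congr 1
  rw [Finset.filter_filter]
  apply Finset.filter_congr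
  intro p _
  constructor
  · rintro ⟨hpa, hmem, hlt⟩
    exact ⟨⟨⟨j, hpa⟩, hmem, hlt⟩, hpa⟩
  · rintro ⟨⟨-, hmem, hlt⟩, hpa⟩
    exact ⟨hpa, hmem, hlt⟩

/-- the master count: exactly 36 critical monochromatic transpositions. -/
lemma master36 (h3 : IsThreeDecompLabeling30 hp a b c) (hb : BLabelSpec hp b)
    (hN10 : hp.NLe 10 = 165) (hN13 : hp.NLe 13 = 291) :
    (hp.PP.filter (fun p => (∃ i, p.2 = a i) ∧ hp.gam p.1 p.2 ∈ SixSet)).card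
    + (hp.PP.filter (fun p => (∃ i, p.1 = c i) ∧ hp.gam p.1 p.2 ∈ SixSet)).card
    + (hp.PP.filter (fun p => (∃ j, p.1 = b j) ∧ hp.gam p.1 p.2 ∈ SixSet
          ∧ hp.st p.1 p.2 < hp.tstar b c)).card = 36 := by
  have h := hp.sum_sixM a b c h3 hb hN10 hN13
  rw [Finset.sum_add_distrib, Finset.sum_add_distrib] at h
  rw [hp.sumA_six a b c h3, hp.sumC_six a b c h3, hp.sumB_six a b c h3] at h
  omega

end HalfPeriod
namespace HalfPeriod
open Finset

variable (hp : HalfPeriod 30) (a b c : Fin 10 → Fin 30)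

attribute [local instance] Classical.propDecidable

lemma low_zeroA (h3 : IsThreeDecompLabeling30 hp a b c) (hb : BLabelSpec hp b)
    (hN10 : hp.NLe 10 = 165) {g : ℕ} (hg : g ∈ LowSet) (i : Fin 10) :
    hp.dncI g (a i) 0 435 = 0 := by
  have h := hp.sum_lowM a b c h3 hb hN10
  have hg' := (Finset.sum_eq_zero_iff.mp h) g hg
  have hA : (∑ i : Fin 10, hp.dncI g (a i) 0 435) = 0 := by omega
  exact (Finset.sum_eq_zero_iff.mp hA) i (mem_univ i)

lemma low_zeroC (h3 : IsThreeDecompLabeling30 hp a b c) (hb : BLabelSpec hp b)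
    (hN10 : hp.NLe 10 = 165) {g : ℕ} (hg : g ∈ LowSet) (i : Fin 10) :
    hp.upcI g (c i) 0 435 = 0 := by
  have h := hp.sum_lowM a b c h3 hb hN10
  have hg' := (Finset.sum_eq_zero_iff.mp h) g hg
  have hC : (∑ i : Fin 10, hp.upcI g (c i) 0 435) = 0 := by omega
  exact (Finset.sum_eq_zero_iff.mp hC) i (mem_univ i)

lemma low_zeroB (h3 : IsThreeDecompLabeling30 hp a b c) (hb : BLabelSpec hp b)
    (hN10 : hp.NLe 10 = 165) {g : ℕ} (hg : g ∈ LowSet) (j : Fin 10) :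
    hp.upcI g (b j) 0 (hp.tstar b c) = 0 := by
  have h := hp.sum_lowM a b c h3 hb hN10
  have hg' := (Finset.sum_eq_zero_iff.mp h) g hg
  have hB : (∑ j : Fin 10, hp.upcI g (b j) 0 (hp.tstar b c)) = 0 := by omega
  exact (Finset.sum_eq_zero_iff.mp hB) j (mem_univ j)

lemma mem_LowSet {g : ℕ} (h1 : 1 ≤ g) (h29 : g ≤ 29) (h : g ≤ 10 ∨ 20 ≤ g) :
    g ∈ LowSet := by
  simp only [LowSet, mem_union, mem_Icc]
  omega

/-- gates of monochromatic `A`-swaps are in the middle. -/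
lemma gamA_mid (h3 : IsThreeDecompLabeling30 hp a b c) (hb : BLabelSpec hp b)
    (hN10 : hp.NLe 10 = 165) {i m : Fin 10} (him : (i:ℕ) < (m:ℕ)) :
    11 ≤ hp.gam (a m) (a i) ∧ hp.gam (a m) (a i) ≤ 19 := by
  have h0 := hp.h0aa a b c h3 him
  obtain ⟨f1, f2, f3, f4, f5, f6⟩ := hp.gam_spec h0
  by_cases hlow : hp.gam (a m) (a i) ≤ 10 ∨ 20 ≤ hp.gam (a m) (a i)
  · exfalso
    have hz := hp.low_zeroA a b c h3 hb hN10 (mem_LowSet f5 f6 hlow) i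
    rw [hp.dnc_pairs _ _ le_rfl, Finset.card_eq_zero, Finset.filter_eq_empty_iff] at hz
    exact hz (show (a m, a i) ∈ hp.PP from hp.mem_PP.mpr h0) ⟨rfl, rfl, (hp.st_spec h0).1⟩
  · omega

lemma gamC_mid (h3 : IsThreeDecompLabeling30 hp a b c) (hb : BLabelSpec hp b)
    (hN10 : hp.NLe 10 = 165) {i m : Fin 10} (him : (i:ℕ) < (m:ℕ)) :
    11 ≤ hp.gam (c i) (c m) ∧ hp.gam (c i) (c m) ≤ 19 := by
  have h0 := hp.h0cc a b c h3 him
  obtain ⟨f1, f2, f3, f4, f5, f6⟩ := hp.gam_spec h0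
  by_cases hlow : hp.gam (c i) (c m) ≤ 10 ∨ 20 ≤ hp.gam (c i) (c m)
  · exfalso
    have hz := hp.low_zeroC a b c h3 hb hN10 (mem_LowSet f5 f6 hlow) i
    rw [hp.upc_pairs _ _ le_rfl, Finset.card_eq_zero, Finset.filter_eq_empty_iff] at hz
    exact hz (show (c i, c m) ∈ hp.PP from hp.mem_PP.mpr h0) ⟨rfl, rfl, (hp.st_spec h0).1⟩
  · omega

lemma gamB_mid (h3 : IsThreeDecompLabeling30 hp a b c) (hb : BLabelSpec hp b)
    (hN10 : hp.NLe 10 = 165) {i m : Fin 10} (him : (i:ℕ) < (m:ℕ)) :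
    11 ≤ hp.gam (b i) (b m) ∧ hp.gam (b i) (b m) ≤ 19 := by
  have h0 := hp.h0bb a b c h3 him
  obtain ⟨f1, f2, f3, f4, f5, f6⟩ := hp.gam_spec h0
  by_cases hlow : hp.gam (b i) (b m) ≤ 10 ∨ 20 ≤ hp.gam (b i) (b m)
  · exfalso
    have hz := hp.low_zeroB a b c h3 hb hN10 (mem_LowSet f5 f6 hlow) i
    rw [hp.upc_pairs _ _ (le_of_lt (hp.tstar_lt a b c h3)), Finset.card_eq_zero,
      Finset.filter_eq_empty_iff] at hz
    exact hz (show (b i, b m) ∈ hp.PP from hp.mem_PP.mpr h0)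
      ⟨rfl, rfl, hp.bb_lt_tstar a b c h3 hb him⟩
  · omega

lemma fin_filter_card (P : ℕ → Prop) [DecidablePred P] :
    ((univ : Finset (Fin 10)).filter (fun i : Fin 10 => P (i:ℕ))).card
      = ((range 10).filter P).card := by
  refine Finset.card_bij (fun i _ => (i:ℕ)) ?_ ?_ ?_
  · intro i hi
    simp only [mem_filter, mem_univ, true_and] at hi
    simp only [mem_filter, mem_range]
    exact ⟨i.isLt, hi⟩
  · intro i _ j _ h
    exact Fin.ext h
  · intro n hn
    simp only [mem_filter, mem_range] at hn
    exact ⟨⟨n, hn.1⟩, by simp only [mem_filter, mem_univ, true_and]; exact hn.2, rfl⟩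

lemma card_lt_m (m : Fin 10) :
    ((univ : Finset (Fin 10)).filter (fun i : Fin 10 => (i:ℕ) < (m:ℕ))).card = (m:ℕ) := by
  rw [fin_filter_card (fun n => n < (m:ℕ))]
  have : (range 10).filter (fun n => n < (m:ℕ)) = range (m:ℕ) := by
    ext n
    simp only [mem_filter, mem_range]
    have := m.isLt
    omega
  rw [this, Finset.card_range]

lemma card_gt_m (m : Fin 10) :
    ((univ : Finset (Fin 10)).filter (fun i : Fin 10 => (m:ℕ) < (i:ℕ))).card
      = 9 - (m:ℕ) := by
  rw [fin_filter_card (fun n => (m:ℕ) < n)]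
  have : (range 10).filter (fun n => (m:ℕ) < n) = Ico ((m:ℕ)+1) 10 := by
    ext n
    simp only [mem_filter, mem_range, mem_Ico]
    omega
  rw [this, Nat.card_Ico]
  omega

/-- generic gate-set version of `dnc_pairs`. -/
lemma dnc_gateset (S : Finset ℕ) (e : Fin 30) {T : ℕ} (hT : T ≤ 435) :
    ∑ g ∈ S, hp.dncI g e 0 T
      = (hp.PP.filter (fun p => p.2 = e ∧ hp.gam p.1 p.2 ∈ S
          ∧ hp.st p.1 p.2 < T)).card := by
  rw [Finset.card_eq_sum_card_fiberwise (f := fun p : Fin 30 × Fin 30 => hp.gam p.1 p.2)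
    (t := S) (fun p hq => (mem_filter.mp hq).2.2.1)]
  apply Finset.sum_congr rfl
  intro g hg
  rw [hp.dnc_pairs g e hT, Finset.filter_filter]
  congr 1
  apply Finset.filter_congr
  intro p hpp
  have himp : hp.gam p.1 p.2 = g → hp.gam p.1 p.2 ∈ S := fun h => by rw [h]; exact hg
  tauto

lemma upc_gateset (S : Finset ℕ) (e : Fin 30) {T : ℕ} (hT : T ≤ 435) :
    ∑ g ∈ S, hp.upcI g e 0 T
      = (hp.PP.filter (fun p => p.1 = e ∧ hp.gam p.1 p.2 ∈ S
          ∧ hp.st p.1 p.2 < T)).card := by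
  rw [Finset.card_eq_sum_card_fiberwise (f := fun p : Fin 30 × Fin 30 => hp.gam p.1 p.2)
    (t := S) (fun p hq => (mem_filter.mp hq).2.2.1)]
  apply Finset.sum_congr rfl
  intro g hg
  rw [hp.upc_pairs g e hT, Finset.filter_filter]
  congr 1
  apply Finset.filter_congr
  intro p hpp
  have himp : hp.gam p.1 p.2 = g → hp.gam p.1 p.2 ∈ S := fun h => by rw [h]; exact hg
  tauto

end HalfPeriod
namespace HalfPeriod
open Finset

variable (hp : HalfPeriod 30) (a b c : Fin 10 → Fin 30)

attribute [local instance] Classical.propDecidable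

lemma A_mult (h3 : IsThreeDecompLabeling30 hp a b c) (m : Fin 10) (g : ℕ) :
    ((univ : Finset (Fin 10)).filter (fun i : Fin 10 =>
      (i:ℕ) < (m:ℕ) ∧ hp.gam (a m) (a i) = g)).card ≤ hp.upcI g (a m) 0 435 := by
  rw [hp.upc_pairs g (a m) le_rfl]
  refine Finset.card_le_card_of_injOn (fun i => (a m, a i)) ?_ ?_
  · intro i hi
    simp only [Finset.mem_coe, mem_filter, mem_univ, true_and] at hi
    have h0 := hp.h0aa a b c h3 hi.1
    exact mem_filter.mpr ⟨hp.mem_PP.mpr h0, rfl, hi.2, (hp.st_spec h0).1⟩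
  · intro i _ j _ hij
    exact hp.a_inj a b c h3 (congrArg Prod.snd hij)

lemma C_mult (h3 : IsThreeDecompLabeling30 hp a b c) (m : Fin 10) (g : ℕ) :
    ((univ : Finset (Fin 10)).filter (fun i : Fin 10 =>
      (i:ℕ) < (m:ℕ) ∧ hp.gam (c i) (c m) = g)).card ≤ hp.dncI g (c m) 0 435 := by
  rw [hp.dnc_pairs g (c m) le_rfl]
  refine Finset.card_le_card_of_injOn (fun i => (c i, c m)) ?_ ?_
  · intro i hi
    simp only [Finset.mem_coe, mem_filter, mem_univ, true_and] at hi
    have h0 := hp.h0cc a b c h3 hi.1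
    exact mem_filter.mpr ⟨hp.mem_PP.mpr h0, rfl, hi.2, (hp.st_spec h0).1⟩
  · intro i _ j _ hij
    exact hp.c_inj a b c h3 (congrArg Prod.fst hij)

lemma B_mult (h3 : IsThreeDecompLabeling30 hp a b c) (hb : BLabelSpec hp b)
    (m : Fin 10) (g : ℕ) :
    ((univ : Finset (Fin 10)).filter (fun i : Fin 10 =>
      (i:ℕ) < (m:ℕ) ∧ hp.gam (b i) (b m) = g)).card
        ≤ hp.dncI g (b m) 0 (hp.tstar b c) := by
  rw [hp.dnc_pairs g (b m) (le_of_lt (hp.tstar_lt a b c h3))]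
  refine Finset.card_le_card_of_injOn (fun i => (b i, b m)) ?_ ?_
  · intro i hi
    simp only [Finset.mem_coe, mem_filter, mem_univ, true_and] at hi
    have h0 := hp.h0bb a b c h3 hi.1
    exact mem_filter.mpr ⟨hp.mem_PP.mpr h0, rfl, hi.2, hp.bb_lt_tstar a b c h3 hb hi.1⟩
  · intro i _ j _ hij
    exact hp.b_inj a b c h3 (congrArg Prod.fst hij)

lemma capA (h3 : IsThreeDecompLabeling30 hp a b c) (m : Fin 10) {g : ℕ}
    (h1 : 10 - (m:ℕ) ≤ g) (h2 : g < 21 + (m:ℕ)) :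
    hp.upcI g (a m) 0 435 ≤ hp.dncI g (a m) 0 435 + 1 := by
  have h := hp.net g (a m) 0 435 (by omega) le_rfl
  rw [h3.2.1 m, hp.pos435_a a b c h3 m] at h
  split_ifs at h <;> omega

lemma capC (h3 : IsThreeDecompLabeling30 hp a b c) (m : Fin 10) {g : ℕ}
    (h1 : 10 - (m:ℕ) ≤ g) (h2 : g < 21 + (m:ℕ)) :
    hp.dncI g (c m) 0 435 ≤ hp.upcI g (c m) 0 435 + 1 := by
  have h := hp.net g (c m) 0 435 (by omega) le_rfl
  rw [h3.2.2.2.1 m, hp.pos435_c a b c h3 m] at h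
  split_ifs at h <;> omega

lemma capB (h3 : IsThreeDecompLabeling30 hp a b c) (hb : BLabelSpec hp b) (m : Fin 10)
    {g : ℕ} (h1 : 10 - (m:ℕ) ≤ g) :
    hp.dncI g (b m) 0 (hp.tstar b c) ≤ hp.upcI g (b m) 0 (hp.tstar b c) + 1 := by
  have h := hp.net g (b m) 0 (hp.tstar b c) (by omega) (le_of_lt (hp.tstar_lt a b c h3))
  rw [h3.2.2.1 m,
    hp.pos_tstar_b a b c h3 hb (m:ℕ) (by have := m.isLt; omega) m rfl] at h
  split_ifs at h <;> omega

lemma midA (h3 : IsThreeDecompLabeling30 hp a b c) (m : Fin 10) :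
    ∑ g ∈ MidSet, hp.dncI g (a m) 0 435 ≤ 9 - (m:ℕ) := by
  rw [hp.dnc_gateset MidSet (a m) le_rfl]
  calc (hp.PP.filter (fun p => p.2 = a m ∧ hp.gam p.1 p.2 ∈ MidSet
          ∧ hp.st p.1 p.2 < 435)).card
      ≤ (((univ : Finset (Fin 10)).filter (fun i : Fin 10 => (m:ℕ) < (i:ℕ))).image
          (fun m' => (a m', a m))).card := by
        apply Finset.card_le_card
        intro p hp'
        simp only [mem_filter] at hp'
        obtain ⟨hpp, hpa, -, -⟩ := hp'
        have h0 := hp.mem_PP.mp hpp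
        rw [hpa] at h0
        obtain ⟨m', hmm', hpm'⟩ := hp.below_a_char a b c h3 h0
        simp only [mem_image, mem_filter, mem_univ, true_and]
        exact ⟨m', hmm', Prod.ext hpm'.symm hpa.symm⟩
    _ ≤ ((univ : Finset (Fin 10)).filter (fun i : Fin 10 => (m:ℕ) < (i:ℕ))).card :=
        Finset.card_image_le
    _ = 9 - (m:ℕ) := card_gt_m m

lemma midC (h3 : IsThreeDecompLabeling30 hp a b c) (m : Fin 10) :
    ∑ g ∈ MidSet, hp.upcI g (c m) 0 435 ≤ 9 - (m:ℕ) := by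
  rw [hp.upc_gateset MidSet (c m) le_rfl]
  calc (hp.PP.filter (fun p => p.1 = c m ∧ hp.gam p.1 p.2 ∈ MidSet
          ∧ hp.st p.1 p.2 < 435)).card
      ≤ (((univ : Finset (Fin 10)).filter (fun i : Fin 10 => (m:ℕ) < (i:ℕ))).image
          (fun m' => (c m, c m'))).card := by
        apply Finset.card_le_card
        intro p hp'
        simp only [mem_filter] at hp'
        obtain ⟨hpp, hpc, -, -⟩ := hp'
        have h0 := hp.mem_PP.mp hpp
        rw [hpc] at h0
        obtain ⟨m', hmm', hpm'⟩ := hp.above_c_char a b c h3 h0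
        simp only [mem_image, mem_filter, mem_univ, true_and]
        exact ⟨m', hmm', Prod.ext hpc.symm hpm'.symm⟩
    _ ≤ ((univ : Finset (Fin 10)).filter (fun i : Fin 10 => (m:ℕ) < (i:ℕ))).card :=
        Finset.card_image_le
    _ = 9 - (m:ℕ) := card_gt_m m

lemma midB (h3 : IsThreeDecompLabeling30 hp a b c) (m : Fin 10) :
    ∑ g ∈ MidSet, hp.upcI g (b m) 0 (hp.tstar b c) ≤ 9 - (m:ℕ) := by
  rw [hp.upc_gateset MidSet (b m) (le_of_lt (hp.tstar_lt a b c h3))]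
  calc (hp.PP.filter (fun p => p.1 = b m ∧ hp.gam p.1 p.2 ∈ MidSet
          ∧ hp.st p.1 p.2 < hp.tstar b c)).card
      ≤ (((univ : Finset (Fin 10)).filter (fun i : Fin 10 => (m:ℕ) < (i:ℕ))).image
          (fun m' => (b m, b m'))).card := by
        apply Finset.card_le_card
        intro p hp'
        simp only [mem_filter] at hp'
        obtain ⟨hpp, hpb, -, hlt⟩ := hp'
        have h0 := hp.mem_PP.mp hpp
        rw [hpb] at h0
        rcases hp.above_b_char a b c h3 h0 with ⟨m', hmm', hpm'⟩ | ⟨m', hpm'⟩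
        · simp only [mem_image, mem_filter, mem_univ, true_and]
          exact ⟨m', hmm', Prod.ext hpb.symm hpm'.symm⟩
        · exfalso
          rw [hpb, hpm'] at hlt
          have := hp.tstar_le b c m' m
          omega
    _ ≤ ((univ : Finset (Fin 10)).filter (fun i : Fin 10 => (m:ℕ) < (i:ℕ))).card :=
        Finset.card_image_le
    _ = 9 - (m:ℕ) := card_gt_m m

end HalfPeriod
namespace HalfPeriod
open Finset

variable (hp : HalfPeriod 30) (a b c : Fin 10 → Fin 30)

attribute [local instance] Classical.propDecidable

lemma mid_of_not_six {g : ℕ} (h1 : 11 ≤ g) (h2 : g ≤ 19) (hnot : g ∉ SixSet) :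
    g ∈ MidSet := by
  simp only [SixSet, mem_insert, mem_singleton] at hnot
  simp only [MidSet, mem_insert, mem_singleton]
  omega

lemma A_count (h3 : IsThreeDecompLabeling30 hp a b c) (hb : BLabelSpec hp b)
    (hN10 : hp.NLe 10 = 165) (m : Fin 10) :
    2 * (m:ℕ) - 12 ≤ ((univ : Finset (Fin 10)).filter (fun i : Fin 10 =>
      (i:ℕ) < (m:ℕ) ∧ hp.gam (a m) (a i) ∈ SixSet)).card := by
  have hsplit := Finset.card_filter_add_card_filter_not
    (s := (univ : Finset (Fin 10)).filter (fun i : Fin 10 => (i:ℕ) < (m:ℕ)))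
    (p := fun i => hp.gam (a m) (a i) ∈ SixSet)
  rw [card_lt_m m, Finset.filter_filter, Finset.filter_filter] at hsplit
  have hneg_le : ((univ : Finset (Fin 10)).filter (fun i : Fin 10 =>
      (i:ℕ) < (m:ℕ) ∧ hp.gam (a m) (a i) ∉ SixSet)).card
      ≤ ((univ : Finset (Fin 10)).filter (fun i : Fin 10 =>
        (i:ℕ) < (m:ℕ) ∧ hp.gam (a m) (a i) ∈ MidSet)).card := by
    apply Finset.card_le_card
    intro i hi
    simp only [mem_filter, mem_univ, true_and] at hi ⊢
    obtain ⟨him, hnot⟩ := hi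
    have hmid := hp.gamA_mid a b c h3 hb hN10 him
    exact ⟨him, mid_of_not_six hmid.1 hmid.2 hnot⟩
  have hfib : ((univ : Finset (Fin 10)).filter (fun i : Fin 10 =>
      (i:ℕ) < (m:ℕ) ∧ hp.gam (a m) (a i) ∈ MidSet)).card
      = ∑ g ∈ MidSet, (((univ : Finset (Fin 10)).filter (fun i : Fin 10 =>
        (i:ℕ) < (m:ℕ) ∧ hp.gam (a m) (a i) ∈ MidSet)).filter
          (fun i => hp.gam (a m) (a i) = g)).card :=
    Finset.card_eq_sum_card_fiberwise (fun i hi => (mem_filter.mp hi).2.2)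
  have hper : ∀ g ∈ MidSet, (((univ : Finset (Fin 10)).filter (fun i : Fin 10 =>
      (i:ℕ) < (m:ℕ) ∧ hp.gam (a m) (a i) ∈ MidSet)).filter
        (fun i => hp.gam (a m) (a i) = g)).card ≤ hp.dncI g (a m) 0 435 + 1 := by
    intro g hg
    have hsub : (((univ : Finset (Fin 10)).filter (fun i : Fin 10 =>
        (i:ℕ) < (m:ℕ) ∧ hp.gam (a m) (a i) ∈ MidSet)).filter
          (fun i => hp.gam (a m) (a i) = g))
        ⊆ ((univ : Finset (Fin 10)).filter (fun i : Fin 10 =>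
          (i:ℕ) < (m:ℕ) ∧ hp.gam (a m) (a i) = g)) := by
      intro i hi
      simp only [mem_filter, mem_univ, true_and] at hi ⊢
      exact ⟨hi.1.1, hi.2⟩
    have hg' : 14 ≤ g ∧ g ≤ 16 := by
      simp only [MidSet, mem_insert, mem_singleton] at hg
      omega
    calc _ ≤ ((univ : Finset (Fin 10)).filter (fun i : Fin 10 =>
          (i:ℕ) < (m:ℕ) ∧ hp.gam (a m) (a i) = g)).card := Finset.card_le_card hsub
      _ ≤ hp.upcI g (a m) 0 435 := hp.A_mult a b c h3 m g
      _ ≤ hp.dncI g (a m) 0 435 + 1 := hp.capA a b c h3 m (by omega) (by omega)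
  have hmid_le : ∑ g ∈ MidSet, (hp.dncI g (a m) 0 435 + 1) ≤ (9 - (m:ℕ)) + 3 := by
    rw [Finset.sum_add_distrib]
    have h1 := hp.midA a b c h3 m
    have h2 : ∑ _g ∈ MidSet, 1 = 3 := by decide
    omega
  have hchain : ((univ : Finset (Fin 10)).filter (fun i : Fin 10 =>
      (i:ℕ) < (m:ℕ) ∧ hp.gam (a m) (a i) ∈ MidSet)).card ≤ (9 - (m:ℕ)) + 3 := by
    rw [hfib]
    calc ∑ g ∈ MidSet, _ ≤ ∑ g ∈ MidSet, (hp.dncI g (a m) 0 435 + 1) :=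
        Finset.sum_le_sum hper
      _ ≤ (9 - (m:ℕ)) + 3 := hmid_le
  have hm9 := m.isLt
  omega

lemma C_count (h3 : IsThreeDecompLabeling30 hp a b c) (hb : BLabelSpec hp b)
    (hN10 : hp.NLe 10 = 165) (m : Fin 10) :
    2 * (m:ℕ) - 12 ≤ ((univ : Finset (Fin 10)).filter (fun i : Fin 10 =>
      (i:ℕ) < (m:ℕ) ∧ hp.gam (c i) (c m) ∈ SixSet)).card := by
  have hsplit := Finset.card_filter_add_card_filter_not
    (s := (univ : Finset (Fin 10)).filter (fun i : Fin 10 => (i:ℕ) < (m:ℕ)))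
    (p := fun i => hp.gam (c i) (c m) ∈ SixSet)
  rw [card_lt_m m, Finset.filter_filter, Finset.filter_filter] at hsplit
  have hneg_le : ((univ : Finset (Fin 10)).filter (fun i : Fin 10 =>
      (i:ℕ) < (m:ℕ) ∧ hp.gam (c i) (c m) ∉ SixSet)).card
      ≤ ((univ : Finset (Fin 10)).filter (fun i : Fin 10 =>
        (i:ℕ) < (m:ℕ) ∧ hp.gam (c i) (c m) ∈ MidSet)).card := by
    apply Finset.card_le_card
    intro i hi
    simp only [mem_filter, mem_univ, true_and] at hi ⊢
    obtain ⟨him, hnot⟩ := hi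
    have hmid := hp.gamC_mid a b c h3 hb hN10 him
    exact ⟨him, mid_of_not_six hmid.1 hmid.2 hnot⟩
  have hfib : ((univ : Finset (Fin 10)).filter (fun i : Fin 10 =>
      (i:ℕ) < (m:ℕ) ∧ hp.gam (c i) (c m) ∈ MidSet)).card
      = ∑ g ∈ MidSet, (((univ : Finset (Fin 10)).filter (fun i : Fin 10 =>
        (i:ℕ) < (m:ℕ) ∧ hp.gam (c i) (c m) ∈ MidSet)).filter
          (fun i => hp.gam (c i) (c m) = g)).card :=
    Finset.card_eq_sum_card_fiberwise (fun i hi => (mem_filter.mp hi).2.2)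
  have hper : ∀ g ∈ MidSet, (((univ : Finset (Fin 10)).filter (fun i : Fin 10 =>
      (i:ℕ) < (m:ℕ) ∧ hp.gam (c i) (c m) ∈ MidSet)).filter
        (fun i => hp.gam (c i) (c m) = g)).card ≤ hp.upcI g (c m) 0 435 + 1 := by
    intro g hg
    have hsub : (((univ : Finset (Fin 10)).filter (fun i : Fin 10 =>
        (i:ℕ) < (m:ℕ) ∧ hp.gam (c i) (c m) ∈ MidSet)).filter
          (fun i => hp.gam (c i) (c m) = g))
        ⊆ ((univ : Finset (Fin 10)).filter (fun i : Fin 10 =>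
          (i:ℕ) < (m:ℕ) ∧ hp.gam (c i) (c m) = g)) := by
      intro i hi
      simp only [mem_filter, mem_univ, true_and] at hi ⊢
      exact ⟨hi.1.1, hi.2⟩
    have hg' : 14 ≤ g ∧ g ≤ 16 := by
      simp only [MidSet, mem_insert, mem_singleton] at hg
      omega
    calc _ ≤ ((univ : Finset (Fin 10)).filter (fun i : Fin 10 =>
          (i:ℕ) < (m:ℕ) ∧ hp.gam (c i) (c m) = g)).card := Finset.card_le_card hsub
      _ ≤ hp.dncI g (c m) 0 435 := hp.C_mult a b c h3 m g
      _ ≤ hp.upcI g (c m) 0 435 + 1 := hp.capC a b c h3 m (by omega) (by omega)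
  have hmid_le : ∑ g ∈ MidSet, (hp.upcI g (c m) 0 435 + 1) ≤ (9 - (m:ℕ)) + 3 := by
    rw [Finset.sum_add_distrib]
    have h1 := hp.midC a b c h3 m
    have h2 : ∑ _g ∈ MidSet, 1 = 3 := by decide
    omega
  have hchain : ((univ : Finset (Fin 10)).filter (fun i : Fin 10 =>
      (i:ℕ) < (m:ℕ) ∧ hp.gam (c i) (c m) ∈ MidSet)).card ≤ (9 - (m:ℕ)) + 3 := by
    rw [hfib]
    calc ∑ g ∈ MidSet, _ ≤ ∑ g ∈ MidSet, (hp.upcI g (c m) 0 435 + 1) :=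
        Finset.sum_le_sum hper
      _ ≤ (9 - (m:ℕ)) + 3 := hmid_le
  have hm9 := m.isLt
  omega

lemma B_count (h3 : IsThreeDecompLabeling30 hp a b c) (hb : BLabelSpec hp b)
    (hN10 : hp.NLe 10 = 165) (m : Fin 10) :
    2 * (m:ℕ) - 12 ≤ ((univ : Finset (Fin 10)).filter (fun i : Fin 10 =>
      (i:ℕ) < (m:ℕ) ∧ hp.gam (b i) (b m) ∈ SixSet)).card := by
  have hsplit := Finset.card_filter_add_card_filter_not
    (s := (univ : Finset (Fin 10)).filter (fun i : Fin 10 => (i:ℕ) < (m:ℕ)))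
    (p := fun i => hp.gam (b i) (b m) ∈ SixSet)
  rw [card_lt_m m, Finset.filter_filter, Finset.filter_filter] at hsplit
  have hneg_le : ((univ : Finset (Fin 10)).filter (fun i : Fin 10 =>
      (i:ℕ) < (m:ℕ) ∧ hp.gam (b i) (b m) ∉ SixSet)).card
      ≤ ((univ : Finset (Fin 10)).filter (fun i : Fin 10 =>
        (i:ℕ) < (m:ℕ) ∧ hp.gam (b i) (b m) ∈ MidSet)).card := by
    apply Finset.card_le_card
    intro i hi
    simp only [mem_filter, mem_univ, true_and] at hi ⊢
    obtain ⟨him, hnot⟩ := hi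
    have hmid := hp.gamB_mid a b c h3 hb hN10 him
    exact ⟨him, mid_of_not_six hmid.1 hmid.2 hnot⟩
  have hfib : ((univ : Finset (Fin 10)).filter (fun i : Fin 10 =>
      (i:ℕ) < (m:ℕ) ∧ hp.gam (b i) (b m) ∈ MidSet)).card
      = ∑ g ∈ MidSet, (((univ : Finset (Fin 10)).filter (fun i : Fin 10 =>
        (i:ℕ) < (m:ℕ) ∧ hp.gam (b i) (b m) ∈ MidSet)).filter
          (fun i => hp.gam (b i) (b m) = g)).card :=
    Finset.card_eq_sum_card_fiberwise (fun i hi => (mem_filter.mp hi).2.2)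
  have hper : ∀ g ∈ MidSet, (((univ : Finset (Fin 10)).filter (fun i : Fin 10 =>
      (i:ℕ) < (m:ℕ) ∧ hp.gam (b i) (b m) ∈ MidSet)).filter
        (fun i => hp.gam (b i) (b m) = g)).card
          ≤ hp.upcI g (b m) 0 (hp.tstar b c) + 1 := by
    intro g hg
    have hsub : (((univ : Finset (Fin 10)).filter (fun i : Fin 10 =>
        (i:ℕ) < (m:ℕ) ∧ hp.gam (b i) (b m) ∈ MidSet)).filter
          (fun i => hp.gam (b i) (b m) = g))
        ⊆ ((univ : Finset (Fin 10)).filter (fun i : Fin 10 =>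
          (i:ℕ) < (m:ℕ) ∧ hp.gam (b i) (b m) = g)) := by
      intro i hi
      simp only [mem_filter, mem_univ, true_and] at hi ⊢
      exact ⟨hi.1.1, hi.2⟩
    have hg' : 14 ≤ g ∧ g ≤ 16 := by
      simp only [MidSet, mem_insert, mem_singleton] at hg
      omega
    calc _ ≤ ((univ : Finset (Fin 10)).filter (fun i : Fin 10 =>
          (i:ℕ) < (m:ℕ) ∧ hp.gam (b i) (b m) = g)).card := Finset.card_le_card hsub
      _ ≤ hp.dncI g (b m) 0 (hp.tstar b c) := hp.B_mult a b c h3 hb m g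
      _ ≤ hp.upcI g (b m) 0 (hp.tstar b c) + 1 := hp.capB a b c h3 hb m (by omega)
  have hmid_le : ∑ g ∈ MidSet, (hp.upcI g (b m) 0 (hp.tstar b c) + 1)
      ≤ (9 - (m:ℕ)) + 3 := by
    rw [Finset.sum_add_distrib]
    have h1 := hp.midB a b c h3 m
    have h2 : ∑ _g ∈ MidSet, 1 = 3 := by decide
    omega
  have hchain : ((univ : Finset (Fin 10)).filter (fun i : Fin 10 =>
      (i:ℕ) < (m:ℕ) ∧ hp.gam (b i) (b m) ∈ MidSet)).card ≤ (9 - (m:ℕ)) + 3 := by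
    rw [hfib]
    calc ∑ g ∈ MidSet, _ ≤ ∑ g ∈ MidSet, (hp.upcI g (b m) 0 (hp.tstar b c) + 1) :=
        Finset.sum_le_sum hper
      _ ≤ (9 - (m:ℕ)) + 3 := hmid_le
  have hm9 := m.isLt
  omega

end HalfPeriod
namespace HalfPeriod
open Finset

variable (hp : HalfPeriod 30) (a b c : Fin 10 → Fin 30)

attribute [local instance] Classical.propDecidable

lemma QA_ge (h3 : IsThreeDecompLabeling30 hp a b c) (hb : BLabelSpec hp b)
    (hN10 : hp.NLe 10 = 165) (extra : Finset (Fin 30 × Fin 30))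
    (hsub : extra ⊆ hp.PP.filter (fun p => (∃ i, p.2 = a i) ∧ hp.gam p.1 p.2 ∈ SixSet))
    (hfst : ∀ p ∈ extra, ∀ m : Fin 10, p.1 = a m → (m:ℕ) < 7) :
    12 + extra.card
      ≤ (hp.PP.filter (fun p => (∃ i, p.2 = a i) ∧ hp.gam p.1 p.2 ∈ SixSet)).card := by
  classical
  set T : Fin 10 → Finset (Fin 30 × Fin 30) := fun m =>
    ((univ.filter (fun i : Fin 10 => (i:ℕ) < (m:ℕ) ∧ hp.gam (a m) (a i) ∈ SixSet)).image
      (fun i => (a m, a i))) with hT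
  have hTfst : ∀ m : Fin 10, ∀ p ∈ T m, p.1 = a m := by
    intro m p hpm
    rw [hT] at hpm
    obtain ⟨i, _, rfl⟩ := mem_image.mp hpm
    rfl
  have hTsub : ∀ m : Fin 10, T m ⊆ hp.PP.filter
      (fun p => (∃ i, p.2 = a i) ∧ hp.gam p.1 p.2 ∈ SixSet) := by
    intro m p hpm
    rw [hT] at hpm
    obtain ⟨i, hi, rfl⟩ := mem_image.mp hpm
    simp only [mem_filter, mem_univ, true_and] at hi
    exact mem_filter.mpr ⟨hp.mem_PP.mpr (hp.h0aa a b c h3 hi.1), ⟨i, rfl⟩, hi.2⟩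
  have hTcard : ∀ m : Fin 10, 2 * (m:ℕ) - 12 ≤ (T m).card := by
    intro m
    rw [hT, Finset.card_image_of_injOn
      (fun i _ j _ h => hp.a_inj a b c h3 (congrArg Prod.snd h))]
    exact hp.A_count a b c h3 hb hN10 m
  have hdTT : ∀ m m' : Fin 10, m ≠ m' → Disjoint (T m) (T m') := by
    intro m m' hne
    rw [Finset.disjoint_left]
    intro p h1 h2
    have f1 := hTfst m p h1
    have f2 := hTfst m' p h2
    rw [f1] at f2
    exact hne (hp.a_inj a b c h3 f2)
  have hdTE : ∀ m : Fin 10, 7 ≤ (m:ℕ) → Disjoint (T m) extra := by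
    intro m hm
    rw [Finset.disjoint_left]
    intro p h1 h2
    have := hfst p h2 m (hTfst m p h1)
    omega
  have hUsub : T 7 ∪ T 8 ∪ T 9 ∪ extra ⊆ hp.PP.filter
      (fun p => (∃ i, p.2 = a i) ∧ hp.gam p.1 p.2 ∈ SixSet) := by
    refine Finset.union_subset (Finset.union_subset (Finset.union_subset ?_ ?_) ?_) hsub
    exacts [hTsub 7, hTsub 8, hTsub 9]
  have hUcard : (T 7 ∪ T 8 ∪ T 9 ∪ extra).card
      = (T 7).card + (T 8).card + (T 9).card + extra.card := by
    rw [Finset.card_union_of_disjoint, Finset.card_union_of_disjoint,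
      Finset.card_union_of_disjoint]
    · exact hdTT 7 8 (by decide)
    · rw [Finset.disjoint_union_left]
      exact ⟨hdTT 7 9 (by decide), hdTT 8 9 (by decide)⟩
    · rw [Finset.disjoint_union_left, Finset.disjoint_union_left]
      exact ⟨⟨hdTE 7 (by decide), hdTE 8 (by decide)⟩, hdTE 9 (by decide)⟩
  have hle := Finset.card_le_card hUsub
  rw [hUcard] at hle
  have c7 := hTcard 7
  have c8 := hTcard 8
  have c9 := hTcard 9
  have v7 : ((7 : Fin 10) : ℕ) = 7 := rfl
  have v8 : ((8 : Fin 10) : ℕ) = 8 := rfl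
  have v9 : ((9 : Fin 10) : ℕ) = 9 := rfl
  rw [v7] at c7
  rw [v8] at c8
  rw [v9] at c9
  omega

lemma QC_ge (h3 : IsThreeDecompLabeling30 hp a b c) (hb : BLabelSpec hp b)
    (hN10 : hp.NLe 10 = 165) (extra : Finset (Fin 30 × Fin 30))
    (hsub : extra ⊆ hp.PP.filter (fun p => (∃ i, p.1 = c i) ∧ hp.gam p.1 p.2 ∈ SixSet))
    (hsnd : ∀ p ∈ extra, ∀ m : Fin 10, p.2 = c m → (m:ℕ) < 7) :
    12 + extra.card
      ≤ (hp.PP.filter (fun p => (∃ i, p.1 = c i) ∧ hp.gam p.1 p.2 ∈ SixSet)).card := by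
  classical
  set T : Fin 10 → Finset (Fin 30 × Fin 30) := fun m =>
    ((univ.filter (fun i : Fin 10 => (i:ℕ) < (m:ℕ) ∧ hp.gam (c i) (c m) ∈ SixSet)).image
      (fun i => (c i, c m))) with hT
  have hTsnd : ∀ m : Fin 10, ∀ p ∈ T m, p.2 = c m := by
    intro m p hpm
    rw [hT] at hpm
    obtain ⟨i, _, rfl⟩ := mem_image.mp hpm
    rfl
  have hTsub : ∀ m : Fin 10, T m ⊆ hp.PP.filter
      (fun p => (∃ i, p.1 = c i) ∧ hp.gam p.1 p.2 ∈ SixSet) := by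
    intro m p hpm
    rw [hT] at hpm
    obtain ⟨i, hi, rfl⟩ := mem_image.mp hpm
    simp only [mem_filter, mem_univ, true_and] at hi
    exact mem_filter.mpr ⟨hp.mem_PP.mpr (hp.h0cc a b c h3 hi.1), ⟨i, rfl⟩, hi.2⟩
  have hTcard : ∀ m : Fin 10, 2 * (m:ℕ) - 12 ≤ (T m).card := by
    intro m
    rw [hT, Finset.card_image_of_injOn
      (fun i _ j _ h => hp.c_inj a b c h3 (congrArg Prod.fst h))]
    exact hp.C_count a b c h3 hb hN10 m
  have hdTT : ∀ m m' : Fin 10, m ≠ m' → Disjoint (T m) (T m') := by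
    intro m m' hne
    rw [Finset.disjoint_left]
    intro p h1 h2
    have f1 := hTsnd m p h1
    have f2 := hTsnd m' p h2
    rw [f1] at f2
    exact hne (hp.c_inj a b c h3 f2)
  have hdTE : ∀ m : Fin 10, 7 ≤ (m:ℕ) → Disjoint (T m) extra := by
    intro m hm
    rw [Finset.disjoint_left]
    intro p h1 h2
    have := hsnd p h2 m (hTsnd m p h1)
    omega
  have hUsub : T 7 ∪ T 8 ∪ T 9 ∪ extra ⊆ hp.PP.filter
      (fun p => (∃ i, p.1 = c i) ∧ hp.gam p.1 p.2 ∈ SixSet) := by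
    refine Finset.union_subset (Finset.union_subset (Finset.union_subset ?_ ?_) ?_) hsub
    exacts [hTsub 7, hTsub 8, hTsub 9]
  have hUcard : (T 7 ∪ T 8 ∪ T 9 ∪ extra).card
      = (T 7).card + (T 8).card + (T 9).card + extra.card := by
    rw [Finset.card_union_of_disjoint, Finset.card_union_of_disjoint,
      Finset.card_union_of_disjoint]
    · exact hdTT 7 8 (by decide)
    · rw [Finset.disjoint_union_left]
      exact ⟨hdTT 7 9 (by decide), hdTT 8 9 (by decide)⟩
    · rw [Finset.disjoint_union_left, Finset.disjoint_union_left]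
      exact ⟨⟨hdTE 7 (by decide), hdTE 8 (by decide)⟩, hdTE 9 (by decide)⟩
  have hle := Finset.card_le_card hUsub
  rw [hUcard] at hle
  have c7 := hTcard 7
  have c8 := hTcard 8
  have c9 := hTcard 9
  have v7 : ((7 : Fin 10) : ℕ) = 7 := rfl
  have v8 : ((8 : Fin 10) : ℕ) = 8 := rfl
  have v9 : ((9 : Fin 10) : ℕ) = 9 := rfl
  rw [v7] at c7
  rw [v8] at c8
  rw [v9] at c9
  omega

lemma QB_ge (h3 : IsThreeDecompLabeling30 hp a b c) (hb : BLabelSpec hp b)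
    (hN10 : hp.NLe 10 = 165) (extra : Finset (Fin 30 × Fin 30))
    (hsub : extra ⊆ hp.PP.filter (fun p => (∃ j, p.1 = b j) ∧ hp.gam p.1 p.2 ∈ SixSet
      ∧ hp.st p.1 p.2 < hp.tstar b c))
    (hsnd : ∀ p ∈ extra, ∀ m : Fin 10, p.2 = b m → (m:ℕ) < 7) :
    12 + extra.card
      ≤ (hp.PP.filter (fun p => (∃ j, p.1 = b j) ∧ hp.gam p.1 p.2 ∈ SixSet
          ∧ hp.st p.1 p.2 < hp.tstar b c)).card := by
  classical
  set T : Fin 10 → Finset (Fin 30 × Fin 30) := fun m =>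
    ((univ.filter (fun i : Fin 10 => (i:ℕ) < (m:ℕ) ∧ hp.gam (b i) (b m) ∈ SixSet)).image
      (fun i => (b i, b m))) with hT
  have hTsnd : ∀ m : Fin 10, ∀ p ∈ T m, p.2 = b m := by
    intro m p hpm
    rw [hT] at hpm
    obtain ⟨i, _, rfl⟩ := mem_image.mp hpm
    rfl
  have hTsub : ∀ m : Fin 10, T m ⊆ hp.PP.filter
      (fun p => (∃ j, p.1 = b j) ∧ hp.gam p.1 p.2 ∈ SixSet
        ∧ hp.st p.1 p.2 < hp.tstar b c) := by
    intro m p hpm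
    rw [hT] at hpm
    obtain ⟨i, hi, rfl⟩ := mem_image.mp hpm
    simp only [mem_filter, mem_univ, true_and] at hi
    exact mem_filter.mpr ⟨hp.mem_PP.mpr (hp.h0bb a b c h3 hi.1), ⟨i, rfl⟩, hi.2,
      hp.bb_lt_tstar a b c h3 hb hi.1⟩
  have hTcard : ∀ m : Fin 10, 2 * (m:ℕ) - 12 ≤ (T m).card := by
    intro m
    rw [hT, Finset.card_image_of_injOn
      (fun i _ j _ h => hp.b_inj a b c h3 (congrArg Prod.fst h))]
    exact hp.B_count a b c h3 hb hN10 m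
  have hdTT : ∀ m m' : Fin 10, m ≠ m' → Disjoint (T m) (T m') := by
    intro m m' hne
    rw [Finset.disjoint_left]
    intro p h1 h2
    have f1 := hTsnd m p h1
    have f2 := hTsnd m' p h2
    rw [f1] at f2
    exact hne (hp.b_inj a b c h3 f2)
  have hdTE : ∀ m : Fin 10, 7 ≤ (m:ℕ) → Disjoint (T m) extra := by
    intro m hm
    rw [Finset.disjoint_left]
    intro p h1 h2
    have := hsnd p h2 m (hTsnd m p h1)
    omega
  have hUsub : T 7 ∪ T 8 ∪ T 9 ∪ extra ⊆ hp.PP.filter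
      (fun p => (∃ j, p.1 = b j) ∧ hp.gam p.1 p.2 ∈ SixSet
        ∧ hp.st p.1 p.2 < hp.tstar b c) := by
    refine Finset.union_subset (Finset.union_subset (Finset.union_subset ?_ ?_) ?_) hsub
    exacts [hTsub 7, hTsub 8, hTsub 9]
  have hUcard : (T 7 ∪ T 8 ∪ T 9 ∪ extra).card
      = (T 7).card + (T 8).card + (T 9).card + extra.card := by
    rw [Finset.card_union_of_disjoint, Finset.card_union_of_disjoint,
      Finset.card_union_of_disjoint]
    · exact hdTT 7 8 (by decide)
    · rw [Finset.disjoint_union_left]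
      exact ⟨hdTT 7 9 (by decide), hdTT 8 9 (by decide)⟩
    · rw [Finset.disjoint_union_left, Finset.disjoint_union_left]
      exact ⟨⟨hdTE 7 (by decide), hdTE 8 (by decide)⟩, hdTE 9 (by decide)⟩
  have hle := Finset.card_le_card hUsub
  rw [hUcard] at hle
  have c7 := hTcard 7
  have c8 := hTcard 8
  have c9 := hTcard 9
  have v7 : ((7 : Fin 10) : ℕ) = 7 := rfl
  have v8 : ((8 : Fin 10) : ℕ) = 8 := rfl
  have v9 : ((9 : Fin 10) : ℕ) = 9 := rfl
  rw [v7] at c7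
  rw [v8] at c8
  rw [v9] at c9
  omega

end HalfPeriod
/-- Every monochromatic transposition of `Π` that is `11`-, `12`-
or `13`-critical involves at least one of `a_10, a_9, a_8, b_10, b_9, b_8, c_10, c_9, c_8`
(elements with 1-indexed subscript `≥ 8`, i.e. `Fin`-index `≥ 7`). -/
theorem mono_critical_involves_high (hp : HalfPeriod 30) (a b c : Fin 10 → Fin 30)
    (h3 : IsThreeDecompLabeling30 hp a b c)
    (hN1 : ∀ k : ℕ, 1 ≤ k → k ≤ 10 → hp.NLe k = 3 * Nat.choose (k + 1) 2)
    (hN2 : ∀ k : ℕ, 11 ≤ k → k ≤ 13 →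
      hp.NLe k = 3 * Nat.choose (k + 1) 2 + 3 * Nat.choose (k - 9) 2)
    (hb : BLabelSpec hp b) :
    ∀ t, t < HalfPeriod.steps 30 → ∀ x y : Fin 30, hp.SwapsAt t x y →
      SameClass a b c x y →
      (hp.Critical t 11 ∨ hp.Critical t 12 ∨ hp.Critical t 13) →
      ∃ i : Fin 10, 7 ≤ (i : ℕ) ∧
        (x = a i ∨ x = b i ∨ x = c i ∨ y = a i ∨ y = b i ∨ y = c i) := by

  classical
  intro t ht x y hswap hclass hcrit
  by_contra hcon
  push_neg at hcon
  have hN10 : hp.NLe 10 = 165 := by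
    have h := hN1 10 (by omega) (by omega)
    rw [h]; decide
  have hN13 : hp.NLe 13 = 291 := by
    have h := hN2 13 (by omega) (by omega)
    rw [h]; decide
  rw [HalfPeriod.steps_eq] at ht
  obtain ⟨p, hpp, hpf⟩ := hp.exists_flip_pair ht
  have h0 := hp.mem_PP.mp hpp
  obtain ⟨e1, e2, e3⟩ := hp.flip_swap ht hpf
  have hst : t = hp.st p.1 p.2 := hp.flip_eq_st h0 ht hpf
  obtain ⟨hxy, hmx, hmy⟩ := hswap
  have hmem : ∀ z : Fin 30, hp.Moved t z → z = p.1 ∨ z = p.2 := by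
    intro z hz
    obtain ⟨x', y', g1, g2, g3, g4⟩ := hp.step' ht
    have hp1 : p.1 = x' := hp.up_eq ht e2 g2
    have hp2 : p.2 = y' := hp.down_eq ht (by omega) (by omega)
    by_cases hzx : z = x'
    · left; rw [hp1]; exact hzx
    · by_cases hzy : z = y'
      · right; rw [hp2]; exact hzy
      · exact absurd (g4 z hzx hzy) hz
  have hsix : hp.gam p.1 p.2 ∈ HalfPeriod.SixSet := by
    have hgg : ∀ i : ℕ, hp.GateAt t i → i = hp.gam p.1 p.2 := by
      intro i hgate
      rw [hst] at hgate
      exact (hp.gateAt_iff h0 i).mp hgate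
    simp only [HalfPeriod.SixSet, Finset.mem_insert, Finset.mem_singleton]
    rcases hcrit with h | h | h <;> rcases h with h | h <;>
      · have := hgg _ h
        omega
  have hpair : (p.1 = x ∧ p.2 = y) ∨ (p.1 = y ∧ p.2 = x) := by
    rcases hmem x hmx with h1 | h1 <;> rcases hmem y hmy with h2 | h2
    · exact absurd (h1.trans h2.symm) hxy
    · exact Or.inl ⟨h1.symm, h2.symm⟩
    · exact Or.inr ⟨h2.symm, h1.symm⟩
    · exact absurd (h1.trans h2.symm) hxy
  have h36 := hp.master36 a b c h3 hb hN10 hN13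
  rcases hclass with ⟨i, j, hxi, hyj⟩ | ⟨i, j, hxi, hyj⟩ | ⟨i, j, hxi, hyj⟩
  · -- class A
    have hi7 : (i:ℕ) < 7 := by
      by_contra hni
      push_neg at hni
      exact (hcon i hni).1 hxi
    have hj7 : (j:ℕ) < 7 := by
      by_contra hnj
      push_neg at hnj
      exact (hcon j hnj).2.2.2.1 hyj
    have hpcomp : ∃ i1 i2 : Fin 10, p.1 = a i1 ∧ p.2 = a i2 ∧ (i1:ℕ) < 7 ∧ (i2:ℕ) < 7 := by
      rcases hpair with ⟨h1, h2⟩ | ⟨h1, h2⟩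
      · exact ⟨i, j, by rw [h1, hxi], by rw [h2, hyj], hi7, hj7⟩
      · exact ⟨j, i, by rw [h1, hyj], by rw [h2, hxi], hj7, hi7⟩
    obtain ⟨i1, i2, hp1, hp2, h17, h27⟩ := hpcomp
    have hQA := hp.QA_ge a b c h3 hb hN10 {p} ?_ ?_
    rotate_left
    · rw [Finset.singleton_subset_iff]
      exact Finset.mem_filter.mpr ⟨hpp, ⟨i2, hp2⟩, hsix⟩
    · intro q hq m hm
      rw [Finset.mem_singleton] at hq
      subst hq
      rw [hp1] at hm
      rw [hp.a_inj a b c h3 hm.symm]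
      exact h17
    have hQC := hp.QC_ge a b c h3 hb hN10 ∅ (Finset.empty_subset _)
      (by intro q hq; simp at hq)
    have hQB := hp.QB_ge a b c h3 hb hN10 ∅ (Finset.empty_subset _)
      (by intro q hq; simp at hq)
    rw [Finset.card_singleton] at hQA
    rw [Finset.card_empty] at hQC hQB
    omega
  · -- class B
    have hi7 : (i:ℕ) < 7 := by
      by_contra hni
      push_neg at hni
      exact (hcon i hni).2.1 hxi
    have hj7 : (j:ℕ) < 7 := by
      by_contra hnj
      push_neg at hnj
      exact (hcon j hnj).2.2.2.2.1 hyj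
    have hpcomp : ∃ i1 i2 : Fin 10, p.1 = b i1 ∧ p.2 = b i2 ∧ (i1:ℕ) < 7 ∧ (i2:ℕ) < 7 := by
      rcases hpair with ⟨h1, h2⟩ | ⟨h1, h2⟩
      · exact ⟨i, j, by rw [h1, hxi], by rw [h2, hyj], hi7, hj7⟩
      · exact ⟨j, i, by rw [h1, hyj], by rw [h2, hxi], hj7, hi7⟩
    obtain ⟨i1, i2, hp1, hp2, h17, h27⟩ := hpcomp
    have hii : (i1:ℕ) < (i2:ℕ) := by
      have h0' := h0
      rw [hp1, hp2, h3.2.2.1 i1, h3.2.2.1 i2] at h0'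
      omega
    have hstlt : hp.st p.1 p.2 < hp.tstar b c := by
      rw [hp1, hp2]
      exact hp.bb_lt_tstar a b c h3 hb hii
    have hQB := hp.QB_ge a b c h3 hb hN10 {p} ?_ ?_
    rotate_left
    · rw [Finset.singleton_subset_iff]
      exact Finset.mem_filter.mpr ⟨hpp, ⟨i1, hp1⟩, hsix, hstlt⟩
    · intro q hq m hm
      rw [Finset.mem_singleton] at hq
      subst hq
      rw [hp2] at hm
      rw [hp.b_inj a b c h3 hm.symm]
      exact h27
    have hQC := hp.QC_ge a b c h3 hb hN10 ∅ (Finset.empty_subset _)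
      (by intro q hq; simp at hq)
    have hQA := hp.QA_ge a b c h3 hb hN10 ∅ (Finset.empty_subset _)
      (by intro q hq; simp at hq)
    rw [Finset.card_singleton] at hQB
    rw [Finset.card_empty] at hQC hQA
    omega
  · -- class C
    have hi7 : (i:ℕ) < 7 := by
      by_contra hni
      push_neg at hni
      exact (hcon i hni).2.2.1 hxi
    have hj7 : (j:ℕ) < 7 := by
      by_contra hnj
      push_neg at hnj
      exact (hcon j hnj).2.2.2.2.2 hyj
    have hpcomp : ∃ i1 i2 : Fin 10, p.1 = c i1 ∧ p.2 = c i2 ∧ (i1:ℕ) < 7 ∧ (i2:ℕ) < 7 := by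
      rcases hpair with ⟨h1, h2⟩ | ⟨h1, h2⟩
      · exact ⟨i, j, by rw [h1, hxi], by rw [h2, hyj], hi7, hj7⟩
      · exact ⟨j, i, by rw [h1, hyj], by rw [h2, hxi], hj7, hi7⟩
    obtain ⟨i1, i2, hp1, hp2, h17, h27⟩ := hpcomp
    have hQC := hp.QC_ge a b c h3 hb hN10 {p} ?_ ?_
    rotate_left
    · rw [Finset.singleton_subset_iff]
      exact Finset.mem_filter.mpr ⟨hpp, ⟨i1, hp1⟩, hsix⟩
    · intro q hq m hm
      rw [Finset.mem_singleton] at hq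
      subst hq
      rw [hp2] at hm
      rw [hp.c_inj a b c h3 hm.symm]
      exact h27
    have hQA := hp.QA_ge a b c h3 hb hN10 ∅ (Finset.empty_subset _)
      (by intro q hq; simp at hq)
    have hQB := hp.QB_ge a b c h3 hb hN10 ∅ (Finset.empty_subset _)
      (by intro q hq; simp at hq)
    rw [Finset.card_singleton] at hQC
    rw [Finset.card_empty] at hQA hQB
    omega
end

section
/- Let π_{a_10} be the arrangement of Π immediately after the swap in which a_10 enters the 13-center. If for some 1 ≤ i ≤ 5 and some 1 ≤ l ≤ 3 the element a_i is at position 10 + l or at position 21 − l in π_{a_10}, then hal(a_i) ≤ l. -/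
/-- Position `p` lies in the `k`-center (positions `k+1, …, 30-k`) of a `30`-half-period. -/
def InCenter (k p : ℕ) : Prop := k + 1 ≤ p ∧ p ≤ 30 - k

/-- Step `t` is the (first) swap in which element `x` enters the `k`-center. -/
def EntersCenterAt (hp : HalfPeriod 30) (k : ℕ) (x : Fin 30) (t : ℕ) : Prop :=
  t < HalfPeriod.steps 30 ∧ InCenter k (hp.pos (t + 1) x) ∧ ¬ InCenter k (hp.pos t x) ∧
    ∀ s < t, ¬ (InCenter k (hp.pos (s + 1) x) ∧ ¬ InCenter k (hp.pos s x))

/-- Step `t` is the (last) swap in which element `x` leaves the `k`-center. -/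
def LeavesCenterAt (hp : HalfPeriod 30) (k : ℕ) (x : Fin 30) (t : ℕ) : Prop :=
  t < HalfPeriod.steps 30 ∧ InCenter k (hp.pos t x) ∧ ¬ InCenter k (hp.pos (t + 1) x) ∧
    ∀ s, t < s → s < HalfPeriod.steps 30 →
      ¬ (InCenter k (hp.pos s x) ∧ ¬ InCenter k (hp.pos (s + 1) x))
/-- `hal(x_{j+1})`: the number of indices `i < j` such that the transposition between
`x j` and `x i` occurs in the 15th gate (swaps positions `15` and `16`). -/
noncomputable def halOf (hp : HalfPeriod 30) (x : Fin 10 → Fin 30) (j : Fin 10) : ℕ :=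
  {i : Fin 10 | i < j ∧ ∃ t, t < HalfPeriod.steps 30 ∧ hp.GateAt t 15 ∧
    hp.SwapsAt t (x j) (x i)}.ncard

/-- `N_15^{xx}`: the number of 15-transpositions between two elements of the class `x`. -/
noncomputable def N15Mono (hp : HalfPeriod 30) (x : Fin 10 → Fin 30) : ℕ :=
  {t : ℕ | t < HalfPeriod.steps 30 ∧ hp.GateAt t 15 ∧ ∃ i j, hp.SwapsAt t (x i) (x j)}.ncard

/-! ### Auxiliary development -/

namespace HPAux

open Finset

variable {hp : HalfPeriod 30}

lemma hsteps : HalfPeriod.steps 30 = 435 := by norm_num [HalfPeriod.steps]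

lemma le_steps {s : ℕ} (h : s ≤ 435) : s ≤ 30 * (30 - 1) / 2 := by omega

lemma pos_ge {s : ℕ} (hs : s ≤ 435) (x : Fin 30) : 1 ≤ hp.pos s x :=
  (hp.pos_mem s (le_steps hs) x).1

lemma pos_le {s : ℕ} (hs : s ≤ 435) (x : Fin 30) : hp.pos s x ≤ 30 :=
  (hp.pos_mem s (le_steps hs) x).2

lemma pos_ne {s : ℕ} (hs : s ≤ 435) {x y : Fin 30} (h : x ≠ y) :
    hp.pos s x ≠ hp.pos s y := fun he => h (hp.pos_inj s (le_steps hs) he)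

lemma step_ex {s : ℕ} (hs : s < 435) : ∃ x y : Fin 30,
    hp.pos s y = hp.pos s x + 1 ∧ hp.pos (s + 1) x = hp.pos s x + 1 ∧
    hp.pos (s + 1) y = hp.pos s x ∧
    ∀ z, z ≠ x → z ≠ y → hp.pos (s + 1) z = hp.pos s z :=
  hp.step s (by omega)

lemma walk {s : ℕ} (hs : s < 435) (z : Fin 30) :
    hp.pos (s + 1) z = hp.pos s z ∨ hp.pos (s + 1) z = hp.pos s z + 1 ∨
    hp.pos (s + 1) z + 1 = hp.pos s z := by
  obtain ⟨x, y, h1, h2, h3, h4⟩ := step_ex (hp := hp) hs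
  by_cases hzx : z = x
  · subst hzx; right; left; exact h2
  by_cases hzy : z = y
  · subst hzy; right; right; omega
  · left; exact h4 z hzx hzy

/-- If `z` moves down at step `s`, then `z` is the down-mover; we get the partner,
the `SwapsAt` fact and the gate. -/
lemma down_swap {s : ℕ} (hs : s < 435) {z : Fin 30}
    (hz : hp.pos (s + 1) z + 1 = hp.pos s z) :
    ∃ w : Fin 30, hp.pos s w + 1 = hp.pos s z ∧ hp.pos (s + 1) w = hp.pos s z ∧
      hp.SwapsAt s z w ∧ hp.GateAt s (hp.pos (s + 1) z) := by
  obtain ⟨x, y, h1, h2, h3, h4⟩ := step_ex (hp := hp) hs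
  have hzy : z = y := by
    by_cases hzx : z = x
    · subst hzx; omega
    · by_cases hzy : z = y
      · exact hzy
      · exact absurd (h4 z hzx hzy) (by omega)
  subst hzy
  have hxy : x ≠ z := by intro h; subst h; omega
  refine ⟨x, by omega, by omega, ⟨Ne.symm hxy, by unfold HalfPeriod.Moved; omega,
    by unfold HalfPeriod.Moved; omega⟩, ?_⟩
  exact ⟨x, z, by omega, by omega, by omega, by omega⟩

/-- If `z` moves up at step `s`, the corresponding facts. -/
lemma up_swap {s : ℕ} (hs : s < 435) {z : Fin 30}
    (hz : hp.pos (s + 1) z = hp.pos s z + 1) :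
    ∃ w : Fin 30, hp.pos s w = hp.pos s z + 1 ∧ hp.pos (s + 1) w = hp.pos s z ∧
      hp.SwapsAt s z w ∧ hp.GateAt s (hp.pos s z) := by
  obtain ⟨x, y, h1, h2, h3, h4⟩ := step_ex (hp := hp) hs
  have hzx : z = x := by
    by_cases hzx : z = x
    · exact hzx
    · by_cases hzy : z = y
      · subst hzy; omega
      · exact absurd (h4 z hzx hzy) (by omega)
  subst hzx
  have hxy : z ≠ y := by intro h; subst h; omega
  refine ⟨y, by omega, by omega, ⟨hxy, by unfold HalfPeriod.Moved; omega,
    by unfold HalfPeriod.Moved; omega⟩, ?_⟩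
  exact ⟨z, y, by omega, by omega, by omega, by omega⟩

lemma down_unique {s : ℕ} (hs : s < 435) {z z' : Fin 30}
    (hz : hp.pos (s + 1) z < hp.pos s z) (hz' : hp.pos (s + 1) z' < hp.pos s z') :
    z = z' := by
  obtain ⟨x, y, h1, h2, h3, h4⟩ := step_ex (hp := hp) hs
  have hy : ∀ w : Fin 30, hp.pos (s + 1) w < hp.pos s w → w = y := by
    intro w hw
    by_cases hwx : w = x
    · subst hwx; omega
    · by_cases hwy : w = y
      · exact hwy
      · exact absurd (h4 w hwx hwy) (by omega)
  rw [hy z hz, hy z' hz']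

lemma up_unique {s : ℕ} (hs : s < 435) {z z' : Fin 30}
    (hz : hp.pos s z < hp.pos (s + 1) z) (hz' : hp.pos s z' < hp.pos (s + 1) z') :
    z = z' := by
  obtain ⟨x, y, h1, h2, h3, h4⟩ := step_ex (hp := hp) hs
  have hy : ∀ w : Fin 30, hp.pos s w < hp.pos (s + 1) w → w = x := by
    intro w hw
    by_cases hwx : w = x
    · exact hwx
    · by_cases hwy : w = y
      · subst hwy; omega
      · exact absurd (h4 w hwx hwy) (by omega)
  rw [hy z hz, hy z' hz']

lemma gate_unique {s : ℕ} (hs : s < 435) {g g' : ℕ}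
    (h : hp.GateAt s g) (h' : hp.GateAt s g') : g = g' := by
  obtain ⟨x, y, hx, hy, hx', hy'⟩ := h
  obtain ⟨x2, y2, hx2, hy2, hx2', hy2'⟩ := h'
  have : x = x2 := up_unique (hp := hp) hs (by omega) (by omega)
  subst this; omega

/-- two swaps at the same step involve the same unordered pair -/
lemma swapsAt_pair_eq {s : ℕ} (hs : s < 435) {x y x' y' : Fin 30}
    (h : hp.SwapsAt s x y) (h' : hp.SwapsAt s x' y') :
    (x = x' ∧ y = y') ∨ (x = y' ∧ y = x') := by
  obtain ⟨hxy, hmx, hmy⟩ := h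
  obtain ⟨hxy', hmx', hmy'⟩ := h'
  obtain ⟨x0, y0, h1, h2, h3, h4⟩ := step_ex (hp := hp) hs
  have key : ∀ w : Fin 30, hp.Moved s w → w = x0 ∨ w = y0 := by
    intro w hw
    by_cases hwx : w = x0
    · exact Or.inl hwx
    · by_cases hwy : w = y0
      · exact Or.inr hwy
      · exact absurd (h4 w hwx hwy) hw
  have hx0y0 : x0 ≠ y0 := by intro h; subst h; omega
  rcases key x hmx with rfl | rfl <;> rcases key y hmy with rfl | rfl <;>
    rcases key x' hmx' with rfl | rfl <;> rcases key y' hmy' with rfl | rfl <;>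
    tauto

lemma moved_of_swapsAt_left {s : ℕ} {x y : Fin 30} (h : hp.SwapsAt s x y) :
    hp.Moved s x := h.2.1

lemma swapsAt_symm {s : ℕ} {x y : Fin 30} (h : hp.SwapsAt s x y) : hp.SwapsAt s y x :=
  ⟨h.1.symm, h.2.2, h.2.1⟩

/-- Discrete intermediate value: upward crossing. -/
lemma cross_up {z : Fin 30} {g : ℕ} : ∀ {s' s : ℕ}, s ≤ s' → s' ≤ 435 →
    hp.pos s z ≤ g → g < hp.pos s' z →
    ∃ u, s ≤ u ∧ u < s' ∧ hp.pos u z = g ∧ hp.pos (u + 1) z = g + 1 := by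
  intro s'
  induction s' with
  | zero =>
    intro s h1 h2 h3 h4
    have hs0 : s = 0 := by omega
    subst hs0; omega
  | succ k ih =>
    intro s hss hk h1 h2
    rcases Nat.lt_or_ge s (k + 1) with hsk | hsk
    · have hsk' : s ≤ k := by omega
      have hk435 : k < 435 := by omega
      by_cases hc : hp.pos k z ≤ g
      · have hw := walk (hp := hp) hk435 z
        exact ⟨k, hsk', by omega, by omega, by omega⟩
      · obtain ⟨u, hu1, hu2, hu3, hu4⟩ := ih hsk' (by omega) h1 (by omega)
        exact ⟨u, hu1, by omega, hu3, hu4⟩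
    · have : s = k + 1 := by omega
      subst this; omega

/-- Discrete intermediate value: downward crossing. -/
lemma cross_down {z : Fin 30} {g : ℕ} : ∀ {s' s : ℕ}, s ≤ s' → s' ≤ 435 →
    g + 1 ≤ hp.pos s z → hp.pos s' z ≤ g →
    ∃ u, s ≤ u ∧ u < s' ∧ hp.pos u z = g + 1 ∧ hp.pos (u + 1) z = g := by
  intro s'
  induction s' with
  | zero =>
    intro s h1 h2 h3 h4
    have hs0 : s = 0 := by omega
    subst hs0; omega
  | succ k ih =>
    intro s hss hk h1 h2
    rcases Nat.lt_or_ge s (k + 1) with hsk | hsk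
    · have hsk' : s ≤ k := by omega
      have hk435 : k < 435 := by omega
      by_cases hc : g + 1 ≤ hp.pos k z
      · have hw := walk (hp := hp) hk435 z
        exact ⟨k, hsk', by omega, by omega, by omega⟩
      · obtain ⟨u, hu1, hu2, hu3, hu4⟩ := ih hsk' (by omega) h1 (by omega)
        exact ⟨u, hu1, by omega, hu3, hu4⟩
    · have : s = k + 1 := by omega
      subst this; omega

/-- Order crossing: if `x` is left of `y` at `s` and right at `s'`, they swap in between
with explicit positions. -/
lemma cross_pair {x y : Fin 30} (hxy : x ≠ y) : ∀ {s' s : ℕ}, s ≤ s' → s' ≤ 435 →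
    hp.pos s x < hp.pos s y → hp.pos s' y < hp.pos s' x →
    ∃ u, s ≤ u ∧ u < s' ∧ hp.pos u y = hp.pos u x + 1 ∧
      hp.pos (u + 1) x = hp.pos u y ∧ hp.pos (u + 1) y = hp.pos u x := by
  intro s'
  induction s' with
  | zero =>
    intro s h1 h2 h3 h4
    have hs0 : s = 0 := by omega
    subst hs0; omega
  | succ k ih =>
    intro s hss hk h1 h2
    rcases Nat.lt_or_ge s (k + 1) with hsk | hsk
    · have hsk' : s ≤ k := by omega
      have hk435 : k < 435 := by omega
      by_cases hc : hp.pos k x < hp.pos k y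
      · have hwx := walk (hp := hp) hk435 x
        have hwy := walk (hp := hp) hk435 y
        have hne := pos_ne (hp := hp) (show k + 1 ≤ 435 by omega) hxy
        exact ⟨k, hsk', by omega, by omega, by omega, by omega⟩
      · have hne := pos_ne (hp := hp) (show k ≤ 435 by omega) hxy
        obtain ⟨u, hu1, hu2, hu3⟩ := ih hsk' (by omega) h1 (by omega)
        exact ⟨u, hu1, by omega, hu3.1, hu3.2.1, hu3.2.2⟩
    · have : s = k + 1 := by omega
      subst this; omega

lemma swapsAt_of_cross {u : ℕ} {x y : Fin 30} (hxy : x ≠ y)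
    (h1 : hp.pos u y = hp.pos u x + 1) (h2 : hp.pos (u + 1) x = hp.pos u y)
    (h3 : hp.pos (u + 1) y = hp.pos u x) : hp.SwapsAt u x y :=
  ⟨hxy, by unfold HalfPeriod.Moved; omega, by unfold HalfPeriod.Moved; omega⟩

lemma swap_exists {x y : Fin 30} (hxy : x ≠ y) : ∃ s, s < 435 ∧ hp.SwapsAt s x y := by
  have hrev : ∀ w : Fin 30, hp.pos 435 w = 31 - hp.pos 0 w := by
    intro w; have := hp.reverse w
    have h30 : 30 * (30 - 1) / 2 = 435 := by norm_num
    rwa [h30] at this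
  have h0 := pos_ge (hp := hp) (show (0:ℕ) ≤ 435 by omega)
  have h0' := pos_le (hp := hp) (show (0:ℕ) ≤ 435 by omega)
  have hne := pos_ne (hp := hp) (show (0:ℕ) ≤ 435 by omega) hxy
  rcases Nat.lt_or_ge (hp.pos 0 x) (hp.pos 0 y) with h | h
  · obtain ⟨u, _, hu2, hu3, hu4, hu5⟩ := cross_pair (hp := hp) hxy (Nat.zero_le 435)
      le_rfl h (by rw [hrev x, hrev y]; have := h0 x; have := h0' y; omega)
    exact ⟨u, by omega, swapsAt_of_cross hxy hu3 hu4 hu5⟩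
  · have h' : hp.pos 0 y < hp.pos 0 x := by omega
    obtain ⟨u, _, hu2, hu3, hu4, hu5⟩ := cross_pair (hp := hp) (Ne.symm hxy)
      (Nat.zero_le 435) le_rfl h' (by rw [hrev x, hrev y]; have := h0 y; have := h0' x; omega)
    exact ⟨u, by omega, swapsAt_symm (swapsAt_of_cross (Ne.symm hxy) hu3 hu4 hu5)⟩

end HPAux

namespace HPAux

open Finset

variable {hp : HalfPeriod 30}

/-- the set of ordered (by index) pairs -/
private def pairsF : Finset (Fin 30 × Fin 30) :=
  Finset.univ.filter (fun p => p.1 < p.2)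

set_option maxRecDepth 10000 in
private lemma pairsF_card : pairsF.card = 435 := by decide

open Classical in
private noncomputable def swF (hp : HalfPeriod 30) : Fin 30 × Fin 30 → ℕ := fun p =>
  if h : p.1 ≠ p.2 then (swap_exists (hp := hp) h).choose else 0

private lemma swF_spec {p : Fin 30 × Fin 30} (h : p.1 ≠ p.2) :
    swF hp p < 435 ∧ hp.SwapsAt (swF hp p) p.1 p.2 := by
  unfold swF
  rw [dif_pos h]
  exact (swap_exists (hp := hp) h).choose_spec

/-- Every pair of distinct elements swaps at exactly one step. -/
lemma swap_unique {x y : Fin 30} (hxy : x ≠ y) {s s' : ℕ} (hs : s < 435) (hs' : s' < 435)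
    (h : hp.SwapsAt s x y) (h' : hp.SwapsAt s' x y) : s = s' := by
  classical
  -- swF is injective on pairsF
  have hmem : ∀ p ∈ pairsF, swF hp p ∈ Finset.range 435 := by
    intro p hpmem
    have hne : p.1 ≠ p.2 := by
      have := Finset.mem_filter.mp hpmem
      exact Fin.ne_of_lt this.2
    exact Finset.mem_range.mpr (swF_spec hne).1
  have hinj : ∀ p₁ p₂, p₁ ∈ pairsF → p₂ ∈ pairsF → swF hp p₁ = swF hp p₂ → p₁ = p₂ := by
    intro p₁ p₂ h1 h2 heq
    have hne1 : p₁.1 ≠ p₁.2 := Fin.ne_of_lt (Finset.mem_filter.mp h1).2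
    have hne2 : p₂.1 ≠ p₂.2 := Fin.ne_of_lt (Finset.mem_filter.mp h2).2
    have hs1 := swF_spec (hp := hp) hne1
    have hs2 := swF_spec (hp := hp) hne2
    rw [heq] at hs1
    rcases swapsAt_pair_eq hs2.1 hs1.2 hs2.2 with ⟨he1, he2⟩ | ⟨he1, he2⟩
    · exact Prod.ext he1 he2
    · exfalso
      have hl1 : p₁.1 < p₁.2 := (Finset.mem_filter.mp h1).2
      have hl2 : p₂.1 < p₂.2 := (Finset.mem_filter.mp h2).2
      rw [← he1, ← he2] at hl2
      exact absurd hl2 (not_lt.mpr (le_of_lt hl1))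
  have hsurj := Finset.surj_on_of_inj_on_of_card_le (s := pairsF) (t := Finset.range 435)
    (fun p _ => swF hp p) (fun p hp' => hmem p hp') (fun p₁ p₂ h1 h2 he => hinj p₁ p₂ h1 h2 he)
    (by rw [pairsF_card, Finset.card_range])
  -- the canonical ordered pair for x,y
  have key : ∀ u, u < 435 → hp.SwapsAt u x y → swF hp (if x < y then (x, y) else (y, x)) = u := by
    intro u hu hswu
    obtain ⟨q, hq, hqe⟩ := hsurj u (Finset.mem_range.mpr hu)
    have hneq : q.1 ≠ q.2 := Fin.ne_of_lt (Finset.mem_filter.mp hq).2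
    have hspec := swF_spec (hp := hp) hneq
    have hqe' : u = swF hp q := hqe
    rw [hqe'] at hswu ⊢ 
    -- movers at u are both {q.1,q.2} and {x,y}
    have hpair := swapsAt_pair_eq hspec.1 hspec.2 hswu
    have hlt : q.1 < q.2 := (Finset.mem_filter.mp hq).2
    rcases hpair with ⟨he1, he2⟩ | ⟨he1, he2⟩
    · subst he1; subst he2
      rw [if_pos hlt]
    · subst he1; subst he2
      rw [if_neg (not_lt.mpr (le_of_lt hlt))]
  have k1 := key s hs h
  have k2 := key s' hs' h'
  omega

/-- Order is stable on intervals with no swap of the pair. -/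
lemma order_stable {x y : Fin 30} (hxy : x ≠ y) : ∀ {s₂ s₁ : ℕ}, s₁ ≤ s₂ → s₂ ≤ 435 →
    (∀ u, s₁ ≤ u → u < s₂ → ¬ hp.SwapsAt u x y) → hp.pos s₁ x < hp.pos s₁ y →
    hp.pos s₂ x < hp.pos s₂ y := by
  intro s₂
  induction s₂ with
  | zero =>
    intro s₁ h1 _ _ h4
    have : s₁ = 0 := by omega
    subst this; exact h4
  | succ k ih =>
    intro s₁ h1 h2 h3 h4
    rcases Nat.lt_or_ge s₁ (k + 1) with hsk | hsk
    · have hk : hp.pos k x < hp.pos k y :=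
        ih (by omega) (by omega) (fun u hu1 hu2 => h3 u hu1 (by omega)) h4
      by_contra hcon
      have hk435 : k < 435 := by omega
      have hne := pos_ne (hp := hp) (show k + 1 ≤ 435 by omega) hxy
      have hflip : hp.pos (k + 1) y < hp.pos (k + 1) x := by omega
      obtain ⟨u, hu1, hu2, hu3, hu4, hu5⟩ :=
        cross_pair (hp := hp) hxy (show k ≤ k + 1 by omega) (by omega) hk hflip
      have : u = k := by omega
      subst this
      exact h3 u (by omega) (by omega) (swapsAt_of_cross hxy hu3 hu4 hu5)
    · have : s₁ = k + 1 := by omega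
      subst this; exact h4

/-- Before their unique swap, a pair is in its initial order. -/
lemma before_swap {x y : Fin 30} (hxy : x ≠ y) {σ : ℕ} (hσ : σ < 435)
    (hsw : hp.SwapsAt σ x y) (h0 : hp.pos 0 x < hp.pos 0 y) :
    ∀ s, s ≤ σ → hp.pos s x < hp.pos s y := by
  intro s hs
  refine order_stable hxy (Nat.zero_le s) (by omega) ?_ h0
  intro u hu1 hu2 hcon
  exact absurd (swap_unique hxy (by omega) hσ hcon hsw) (by omega)

/-- positions at the swap, given the pre-swap order -/
lemma swap_pos {x y : Fin 30} {σ : ℕ} (hσ : σ < 435) (hsw : hp.SwapsAt σ x y)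
    (ho : hp.pos σ x < hp.pos σ y) :
    hp.pos σ y = hp.pos σ x + 1 ∧ hp.pos (σ + 1) x = hp.pos σ y ∧
      hp.pos (σ + 1) y = hp.pos σ x := by
  obtain ⟨x0, y0, h1, h2, h3, h4⟩ := step_ex (hp := hp) hσ
  obtain ⟨hxy, hmx, hmy⟩ := hsw
  have key : ∀ w : Fin 30, hp.Moved σ w → w = x0 ∨ w = y0 := by
    intro w hw
    by_cases hwx : w = x0
    · exact Or.inl hwx
    · by_cases hwy : w = y0
      · exact Or.inr hwy
      · exact absurd (h4 w hwx hwy) hw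
  rcases key x hmx with rfl | rfl <;> rcases key y hmy with rfl | rfl
  · exact absurd rfl hxy
  · exact ⟨by omega, by omega, by omega⟩
  · omega
  · exact absurd rfl hxy

/-- After their unique swap (anchored at the post-swap order). -/
lemma after_swap {x y : Fin 30} (hxy : x ≠ y) {σ : ℕ} (hσ : σ < 435)
    (hsw : hp.SwapsAt σ x y) (h1 : hp.pos (σ + 1) x < hp.pos (σ + 1) y) :
    ∀ s, σ < s → s ≤ 435 → hp.pos s x < hp.pos s y := by
  intro s hs1 hs2
  refine order_stable hxy (show σ + 1 ≤ s by omega) hs2 ?_ h1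
  intro u hu1 hu2 hcon
  exact absurd (swap_unique hxy (by omega) hσ hcon hsw) (by omega)

/-- If the order at time `s` is flipped w.r.t. time 0, the swap happened before `s`. -/
lemma swapped_before {x y : Fin 30} (hxy : x ≠ y) {s : ℕ} (hs : s ≤ 435)
    (h0 : hp.pos 0 x < hp.pos 0 y) (hflip : hp.pos s y < hp.pos s x) :
    ∃ u, u < s ∧ hp.SwapsAt u x y ∧ hp.pos u y = hp.pos u x + 1 ∧
      hp.pos (u + 1) x = hp.pos u y ∧ hp.pos (u + 1) y = hp.pos u x := by
  obtain ⟨u, _, hu2, hu3, hu4, hu5⟩ := cross_pair (hp := hp) hxy (Nat.zero_le s) hs h0 hflip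
  exact ⟨u, hu2, swapsAt_of_cross hxy hu3 hu4 hu5, hu3, hu4, hu5⟩

end HPAux

namespace HPAux

open Finset

attribute [local instance] Classical.propDecidable

variable {hp : HalfPeriod 30}

lemma pos_final (x : Fin 30) : hp.pos 435 x = 31 - hp.pos 0 x := by
  have := hp.reverse x
  have h30 : 30 * (30 - 1) / 2 = 435 := by norm_num
  rwa [h30] at this

section Labels

variable {a b c : Fin 10 → Fin 30}

lemma a_fin (h3 : IsThreeDecompLabeling30 hp a b c) (m : Fin 10) : hp.pos 435 (a m) = 21 + (m : ℕ) := by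
  rw [pos_final, h3.2.1 m]
  have := m.is_lt
  omega

lemma b_fin (h3 : IsThreeDecompLabeling30 hp a b c) (m : Fin 10) : hp.pos 435 (b m) = 20 - (m : ℕ) := by
  rw [pos_final, h3.2.2.1 m]; omega

lemma c_fin (h3 : IsThreeDecompLabeling30 hp a b c) (m : Fin 10) : hp.pos 435 (c m) = 10 - (m : ℕ) := by
  rw [pos_final, h3.2.2.2.1 m]; omega

lemma a_injL (h3 : IsThreeDecompLabeling30 hp a b c) : Function.Injective a := by
  intro m m' h
  have := h3.1 (a₁ := Sum.inl m) (a₂ := Sum.inl m') (by simpa using h)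
  simpa using this

lemma b_injL (h3 : IsThreeDecompLabeling30 hp a b c) : Function.Injective b := by
  intro m m' h
  have := h3.1 (a₁ := Sum.inr (Sum.inl m)) (a₂ := Sum.inr (Sum.inl m')) (by simpa using h)
  simpa using this

lemma c_injL (h3 : IsThreeDecompLabeling30 hp a b c) : Function.Injective c := by
  intro m m' h
  have := h3.1 (a₁ := Sum.inr (Sum.inr m)) (a₂ := Sum.inr (Sum.inr m')) (by simpa using h)
  simpa using this

lemma a_ne_b (h3 : IsThreeDecompLabeling30 hp a b c) (m m' : Fin 10) : a m ≠ b m' := by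
  intro h
  have := h3.1 (a₁ := Sum.inl m) (a₂ := Sum.inr (Sum.inl m')) (by simpa using h)
  simp at this

lemma a_ne_c (h3 : IsThreeDecompLabeling30 hp a b c) (m m' : Fin 10) : a m ≠ c m' := by
  intro h
  have := h3.1 (a₁ := Sum.inl m) (a₂ := Sum.inr (Sum.inr m')) (by simpa using h)
  simp at this

lemma b_ne_c (h3 : IsThreeDecompLabeling30 hp a b c) (m m' : Fin 10) : b m ≠ c m' := by
  intro h
  have := h3.1 (a₁ := Sum.inr (Sum.inl m)) (a₂ := Sum.inr (Sum.inr m')) (by simpa using h)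
  simp at this

lemma classify (h3 : IsThreeDecompLabeling30 hp a b c) (z : Fin 30) : (∃ m, z = a m) ∨ (∃ m, z = b m) ∨ (∃ m, z = c m) := by
  have hbij : Function.Bijective (Sum.elim a (Sum.elim b c)) :=
    (Fintype.bijective_iff_injective_and_card _).mpr ⟨h3.1, by simp⟩
  obtain ⟨w, hw⟩ := hbij.2 z
  rcases w with m | m | m
  · exact Or.inl ⟨m, by simpa using hw.symm⟩
  · exact Or.inr (Or.inl ⟨m, by simpa using hw.symm⟩)
  · exact Or.inr (Or.inr ⟨m, by simpa using hw.symm⟩)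

end Labels

/-! ### Counting (≤k)-critical transpositions -/

noncomputable def SgF (hp : HalfPeriod 30) (g : ℕ) : Finset ℕ :=
  (Finset.range 435).filter (fun s => hp.GateAt s g ∨ hp.GateAt s (30 - g))

noncomputable def critF (hp : HalfPeriod 30) (k : ℕ) : Finset ℕ :=
  (Finset.range 435).filter (fun s => hp.LeCritical s k)

lemma NLe_eq (k : ℕ) : hp.NLe k = (critF hp k).card := by
  unfold HalfPeriod.NLe
  rw [hsteps]
  have : {t : ℕ | t < 435 ∧ hp.LeCritical t k} = ↑(critF hp k) := by
    ext u
    simp [critF]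
  rw [this, Set.ncard_coe_finset]

lemma critF_zero : critF hp 0 = ∅ := by
  ext s
  simp only [critF, Finset.mem_filter, Finset.mem_range, Finset.notMem_empty, iff_false]
  rintro ⟨-, i, h1, h2, -⟩
  omega

lemma critF_split {k : ℕ} (hk1 : 1 ≤ k) :
    critF hp k = critF hp (k - 1) ∪ SgF hp k := by
  ext s
  simp only [critF, SgF, Finset.mem_union, Finset.mem_filter, Finset.mem_range]
  constructor
  · rintro ⟨hs, i, hi1, hi2, hcrit⟩
    rcases Nat.lt_or_ge i k with h | h
    · exact Or.inl ⟨hs, i, hi1, by omega, hcrit⟩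
    · have : i = k := by omega
      subst this
      exact Or.inr ⟨hs, hcrit⟩
  · rintro (⟨hs, i, hi1, hi2, hcrit⟩ | ⟨hs, hcrit⟩)
    · exact ⟨hs, i, hi1, by omega, hcrit⟩
    · exact ⟨hs, k, hk1, le_rfl, hcrit⟩

lemma critF_disj {k : ℕ} (hk1 : 1 ≤ k) (hk : k ≤ 10) :
    Disjoint (critF hp (k - 1)) (SgF hp k) := by
  rw [Finset.disjoint_left]
  intro s hs1 hs2
  simp only [critF, Finset.mem_filter, Finset.mem_range] at hs1
  simp only [SgF, Finset.mem_filter, Finset.mem_range] at hs2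
  obtain ⟨hs435, i, hi1, hi2, hcrit⟩ := hs1
  obtain ⟨-, hgate⟩ := hs2
  have hgu : ∀ g g', hp.GateAt s g → hp.GateAt s g' → g = g' := fun g g' =>
    gate_unique (hp := hp) hs435
  rcases hcrit with h | h <;> rcases hgate with h' | h'
  · have := hgu _ _ h h'; omega
  · have := hgu _ _ h h'; omega
  · have := hgu _ _ h h'; omega
  · have := hgu _ _ h h'; omega

lemma SgF_card (hN1 : ∀ k : ℕ, 1 ≤ k → k ≤ 10 → hp.NLe k = 3 * Nat.choose (k + 1) 2)
    {g : ℕ} (hg1 : 1 ≤ g) (hg : g ≤ 10) : (SgF hp g).card = 3 * g := by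
  have hcard : (critF hp g).card = (critF hp (g - 1)).card + (SgF hp g).card := by
    rw [critF_split (hp := hp) hg1]
    exact Finset.card_union_of_disjoint (critF_disj hg1 hg)
  have e1 : hp.NLe g = 3 * Nat.choose (g + 1) 2 := hN1 g hg1 hg
  rw [NLe_eq] at e1
  rcases Nat.lt_or_ge g 2 with h2 | h2
  · have : g = 1 := by omega
    subst this
    rw [critF_zero] at hcard
    simp at hcard
    rw [hcard] at e1
    norm_num [Nat.choose] at e1
    omega
  · have e0 : hp.NLe (g - 1) = 3 * Nat.choose g 2 := by
      have := hN1 (g - 1) (by omega) (by omega)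
      rwa [show g - 1 + 1 = g by omega] at this
    rw [NLe_eq] at e0
    rw [Nat.choose_two_right] at e0 e1
    rw [hcard, e0] at e1
    interval_cases g <;> omega

end HPAux

namespace HPAux

open Finset

attribute [local instance] Classical.propDecidable

variable {hp : HalfPeriod 30}

lemma pos_injE {u : ℕ} (hu : u ≤ 435) {z z' : Fin 30}
    (h : hp.pos u z = hp.pos u z') : z = z' := hp.pos_inj u (le_steps hu) h

lemma pos_surj {u : ℕ} (hu : u ≤ 435) {p : ℕ} (hp1 : 1 ≤ p) (hp30 : p ≤ 30) :
    ∃ z, hp.pos u z = p := by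
  have himg : Finset.image (hp.pos u) Finset.univ = Finset.Icc 1 30 := by
    apply Finset.eq_of_subset_of_card_le
    · intro q hq
      simp only [Finset.mem_image, Finset.mem_univ, true_and] at hq
      obtain ⟨z, hz⟩ := hq
      subst hz
      simp only [Finset.mem_Icc]
      exact ⟨pos_ge hu z, pos_le hu z⟩
    · rw [Nat.card_Icc,
        Finset.card_image_of_injective _ (fun z z' h => pos_injE hu h)]
      simp
  have : p ∈ Finset.image (hp.pos u) Finset.univ := by
    rw [himg]; simp only [Finset.mem_Icc]; omega
  simp only [Finset.mem_image, Finset.mem_univ, true_and] at this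
  exact this

section Main

variable {a b c : Fin 10 → Fin 30}

/-- A `A`-element never moves down through a gate in `[1,10]` or `[20,29]`. -/
lemma a_no_down (h3 : IsThreeDecompLabeling30 hp a b c)
    (hN1 : ∀ k : ℕ, 1 ≤ k → k ≤ 10 → hp.NLe k = 3 * Nat.choose (k + 1) 2)
    {m : Fin 10} {gg s : ℕ} (hs : s < 435)
    (hgg : (1 ≤ gg ∧ gg ≤ 10) ∨ (20 ≤ gg ∧ gg ≤ 29))
    (h1 : hp.pos s (a m) = gg + 1) (h2 : hp.pos (s + 1) (a m) = gg) : False := by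
  classical
  obtain ⟨g, hg1, hg10, hcase⟩ : ∃ g, 1 ≤ g ∧ g ≤ 10 ∧ (gg = g ∨ gg = 30 - g) := by
    rcases hgg with h | h
    · exact ⟨gg, by omega, by omega, Or.inl rfl⟩
    · exact ⟨30 - gg, by omega, by omega, Or.inr (by omega)⟩
  -- τ : the time just after the last A-B swap
  set ABs : Finset ℕ :=
    (Finset.range 435).filter (fun u => ∃ m1 m2, hp.SwapsAt u (a m1) (b m2)) with hABs
  have hABne : ABs.Nonempty := by
    obtain ⟨u, hu, hsw⟩ := swap_exists (hp := hp) (a_ne_b h3 0 0)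
    exact ⟨u, by simp only [hABs, Finset.mem_filter, Finset.mem_range]; exact ⟨hu, 0, 0, hsw⟩⟩
  set sstar : ℕ := ABs.max' hABne with hsstar
  have hsstar435 : sstar < 435 := by
    have := ABs.max'_mem hABne
    simp only [hABs, Finset.mem_filter, Finset.mem_range] at this
    exact this.1
  set τ : ℕ := sstar + 1 with hτdef
  have hτ : τ ≤ 435 := by omega
  -- at τ every b is left of every a
  have hba : ∀ m1 m2 : Fin 10, hp.pos τ (b m2) < hp.pos τ (a m1) := by
    intro m1 m2
    obtain ⟨u, hu, hsw⟩ := swap_exists (hp := hp) (a_ne_b h3 m1 m2)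
    have humem : u ∈ ABs := by
      simp only [hABs, Finset.mem_filter, Finset.mem_range]
      exact ⟨hu, m1, m2, hsw⟩
    have hle : u ≤ sstar := ABs.le_max' u humem
    have h0 : hp.pos 0 (a m1) < hp.pos 0 (b m2) := by
      rw [h3.2.1, h3.2.2.1]; have := m1.is_lt; omega
    have hbefore := before_swap (a_ne_b h3 m1 m2) hu hsw h0 u le_rfl
    have hsp := swap_pos hu hsw hbefore
    have hpost : hp.pos (u + 1) (b m2) < hp.pos (u + 1) (a m1) := by omega
    exact after_swap (a_ne_b h3 m1 m2).symm hu (swapsAt_symm hsw) hpost τ (by omega) hτ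
  -- at τ every b is left of every c
  have hbc : ∀ m1 m2 : Fin 10, hp.pos τ (b m1) < hp.pos τ (c m2) := by
    intro m1 m2
    obtain ⟨u, hu, hsw⟩ := swap_exists (hp := hp) (b_ne_c h3 m1 m2)
    have hsAB : ∃ m1 m2, hp.SwapsAt sstar (a m1) (b m2) := by
      have := ABs.max'_mem hABne
      simp only [hABs, Finset.mem_filter, Finset.mem_range] at this
      exact this.2
    have hord := h3.2.2.2.2.1 sstar u (by rw [hsteps]; omega) (by rw [hsteps]; omega) hsAB
      ⟨m2, b m1, Or.inr ⟨m1, rfl⟩, swapsAt_symm hsw⟩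
    have h0 : hp.pos 0 (b m1) < hp.pos 0 (c m2) := by
      rw [h3.2.2.1, h3.2.2.2.1]; have := m1.is_lt; omega
    exact before_swap (b_ne_c h3 m1 m2) hu hsw h0 τ (by omega)
  -- every b is at position ≤ 10 at τ
  have hb10 : ∀ m2 : Fin 10, hp.pos τ (b m2) ≤ 10 := by
    intro m2
    have hcard := Finset.card_le_card_of_injOn
      (s := (Finset.univ : Finset (Fin 10 ⊕ Fin 10)))
      (t := Finset.Ioc (hp.pos τ (b m2)) 30)
      (fun w => Sum.elim (fun m => hp.pos τ (a m)) (fun m => hp.pos τ (c m)) w)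
      (by
        intro w _
        rcases w with m | m
        · simp only [Sum.elim_inl, Finset.mem_coe, Finset.mem_Ioc]
          exact ⟨hba m m2, pos_le hτ _⟩
        · simp only [Sum.elim_inr, Finset.mem_coe, Finset.mem_Ioc]
          exact ⟨hbc m2 m, pos_le hτ _⟩)
      (by
        intro w1 _ w2 _ heq
        rcases w1 with m1 | m1 <;> rcases w2 with m2 | m2 <;>
          simp only [Sum.elim_inl, Sum.elim_inr] at heq
        · exact congrArg Sum.inl (a_injL h3 (pos_injE hτ heq))
        · exact absurd (pos_injE hτ heq) (a_ne_c h3 m1 m2)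
        · exact absurd (pos_injE hτ heq).symm (a_ne_c h3 m2 m1)
        · exact congrArg Sum.inr (c_injL h3 (pos_injE hτ heq)))
    simp only [Finset.card_univ, Fintype.card_sum, Fintype.card_fin, Nat.card_Ioc] at hcard
    omega
  -- pigeonhole: not all ten b's fit strictly below a position ≤ 10
  have hpig : ∀ P : ℕ, P ≤ 10 → (∀ m2 : Fin 10, hp.pos τ (b m2) < P) → False := by
    intro P hP hall
    have hcard := Finset.card_le_card_of_injOn
      (s := (Finset.univ : Finset (Fin 10))) (t := Finset.Ioo 0 P)
      (fun m2 => hp.pos τ (b m2))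
      (by
        intro m2 _
        simp only [Finset.mem_coe, Finset.mem_Ioo]
        exact ⟨by have := pos_ge (hp := hp) hτ (b m2); omega, hall m2⟩)
      (fun m2 _ m2' _ heq => b_injL h3 (pos_injE hτ heq))
    simp only [Finset.card_univ, Fintype.card_fin, Nat.card_Ioo] at hcard
    omega
  -- every position in [1,g] at time τ is occupied by a b
  have hat_b : ∀ p : ℕ, 1 ≤ p → p ≤ g → ∃ m2 : Fin 10, hp.pos τ (b m2) = p := by
    intro p hp1 hpg
    obtain ⟨z, hz⟩ := pos_surj (hp := hp) hτ hp1 (by omega)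
    rcases classify h3 z with ⟨m1, rfl⟩ | ⟨m2, rfl⟩ | ⟨m2, rfl⟩
    · exact absurd (fun m2 => hz ▸ hba m1 m2) (fun h => hpig p (by omega) h)
    · exact ⟨m2, hz⟩
    · exact absurd (fun m1 => hz ▸ hbc m1 m2) (fun h => hpig p (by omega) h)
  -- choose the b-element at position p
  have hbel : ∀ p : ℕ, ∃ mbp : Fin 10, 1 ≤ p → p ≤ g → hp.pos τ (b mbp) = p := by
    intro p
    by_cases hcnd : 1 ≤ p ∧ p ≤ g
    · obtain ⟨m2, hm2⟩ := hat_b p hcnd.1 hcnd.2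
      exact ⟨m2, fun _ _ => hm2⟩
    · exact ⟨0, fun hc1 hc2 => absurd ⟨hc1, hc2⟩ hcnd⟩
  choose mb hmb using hbel
  -- its downward crossing of gate g before τ
  have hbstep : ∀ p : ℕ, ∃ u : ℕ, 1 ≤ p → p ≤ g →
      u < τ ∧ hp.pos u (b (mb p)) = g + 1 ∧ hp.pos (u + 1) (b (mb p)) = g := by
    intro p
    by_cases hcnd : 1 ≤ p ∧ p ≤ g
    · have h0b : g + 1 ≤ hp.pos 0 (b (mb p)) := by rw [h3.2.2.1]; omega
      have hτb : hp.pos τ (b (mb p)) ≤ g := by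
        rw [hmb p hcnd.1 hcnd.2]; exact hcnd.2
      obtain ⟨u, hu0, huτ, hu1, hu2⟩ :=
        cross_down (hp := hp) (Nat.zero_le τ) hτ h0b hτb
      exact ⟨u, fun _ _ => ⟨huτ, hu1, hu2⟩⟩
    · exact ⟨0, fun hc1 hc2 => absurd ⟨hc1, hc2⟩ hcnd⟩
  choose φb hφb using hbstep
  -- c-elements indexed by q ∈ [10-g, 9]
  set mcf : ℕ → Fin 10 := fun q => ⟨q % 10, Nat.mod_lt _ (by omega)⟩ with hmcf
  have hmcval : ∀ q : ℕ, ((mcf q : Fin 10) : ℕ) = q % 10 := fun q => rfl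
  have hcstepg : ∀ q : ℕ, ∃ u : ℕ, 10 - g ≤ q → q ≤ 9 →
      u < 435 ∧ hp.pos u (c (mcf q)) = g + 1 ∧ hp.pos (u + 1) (c (mcf q)) = g := by
    intro q
    by_cases hcnd : 10 - g ≤ q ∧ q ≤ 9
    · have hq10 : q % 10 = q := Nat.mod_eq_of_lt (by omega)
      have h0c : g + 1 ≤ hp.pos 0 (c (mcf q)) := by
        rw [h3.2.2.2.1, hmcval]; omega
      have h435c : hp.pos 435 (c (mcf q)) ≤ g := by
        rw [c_fin h3, hmcval]; omega
      obtain ⟨u, hu0, hu435, hu1, hu2⟩ :=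
        cross_down (hp := hp) (Nat.zero_le 435) le_rfl h0c h435c
      exact ⟨u, fun _ _ => ⟨hu435, hu1, hu2⟩⟩
    · exact ⟨0, fun hc1 hc2 => absurd ⟨hc1, hc2⟩ hcnd⟩
  choose φc hφc using hcstepg
  have hcsteph : ∀ q : ℕ, ∃ u : ℕ, 10 - g ≤ q → q ≤ 9 →
      u < 435 ∧ hp.pos u (c (mcf q)) = (30 - g) + 1 ∧ hp.pos (u + 1) (c (mcf q)) = 30 - g := by
    intro q
    by_cases hcnd : 10 - g ≤ q ∧ q ≤ 9
    · have hq10 : q % 10 = q := Nat.mod_eq_of_lt (by omega)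
      have h0c : (30 - g) + 1 ≤ hp.pos 0 (c (mcf q)) := by
        rw [h3.2.2.2.1, hmcval]; omega
      have h435c : hp.pos 435 (c (mcf q)) ≤ 30 - g := by
        rw [c_fin h3, hmcval]; omega
      obtain ⟨u, hu0, hu435, hu1, hu2⟩ :=
        cross_down (hp := hp) (Nat.zero_le 435) le_rfl h0c h435c
      exact ⟨u, fun _ _ => ⟨hu435, hu1, hu2⟩⟩
    · exact ⟨0, fun hc1 hc2 => absurd ⟨hc1, hc2⟩ hcnd⟩
  choose φd hφd using hcsteph
  -- membership in SgF g from a downward move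
  have hmemSg : ∀ (u : ℕ) (z : Fin 30), u < 435 →
      (hp.pos u z = g + 1 ∧ hp.pos (u + 1) z = g) ∨
      (hp.pos u z = (30 - g) + 1 ∧ hp.pos (u + 1) z = 30 - g) → u ∈ SgF hp g := by
    intro u z hu hcases
    have hdown : hp.pos (u + 1) z + 1 = hp.pos u z := by omega
    obtain ⟨w, hw1, hw2, hw3, hw4⟩ := down_swap (hp := hp) hu hdown
    simp only [SgF, Finset.mem_filter, Finset.mem_range]
    rcases hcases with ⟨hc1, hc2⟩ | ⟨hc1, hc2⟩
    · exact ⟨hu, Or.inl (by rwa [hc2] at hw4)⟩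
    · exact ⟨hu, Or.inr (by rwa [hc2] at hw4)⟩
  -- the four step sets
  set W1 : Finset ℕ := (Finset.Icc 1 g).image φb with hW1
  set W2 : Finset ℕ := (Finset.Icc (10 - g) 9).image φc with hW2
  set W4 : Finset ℕ := (Finset.Icc (10 - g) 9).image φd with hW4
  set W3 : Finset ℕ := {s} with hW3
  -- a down-mover is unique, hence steps identify their down-movers
  have hdownid : ∀ (u : ℕ) (z z' : Fin 30), u < 435 →
      hp.pos (u + 1) z + 1 = hp.pos u z → hp.pos (u + 1) z' + 1 = hp.pos u z' → z = z' :=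
    fun u z z' hu h h' => down_unique (hp := hp) hu (by omega) (by omega)
  -- subsets
  have hsub : W1 ∪ W2 ∪ W3 ∪ W4 ⊆ SgF hp g := by
    intro u hu
    simp only [hW1, hW2, hW3, hW4, Finset.mem_union, Finset.mem_image,
      Finset.mem_Icc, Finset.mem_singleton] at hu
    rcases hu with ((⟨p, hp', rfl⟩ | ⟨q, hq', rfl⟩) | hus) | ⟨q, hq', rfl⟩
    · obtain ⟨hu1, hu2, hu3⟩ := hφb p hp'.1 hp'.2
      exact hmemSg (φb p) (b (mb p)) (by omega) (Or.inl ⟨hu2, hu3⟩)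
    · obtain ⟨hu1, hu2, hu3⟩ := hφc q hq'.1 hq'.2
      exact hmemSg (φc q) (c (mcf q)) hu1 (Or.inl ⟨hu2, hu3⟩)
    · rw [hus]
      rcases hcase with rfl | hgg30
      · exact hmemSg s (a m) hs (Or.inl ⟨h1, h2⟩)
      · exact hmemSg s (a m) hs (Or.inr ⟨by omega, by omega⟩)
    · obtain ⟨hu1, hu2, hu3⟩ := hφd q hq'.1 hq'.2
      exact hmemSg (φd q) (c (mcf q)) hu1 (Or.inr ⟨hu2, hu3⟩)
  -- cardinalities
  have hcard1 : W1.card = g := by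
    rw [hW1, Finset.card_image_of_injOn, Nat.card_Icc]
    · omega
    · intro p hp' p' hp'' heq
      simp only [Finset.coe_Icc, Set.mem_Icc] at hp' hp''
      obtain ⟨ha1, ha2, ha3⟩ := hφb p hp'.1 hp'.2
      obtain ⟨hb1, hb2, hb3⟩ := hφb p' hp''.1 hp''.2
      rw [heq] at ha2 ha3
      have hbe : b (mb p) = b (mb p') :=
        hdownid (φb p') (b (mb p)) (b (mb p')) (by omega) (by omega) (by omega)
      have hmbe : mb p = mb p' := b_injL h3 hbe
      have e1 := hmb p hp'.1 hp'.2
      have e2 := hmb p' hp''.1 hp''.2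
      rw [hmbe] at e1
      omega
  have hcard2 : W2.card = g := by
    rw [hW2, Finset.card_image_of_injOn, Nat.card_Icc]
    · omega
    · intro q hq' q' hq'' heq
      simp only [Finset.coe_Icc, Set.mem_Icc] at hq' hq''
      obtain ⟨ha1, ha2, ha3⟩ := hφc q hq'.1 hq'.2
      obtain ⟨hb1, hb2, hb3⟩ := hφc q' hq''.1 hq''.2
      rw [heq] at ha2 ha3
      have hce : c (mcf q) = c (mcf q') :=
        hdownid (φc q') (c (mcf q)) (c (mcf q')) (by omega) (by omega) (by omega)
      have hqe : mcf q = mcf q' := c_injL h3 hce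
      have hqq : q % 10 = q' % 10 := by
        have := congrArg Fin.val hqe
        rwa [hmcval, hmcval] at this
      omega
  have hcard4 : W4.card = g := by
    rw [hW4, Finset.card_image_of_injOn, Nat.card_Icc]
    · omega
    · intro q hq' q' hq'' heq
      simp only [Finset.coe_Icc, Set.mem_Icc] at hq' hq''
      obtain ⟨ha1, ha2, ha3⟩ := hφd q hq'.1 hq'.2
      obtain ⟨hb1, hb2, hb3⟩ := hφd q' hq''.1 hq''.2
      rw [heq] at ha2 ha3
      have hce : c (mcf q) = c (mcf q') :=
        hdownid (φd q') (c (mcf q)) (c (mcf q')) (by omega) (by omega) (by omega)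
      have hqe : mcf q = mcf q' := c_injL h3 hce
      have hqq : q % 10 = q' % 10 := by
        have := congrArg Fin.val hqe
        rwa [hmcval, hmcval] at this
      omega
  -- disjointness
  have hd12 : Disjoint W1 W2 := by
    rw [Finset.disjoint_left]
    rintro u hu1 hu2
    simp only [hW1, hW2, Finset.mem_image, Finset.mem_Icc] at hu1 hu2
    obtain ⟨p, hp', rfl⟩ := hu1
    obtain ⟨q, hq', heq⟩ := hu2
    obtain ⟨ha1, ha2, ha3⟩ := hφb p hp'.1 hp'.2
    obtain ⟨hb1, hb2, hb3⟩ := hφc q hq'.1 hq'.2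
    rw [heq] at hb2 hb3
    exact absurd (hdownid (φb p) (b (mb p)) (c (mcf q)) (by omega) (by omega) (by omega))
      (b_ne_c h3 _ _)
  have hd14 : Disjoint W1 W4 := by
    rw [Finset.disjoint_left]
    rintro u hu1 hu2
    simp only [hW1, hW4, Finset.mem_image, Finset.mem_Icc] at hu1 hu2
    obtain ⟨p, hp', rfl⟩ := hu1
    obtain ⟨q, hq', heq⟩ := hu2
    obtain ⟨ha1, ha2, ha3⟩ := hφb p hp'.1 hp'.2
    obtain ⟨hb1, hb2, hb3⟩ := hφd q hq'.1 hq'.2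
    rw [heq] at hb2 hb3
    exact absurd (hdownid (φb p) (b (mb p)) (c (mcf q)) (by omega) (by omega) (by omega))
      (b_ne_c h3 _ _)
  have hd24 : Disjoint W2 W4 := by
    rw [Finset.disjoint_left]
    rintro u hu1 hu2
    simp only [hW2, hW4, Finset.mem_image, Finset.mem_Icc] at hu1 hu2
    obtain ⟨q, hq', rfl⟩ := hu1
    obtain ⟨q', hq'', heq⟩ := hu2
    obtain ⟨ha1, ha2, ha3⟩ := hφc q hq'.1 hq'.2
    obtain ⟨hb1, hb2, hb3⟩ := hφd q' hq''.1 hq''.2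
    rw [heq] at hb2 hb3
    have hce : c (mcf q) = c (mcf q') :=
      hdownid (φc q) (c (mcf q)) (c (mcf q')) (by omega) (by omega) (by omega)
    rw [← hce] at hb2
    omega
  have hd31 : Disjoint W3 W1 := by
    rw [Finset.disjoint_left]
    rintro u hu1 hu2
    simp only [hW3, Finset.mem_singleton] at hu1
    rw [hu1] at hu2
    simp only [hW1, Finset.mem_image, Finset.mem_Icc] at hu2
    obtain ⟨p, hp', heq⟩ := hu2
    obtain ⟨ha1, ha2, ha3⟩ := hφb p hp'.1 hp'.2
    rw [heq] at ha2 ha3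
    exact absurd (hdownid s (a m) (b (mb p)) hs (by omega) (by omega)) (a_ne_b h3 _ _)
  have hd32 : Disjoint W3 W2 := by
    rw [Finset.disjoint_left]
    rintro u hu1 hu2
    simp only [hW3, Finset.mem_singleton] at hu1
    rw [hu1] at hu2
    simp only [hW2, Finset.mem_image, Finset.mem_Icc] at hu2
    obtain ⟨q, hq', heq⟩ := hu2
    obtain ⟨ha1, ha2, ha3⟩ := hφc q hq'.1 hq'.2
    rw [heq] at ha2 ha3
    exact absurd (hdownid s (a m) (c (mcf q)) hs (by omega) (by omega)) (a_ne_c h3 _ _)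
  have hd34 : Disjoint W3 W4 := by
    rw [Finset.disjoint_left]
    rintro u hu1 hu2
    simp only [hW3, Finset.mem_singleton] at hu1
    rw [hu1] at hu2
    simp only [hW4, Finset.mem_image, Finset.mem_Icc] at hu2
    obtain ⟨q, hq', heq⟩ := hu2
    obtain ⟨ha1, ha2, ha3⟩ := hφd q hq'.1 hq'.2
    rw [heq] at ha2 ha3
    exact absurd (hdownid s (a m) (c (mcf q)) hs (by omega) (by omega)) (a_ne_c h3 _ _)
  -- total cardinality
  have htot : (W1 ∪ W2 ∪ W3 ∪ W4).card = 3 * g + 1 := by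
    rw [Finset.card_union_of_disjoint, Finset.card_union_of_disjoint,
      Finset.card_union_of_disjoint hd12]
    · simp only [hcard1, hcard2, hcard4, hW3, Finset.card_singleton]
      omega
    · rw [Finset.disjoint_union_left]
      exact ⟨hd31.symm, hd32.symm⟩
    · rw [Finset.disjoint_union_left, Finset.disjoint_union_left]
      exact ⟨⟨hd14, hd24⟩, hd34⟩
  have hfin := Finset.card_le_card hsub
  rw [htot, SgF_card hN1 hg1 hg10] at hfin
  omega

end Main

end HPAux

namespace HPAux

open Finset

variable {hp : HalfPeriod 30} {a b c : Fin 10 → Fin 30}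

lemma a_stay_ge11 (h3 : IsThreeDecompLabeling30 hp a b c)
    (hN1 : ∀ k : ℕ, 1 ≤ k → k ≤ 10 → hp.NLe k = 3 * Nat.choose (k + 1) 2)
    (m : Fin 10) : ∀ {s' s : ℕ}, s ≤ s' → s' ≤ 435 → 11 ≤ hp.pos s (a m) →
    11 ≤ hp.pos s' (a m) := by
  intro s'
  induction s' with
  | zero =>
    intro s h1 h2 h3'
    have : s = 0 := by omega
    subst this; exact h3'
  | succ k ih =>
    intro s h1 h2 h3'
    rcases Nat.lt_or_ge s (k + 1) with hsk | hsk
    · have hk : 11 ≤ hp.pos k (a m) := ih (by omega) (by omega) h3'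
      have hw := walk (hp := hp) (show k < 435 by omega) (a m)
      by_contra hcon
      have e1 : hp.pos k (a m) = 11 := by omega
      have e2 : hp.pos (k + 1) (a m) = 10 := by omega
      exact a_no_down h3 hN1 (show k < 435 by omega)
        (Or.inl ⟨by omega, by omega⟩) (by omega) e2
    · have : s = k + 1 := by omega
      subst this; exact h3'

lemma a_stay_ge21 (h3 : IsThreeDecompLabeling30 hp a b c)
    (hN1 : ∀ k : ℕ, 1 ≤ k → k ≤ 10 → hp.NLe k = 3 * Nat.choose (k + 1) 2)
    (m : Fin 10) : ∀ {s' s : ℕ}, s ≤ s' → s' ≤ 435 → 21 ≤ hp.pos s (a m) →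
    21 ≤ hp.pos s' (a m) := by
  intro s'
  induction s' with
  | zero =>
    intro s h1 h2 h3'
    have : s = 0 := by omega
    subst this; exact h3'
  | succ k ih =>
    intro s h1 h2 h3'
    rcases Nat.lt_or_ge s (k + 1) with hsk | hsk
    · have hk : 21 ≤ hp.pos k (a m) := ih (by omega) (by omega) h3'
      have hw := walk (hp := hp) (show k < 435 by omega) (a m)
      by_contra hcon
      have e2 : hp.pos (k + 1) (a m) = 20 := by omega
      exact a_no_down h3 hN1 (show k < 435 by omega)
        (Or.inr ⟨by omega, by omega⟩) (by omega) e2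
    · have : s = k + 1 := by omega
      subst this; exact h3'

section WithT

variable {t : ℕ}

lemma t435 (ht : EntersCenterAt hp 13 (a 9) t) : t < 435 := by
  have := ht.1; rwa [hsteps] at this

lemma a9_pre (h3 : IsThreeDecompLabeling30 hp a b c)
    (ht : EntersCenterAt hp 13 (a 9) t) : ∀ s, s ≤ t → hp.pos s (a 9) ≤ 13 := by
  intro s
  induction s with
  | zero =>
    intro _
    rw [h3.2.1]
    have : ((9 : Fin 10) : ℕ) = 9 := rfl
    omega
  | succ k ih =>
    intro hk1
    have hkt : k < t := by omega
    have hk13 := ih (by omega)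
    have hk435 : k < 435 := by have := t435 ht; omega
    by_contra hcon
    have hw := walk (hp := hp) hk435 (a 9)
    have h14 : hp.pos (k + 1) (a 9) = 14 := by omega
    exact ht.2.2.2 k hkt ⟨⟨by omega, by omega⟩, fun hc => by
      have := hc.1
      omega⟩

lemma a9_t1 (h3 : IsThreeDecompLabeling30 hp a b c)
    (ht : EntersCenterAt hp 13 (a 9) t) : hp.pos (t + 1) (a 9) = 14 := by
  have hc := ht.2.1
  obtain ⟨hc1, hc2⟩ := hc
  have hpre := a9_pre h3 ht t le_rfl
  have hw := walk (hp := hp) (t435 ht) (a 9)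
  omega

/-- E-pin: an `a`-element strictly left of `a 9` just after time `t` is at position `≥ 11`. -/
lemma pin_low (h3 : IsThreeDecompLabeling30 hp a b c)
    (hN1 : ∀ k : ℕ, 1 ≤ k → k ≤ 10 → hp.NLe k = 3 * Nat.choose (k + 1) 2)
    (ht : EntersCenterAt hp 13 (a 9) t) {m : Fin 10} (hm : m ≠ 9)
    (hlt : hp.pos (t + 1) (a m) < 14) : 11 ≤ hp.pos (t + 1) (a m) := by
  have ht435 := t435 ht
  have h9 := a9_t1 h3 ht
  have hmval : (m : ℕ) ≤ 8 := by
    have h1 : (m : ℕ) < 10 := m.is_lt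
    have h2 : (m : ℕ) ≠ 9 := fun h => hm (Fin.ext (by simpa using h))
    omega
  have hne : a 9 ≠ a m := fun h => hm (a_injL h3 h.symm)
  have h0 : hp.pos 0 (a 9) < hp.pos 0 (a m) := by
    rw [h3.2.1, h3.2.1]
    norm_num
    omega
  obtain ⟨u, hu, husw, hcr1, hcr2, hcr3⟩ := swapped_before (hp := hp) hne
    (show t + 1 ≤ 435 by omega) h0 (by omega)
  have hg1 : 1 ≤ hp.pos u (a 9) := pos_ge (hp := hp) (by omega) _
  have hnot : ¬ (hp.pos u (a 9) ≤ 10) := by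
    intro hle
    exact a_no_down h3 hN1 (show u < 435 by omega)
      (Or.inl ⟨hg1, hle⟩) (by omega) hcr3
  exact a_stay_ge11 h3 hN1 m (show u + 1 ≤ t + 1 by omega) (by omega) (by omega)

/-- F-pin: no `a`-element other than `a 9` is at position `≥ 21` just after time `t`. -/
lemma pin_high (h3 : IsThreeDecompLabeling30 hp a b c)
    (hN1 : ∀ k : ℕ, 1 ≤ k → k ≤ 10 → hp.NLe k = 3 * Nat.choose (k + 1) 2)
    (ht : EntersCenterAt hp 13 (a 9) t) {m : Fin 10} (hm : m ≠ 9)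
    (hgt : 21 ≤ hp.pos (t + 1) (a m)) : False := by
  have ht435 := t435 ht
  have h9 := a9_t1 h3 ht
  have hmval : (m : ℕ) ≤ 8 := by
    have h1 : (m : ℕ) < 10 := m.is_lt
    have h2 : (m : ℕ) ≠ 9 := fun h => hm (Fin.ext (by simpa using h))
    omega
  have hne : a 9 ≠ a m := fun h => hm (a_injL h3 h.symm)
  have h0 : hp.pos 0 (a 9) < hp.pos 0 (a m) := by
    rw [h3.2.1, h3.2.1]
    norm_num
    omega
  obtain ⟨σ, hσ435, hsw⟩ := swap_exists (hp := hp) hne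
  rcases le_or_gt σ t with hle | hgtσ
  · have hbef := before_swap hne hσ435 hsw h0 σ le_rfl
    have hsp := swap_pos hσ435 hsw hbef
    have hpost : hp.pos (σ + 1) (a m) < hp.pos (σ + 1) (a 9) := by omega
    have := after_swap (Ne.symm hne) hσ435 (swapsAt_symm hsw) hpost (t + 1)
      (by omega) (by omega)
    omega
  · have hstay : 21 ≤ hp.pos σ (a m) :=
      a_stay_ge21 h3 hN1 m (show t + 1 ≤ σ by omega) (by omega) hgt
    have hbef := before_swap hne hσ435 hsw h0 σ le_rfl
    have hsp := swap_pos hσ435 hsw hbef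
    have h30 : hp.pos σ (a m) ≤ 30 := pos_le (hp := hp) (by omega) _
    exact a_no_down h3 hN1 hσ435 (Or.inr ⟨by omega, by omega⟩)
      (show hp.pos σ (a m) = hp.pos σ (a 9) + 1 by omega) (by omega)

end WithT

end HPAux

namespace HPAux

open Finset

attribute [local instance] Classical.propDecidable

variable {hp : HalfPeriod 30} {a b c : Fin 10 → Fin 30}

noncomputable def halF (hp : HalfPeriod 30) (a : Fin 10 → Fin 30) (j : Fin 10) :
    Finset (Fin 10) :=
  Finset.univ.filter (fun i'' => i'' < j ∧ ∃ s, s < 435 ∧ hp.GateAt s 15 ∧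
    hp.SwapsAt s (a j) (a i''))

lemma halF_mem {j i'' : Fin 10} : i'' ∈ halF hp a j ↔
    (i'' < j ∧ ∃ s, s < 435 ∧ hp.GateAt s 15 ∧ hp.SwapsAt s (a j) (a i'')) := by
  simp [halF]

lemma halOf_eq (j : Fin 10) : halOf hp a j = (halF hp a j).card := by
  unfold halOf
  rw [← Set.ncard_coe_finset (halF hp a j)]
  congr 1
  ext i''
  simp [halF, hsteps]

/-- Generic partner construction: between an element of `T` (times when `X` sits at 15
and moves to 16) and a later element of `T`, the element `X` must move back `16 → 15`;
we select such a move above all smaller elements of `T`, together with the partner. -/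
lemma partner_gen (X : Fin 30) (T : Finset ℕ)
    (hT : ∀ v ∈ T, v < 435 ∧ hp.pos v X = 15 ∧ hp.pos (v + 1) X = 16)
    (hne : T.Nonempty) :
    ∀ u' : ℕ, ∃ (y : Fin 30) (u : ℕ), u' ∈ T.erase (T.min' hne) →
      ((∀ v ∈ T, v < u' → v < u) ∧ u < u' ∧ u < 435 ∧
       hp.pos u X = 16 ∧ hp.pos (u + 1) X = 15 ∧
       hp.pos u y = 15 ∧ hp.pos (u + 1) y = 16 ∧ hp.SwapsAt u X y) := by
  intro u'
  by_cases hc : u' ∈ T.erase (T.min' hne)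
  · have hu'T : u' ∈ T := Finset.mem_of_mem_erase hc
    have hu'ne : u' ≠ T.min' hne := Finset.ne_of_mem_erase hc
    have hmnlt : T.min' hne < u' :=
      lt_of_le_of_ne (T.min'_le u' hu'T) (Ne.symm hu'ne)
    have hprevne : (T.filter (fun v => v < u')).Nonempty :=
      ⟨T.min' hne, Finset.mem_filter.mpr ⟨T.min'_mem hne, hmnlt⟩⟩
    set pv := (T.filter (fun v => v < u')).max' hprevne with hpv
    have hpvmem : pv ∈ T ∧ pv < u' := by
      have := Finset.max'_mem _ hprevne
      rw [← hpv] at this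
      exact Finset.mem_filter.mp this
    have hpvmax : ∀ v ∈ T, v < u' → v ≤ pv := fun v hv hvlt =>
      Finset.le_max' (T.filter (fun w => w < u')) v (Finset.mem_filter.mpr ⟨hv, hvlt⟩)
    obtain ⟨hpv435, hpv15, hpv16⟩ := hT pv hpvmem.1
    obtain ⟨hu'435, hu'15, hu'16⟩ := hT u' hu'T
    obtain ⟨u, hu1, hu2, hu3, hu4⟩ := cross_down (hp := hp) (z := X) (g := 15)
      (show pv + 1 ≤ u' by omega) (by omega) (by omega) (by omega)
    obtain ⟨w, hw1, hw2, hw3, hw4⟩ := down_swap (hp := hp) (show u < 435 by omega)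
      (show hp.pos (u + 1) X + 1 = hp.pos u X by omega)
    refine ⟨w, u, fun _ => ⟨?_, by omega, by omega, hu3, hu4, by omega, by omega, hw3⟩⟩
    intro v hv hvlt
    have := hpvmax v hv hvlt
    omega
  · exact ⟨X, 0, fun h => absurd h hc⟩

/-- An element that passes `X = a jj` (ends up to its right) is an `a m` with `m > jj`. -/
lemma passer_classify (h3 : IsThreeDecompLabeling30 hp a b c) {X y : Fin 30} {jj : Fin 10}
    (hXa : X = a jj) {u : ℕ} (hu : u < 435) (hsw : hp.SwapsAt u X y)
    (hord : hp.pos (u + 1) X < hp.pos (u + 1) y) :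
    ∃ m : Fin 10, y = a m ∧ (jj : ℕ) < (m : ℕ) := by
  have h435 : hp.pos 435 X < hp.pos 435 y :=
    after_swap hsw.1 hu hsw hord 435 (by omega) le_rfl
  rw [hXa, a_fin h3] at h435
  rcases classify h3 y with ⟨m, rfl⟩ | ⟨m, rfl⟩ | ⟨m, rfl⟩
  · rw [a_fin h3] at h435
    exact ⟨m, rfl, by omega⟩
  · rw [b_fin h3] at h435
    exact absurd h435 (by omega)
  · rw [c_fin h3] at h435
    exact absurd h435 (by omega)

end HPAux

set_option maxRecDepth 16000

/-- Let `π_{a_10}` be the arrangement of `Π` immediately after the swap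
in which `a_10` enters the 13-center. If for some `1 ≤ i ≤ 5` and `1 ≤ l ≤ 3` the element
`a_i` is at position `10 + l` or at position `21 - l` in `π_{a_10}`, then `hal(a_i) ≤ l`. -/
theorem hal_bound_near_boundary (hp : HalfPeriod 30) (a b c : Fin 10 → Fin 30)
    (h3 : IsThreeDecompLabeling30 hp a b c)
    (hN1 : ∀ k : ℕ, 1 ≤ k → k ≤ 10 → hp.NLe k = 3 * Nat.choose (k + 1) 2)
    (hN2 : ∀ k : ℕ, 11 ≤ k → k ≤ 13 →
      hp.NLe k = 3 * Nat.choose (k + 1) 2 + 3 * Nat.choose (k - 9) 2)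
    (t : ℕ) (ht : EntersCenterAt hp 13 (a 9) t)
    (i l : ℕ) (hi1 : 1 ≤ i) (hi5 : i ≤ 5) (hl1 : 1 ≤ l) (hl3 : l ≤ 3)
    (hpos : hp.pos (t + 1) (a ⟨i - 1, by omega⟩) = 10 + l ∨
      hp.pos (t + 1) (a ⟨i - 1, by omega⟩) = 21 - l) :
    halOf hp a ⟨i - 1, by omega⟩ ≤ l := by
  classical
  set j : Fin 10 := ⟨i - 1, by omega⟩ with hjdef
  set X : Fin 30 := a j with hXdef
  have hjval : (j : ℕ) = i - 1 := rfl
  have h9val : ((9 : Fin 10) : ℕ) = 9 := rfl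
  have ht435 : t < 435 := HPAux.t435 ht
  have h9pre := HPAux.a9_pre h3 ht
  have h9t1 := HPAux.a9_t1 h3 ht
  set F : Finset (Fin 10) := HPAux.halF hp a j with hFdef
  have hFmem : ∀ i'' : Fin 10, i'' ∈ F ↔ (i'' < j ∧ ∃ s, s < 435 ∧ hp.GateAt s 15 ∧
      hp.SwapsAt s X (a i'')) := by
    intro i''
    rw [hFdef, HPAux.halF_mem, ← hXdef]
  have hhal : halOf hp a j = F.card := HPAux.halOf_eq j
  have hlt_j : ∀ i'' : Fin 10, i'' < j → (i'' : ℕ) < i - 1 := by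
    intro i'' h
    have := Fin.lt_def.mp h
    omega
  have hXne : ∀ i'' : Fin 10, i'' < j → X ≠ a i'' := by
    intro i'' hlt heq
    have := HPAux.a_injL h3 (hXdef ▸ heq)
    subst this
    exact absurd hlt (lt_irrefl _)
  have h0X : ∀ i'' : Fin 10, i'' < j → hp.pos 0 X < hp.pos 0 (a i'') := by
    intro i'' hlt
    rw [hXdef, h3.2.1, h3.2.1]
    have h1 := hlt_j i'' hlt
    have h2 := i''.is_lt
    omega
  have hne9X : a 9 ≠ X := by
    rw [hXdef]
    intro h
    have := congrArg Fin.val (HPAux.a_injL h3 h)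
    rw [h9val, hjval] at this
    omega
  have h09X : hp.pos 0 (a 9) < hp.pos 0 X := by
    rw [hXdef, h3.2.1, h3.2.1, h9val, hjval]
    omega
  have hswap_pos : ∀ (i'' : Fin 10), i'' < j → ∀ s, s < 435 → hp.GateAt s 15 →
      hp.SwapsAt s X (a i'') →
      hp.pos s X = 15 ∧ hp.pos s (a i'') = 16 ∧ hp.pos (s + 1) X = 16 ∧
        hp.pos (s + 1) (a i'') = 15 := by
    intro i'' hlt s hs hg hsw
    have hbef := HPAux.before_swap (hXne i'' hlt) hs hsw (h0X i'' hlt) s le_rfl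
    have hsp := HPAux.swap_pos hs hsw hbef
    obtain ⟨x0, y0, hx0, hy0, hx0', hy0'⟩ := hg
    have hXx0 : X = x0 := HPAux.up_unique (hp := hp) hs (by omega) (by omega)
    rw [← hXx0] at hx0 hx0'
    exact ⟨hx0, by omega, hx0', by omega⟩
  have hσex : ∀ i'' : Fin 10, ∃ s : ℕ, i'' ∈ F →
      (s < 435 ∧ hp.GateAt s 15 ∧ hp.SwapsAt s X (a i'')) := by
    intro i''
    by_cases hc : i'' ∈ F
    · obtain ⟨s, hs⟩ := ((hFmem i'').mp hc).2
      exact ⟨s, fun _ => hs⟩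
    · exact ⟨0, fun h => absurd h hc⟩
  choose σf hσf using hσex
  have hFlt : ∀ i'' ∈ F, i'' < j := fun i'' h => ((hFmem i'').mp h).1
  have hi''ne9 : ∀ i'' ∈ F, i'' ≠ (9 : Fin 10) := by
    intro i'' hmem h
    have h1 := hlt_j i'' (hFlt i'' hmem)
    rw [h, h9val] at h1
    omega
  have hσne_t : ∀ i'' ∈ F, σf i'' ≠ t := by
    intro i'' hmem heq
    obtain ⟨hs435, hg, hsw⟩ := hσf i'' hmem
    rw [heq] at hsw
    have hm9 : hp.Moved t (a 9) := by
      show hp.pos (t + 1) (a 9) ≠ hp.pos t (a 9)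
      rw [h9t1]
      have := h9pre t le_rfl
      omega
    obtain ⟨x0, y0, he1, he2, he3, he4⟩ := HPAux.step_ex (hp := hp) ht435
    have key : ∀ w : Fin 30, hp.Moved t w → w = x0 ∨ w = y0 := by
      intro w hw
      by_cases hwx : w = x0
      · exact Or.inl hwx
      · by_cases hwy : w = y0
        · exact Or.inr hwy
        · exact absurd (he4 w hwx hwy) hw
    have hne9i : a 9 ≠ a i'' := by
      intro h
      have := congrArg Fin.val (HPAux.a_injL h3 h)
      rw [h9val] at this
      have := hlt_j i'' (hFlt i'' hmem)
      omega
    have hXne' : X ≠ a i'' := hXne i'' (hFlt i'' hmem)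
    rcases key _ hm9 with h9e | h9e <;> rcases key _ hsw.2.1 with hXe | hXe <;>
      rcases key _ hsw.2.2 with hie | hie <;>
      first
        | exact hne9X (h9e.trans hXe.symm)
        | exact hne9i (h9e.trans hie.symm)
        | exact hXne' (hXe.trans hie.symm)
  set Fm : Finset (Fin 10) := F.filter (fun i'' => σf i'' < t) with hFmdef
  set Fp : Finset (Fin 10) := F.filter (fun i'' => t < σf i'') with hFpdef
  have hFmF : ∀ i'' ∈ Fm, i'' ∈ F := fun i'' h => (Finset.mem_filter.mp h).1
  have hFpF : ∀ i'' ∈ Fp, i'' ∈ F := fun i'' h => (Finset.mem_filter.mp h).1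
  have hFsplit : F = Fm ∪ Fp := by
    ext i''
    simp only [hFmdef, hFpdef, Finset.mem_union, Finset.mem_filter]
    constructor
    · intro hmem
      rcases lt_trichotomy (σf i'') t with h | h | h
      · exact Or.inl ⟨hmem, h⟩
      · exact absurd h (hσne_t i'' hmem)
      · exact Or.inr ⟨hmem, h⟩
    · rintro (⟨h, -⟩ | ⟨h, -⟩) <;> exact h
  have hdisjmp : Disjoint Fm Fp := by
    rw [Finset.disjoint_left]
    intro i'' h1 h2
    have := (Finset.mem_filter.mp h1).2
    have := (Finset.mem_filter.mp h2).2
    omega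
  have hcardsplit : F.card = Fm.card + Fp.card := by
    rw [hFsplit]
    exact Finset.card_union_of_disjoint hdisjmp
  have hσfacts : ∀ i'' ∈ F, σf i'' < 435 ∧ hp.pos (σf i'') X = 15 ∧
      hp.pos (σf i'' + 1) X = 16 ∧ hp.pos (σf i'') (a i'') = 16 ∧
      hp.pos (σf i'' + 1) (a i'') = 15 := by
    intro i'' hmem
    obtain ⟨hs435, hg, hsw⟩ := hσf i'' hmem
    obtain ⟨e1, e2, e3, e4⟩ := hswap_pos i'' (hFlt i'' hmem) _ hs435 hg hsw
    exact ⟨hs435, e1, e3, e2, e4⟩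
  have hσinj : ∀ i1 ∈ F, ∀ i2 ∈ F, σf i1 = σf i2 → i1 = i2 := by
    intro i1 h1 i2 h2 heq
    obtain ⟨hs1, hg1, hsw1⟩ := hσf i1 h1
    obtain ⟨hs2, hg2, hsw2⟩ := hσf i2 h2
    rw [heq] at hsw1
    rcases HPAux.swapsAt_pair_eq hs2 hsw1 hsw2 with ⟨e1, e2⟩ | ⟨e1, e2⟩
    · exact HPAux.a_injL h3 e2
    · exact absurd e1 (hXne i2 (hFlt i2 h2))
  have hQm : ∀ i'' ∈ Fm, hp.pos (t + 1) (a i'') < hp.pos (t + 1) X := by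
    intro i'' hm
    have hmF := hFmF i'' hm
    have hσlt : σf i'' < t := (Finset.mem_filter.mp hm).2
    obtain ⟨hs435, e1, e3, e2, e4⟩ := hσfacts i'' hmF
    obtain ⟨-, -, hsw⟩ := hσf i'' hmF
    exact HPAux.after_swap (Ne.symm (hXne i'' (hFlt i'' hmF))) hs435
      (HPAux.swapsAt_symm hsw) (by omega) (t + 1) (by omega) (by omega)
  have hQp : ∀ i'' ∈ Fp, hp.pos (t + 1) X < hp.pos (t + 1) (a i'') := by
    intro i'' hm
    have hmF := hFpF i'' hm
    have hσgt : t < σf i'' := (Finset.mem_filter.mp hm).2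
    obtain ⟨hs435, hg, hsw⟩ := hσf i'' hmF
    exact HPAux.before_swap (hXne i'' (hFlt i'' hmF)) hs435 hsw
      (h0X i'' (hFlt i'' hmF)) (t + 1) (by omega)
  rw [hhal, hcardsplit]
  rcases hpos with hL | hR
  · -- left case : pos (t+1) X = 10 + l
    have hL' : hp.pos (t + 1) X = 10 + l := hL
    have hmemA : ∀ i'' ∈ Fm, hp.pos (t + 1) (a i'') ∈ Finset.Icc 11 (9 + l) := by
      intro i'' hm
      have h1 := hQm i'' hm
      rw [hL'] at h1
      have h2 := HPAux.pin_low h3 hN1 ht (hi''ne9 i'' (hFmF i'' hm)) (by omega)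
      rw [Finset.mem_Icc]
      omega
    by_cases hFpE : Fp.Nonempty
    · set Tp : Finset ℕ := Fp.image σf with hTpdef
      have hTpne : Tp.Nonempty := hFpE.image σf
      have hTpfacts : ∀ v ∈ Tp, v < 435 ∧ hp.pos v X = 15 ∧ hp.pos (v + 1) X = 16 := by
        intro v hv
        rw [hTpdef] at hv
        obtain ⟨i'', hi'', rfl⟩ := Finset.mem_image.mp hv
        obtain ⟨e0, e1, e2, e3, e4⟩ := hσfacts i'' (hFpF i'' hi'')
        exact ⟨e0, e1, e2⟩
      have hTpgt : ∀ v ∈ Tp, t < v := by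
        intro v hv
        rw [hTpdef] at hv
        obtain ⟨i'', hi'', rfl⟩ := Finset.mem_image.mp hv
        exact (Finset.mem_filter.mp hi'').2
      choose yf uf hyf using HPAux.partner_gen X Tp hTpfacts hTpne
      set mn : ℕ := Tp.min' hTpne with hmn
      have hufgt : ∀ u' ∈ Tp.erase mn, t < uf u' := by
        intro u' hu'
        obtain ⟨hmax, -⟩ := hyf u' hu'
        have hmnmem : mn ∈ Tp := Tp.min'_mem hTpne
        have hmnlt : mn < u' := lt_of_le_of_ne
          (Tp.min'_le u' (Finset.mem_of_mem_erase hu'))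
          (Ne.symm (Finset.ne_of_mem_erase hu'))
        have h1 := hmax mn hmnmem hmnlt
        have h2 := hTpgt mn hmnmem
        omega
      have hcls : ∀ u' ∈ Tp.erase mn, ∃ m : Fin 10, yf u' = a m ∧ (j : ℕ) < (m : ℕ) := by
        intro u' hu'
        obtain ⟨hmax, hult, h435, e16, e15, f15, f16, hsw⟩ := hyf u' hu'
        exact HPAux.passer_classify h3 hXdef h435 hsw (by omega)
      have hyf9 : ∀ u' ∈ Tp.erase mn, yf u' ≠ a 9 := by
        intro u' hu' he
        obtain ⟨hmax, hult, h435, e16, e15, f15, f16, hsw⟩ := hyf u' hu'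
        rw [he] at hsw
        obtain ⟨u0, hu0lt, hsw0, -⟩ := HPAux.swapped_before (hp := hp) hne9X
          (show t + 1 ≤ 435 by omega) h09X (by rw [h9t1, hL']; omega)
        have heq := HPAux.swap_unique hne9X (by omega) h435 hsw0 (HPAux.swapsAt_symm hsw)
        have := hufgt u' hu'
        omega
      have hmemY : ∀ u' ∈ Tp.erase mn, hp.pos (t + 1) (yf u') ∈ Finset.Icc 11 (9 + l) := by
        intro u' hu'
        obtain ⟨m, hm, hmgt⟩ := hcls u' hu'
        obtain ⟨hmax, hult, h435, e16, e15, f15, f16, hsw⟩ := hyf u' hu'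
        have hm9 : m ≠ (9 : Fin 10) := by
          intro h
          exact hyf9 u' hu' (by rw [hm, h])
        have hneyX : yf u' ≠ X := Ne.symm hsw.1
        have h0' : hp.pos 0 (yf u') < hp.pos 0 X := by
          rw [hm, hXdef, h3.2.1, h3.2.1, hjval]
          have := m.is_lt
          omega
        have hbefore := HPAux.before_swap hneyX h435 (HPAux.swapsAt_symm hsw) h0'
          (t + 1) (by have := hufgt u' hu'; omega)
        rw [hL'] at hbefore
        have hlow := HPAux.pin_low h3 hN1 ht (m := m) hm9 (by rw [← hm]; omega)
        rw [Finset.mem_Icc, hm]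
        rw [hm] at hbefore
        omega
      have hyfinj : ∀ u1 ∈ Tp.erase mn, ∀ u2 ∈ Tp.erase mn, yf u1 = yf u2 → u1 = u2 := by
        intro u1 h1 u2 h2 he
        by_contra hne
        obtain ⟨hmax1, hult1, h4351, e161, e151, f151, f161, hsw1⟩ := hyf u1 h1
        obtain ⟨hmax2, hult2, h4352, e162, e152, f152, f162, hsw2⟩ := hyf u2 h2
        rw [he] at hsw1
        have hueq := HPAux.swap_unique hsw2.1 (by omega) (by omega) hsw1 hsw2
        rcases lt_or_gt_of_ne hne with hlt | hlt
        · have := hmax2 u1 (Finset.mem_of_mem_erase h1) hlt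
          omega
        · have := hmax1 u2 (Finset.mem_of_mem_erase h2) hlt
          omega
      have hTpcard : Tp.card = Fp.card := Finset.card_image_of_injOn
        (fun z1 h1 z2 h2 he => hσinj z1 (hFpF z1 h1) z2 (hFpF z2 h2) he)
      have herasecard : (Tp.erase mn).card = Tp.card - 1 :=
        Finset.card_erase_of_mem (Tp.min'_mem hTpne)
      set D : Finset (Fin 30) := Fm.image (fun i'' => a i'') ∪ (Tp.erase mn).image yf
        with hDdef
      have hc1 : (Fm.image (fun i'' => a i'')).card = Fm.card :=
        Finset.card_image_of_injOn (fun z1 _ z2 _ he => HPAux.a_injL h3 he)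
      have hc2 : ((Tp.erase mn).image yf).card = (Tp.erase mn).card :=
        Finset.card_image_of_injOn (fun z1 h1 z2 h2 he => hyfinj z1 h1 z2 h2 he)
      have hdisjD : Disjoint (Fm.image (fun i'' => a i'')) ((Tp.erase mn).image yf) := by
        rw [Finset.disjoint_left]
        intro z hz1 hz2
        obtain ⟨i'', hi'', rfl⟩ := Finset.mem_image.mp hz1
        obtain ⟨u', hu', heq⟩ := Finset.mem_image.mp hz2
        obtain ⟨m, hm, hmgt⟩ := hcls u' hu'
        rw [hm] at heq
        have hmi := HPAux.a_injL h3 heq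
        have hcontra := hlt_j i'' (hFlt i'' (hFmF i'' hi''))
        rw [← hmi] at hcontra
        rw [hjval] at hmgt
        omega
      have hDcard : D.card = Fm.card + (Tp.card - 1) := by
        rw [hDdef, Finset.card_union_of_disjoint hdisjD, hc1, hc2, herasecard]
      have hDsub : ∀ z ∈ D, hp.pos (t + 1) z ∈ Finset.Icc 11 (9 + l) := by
        intro z hz
        rw [hDdef, Finset.mem_union] at hz
        rcases hz with hz | hz
        · obtain ⟨i'', hi'', rfl⟩ := Finset.mem_image.mp hz
          exact hmemA i'' hi''
        · obtain ⟨u', hu', rfl⟩ := Finset.mem_image.mp hz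
          exact hmemY u' hu'
      have hijD : D.card ≤ (Finset.Icc 11 (9 + l)).card :=
        Finset.card_le_card_of_injOn (hp.pos (t + 1)) hDsub
          (fun z1 _ z2 _ he => HPAux.pos_injE (by omega) he)
      rw [Nat.card_Icc, hDcard] at hijD
      have hFp1 : 0 < Fp.card := Finset.card_pos.mpr hFpE
      omega
    · have hFp0 : Fp.card = 0 := by
        rw [Finset.card_eq_zero]
        exact Finset.not_nonempty_iff_eq_empty.mp hFpE
      have hcard' : Fm.card ≤ (Finset.Icc 11 (9 + l)).card :=
        Finset.card_le_card_of_injOn (fun i'' => hp.pos (t + 1) (a i'')) hmemA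
          (fun z1 _ z2 _ he => HPAux.a_injL h3 (HPAux.pos_injE (by omega) he))
      rw [Nat.card_Icc] at hcard'
      omega
  · -- right case : pos (t+1) X = 21 - l
    have hR' : hp.pos (t + 1) X = 21 - l := hR
    have hmemA : ∀ i'' ∈ Fp, hp.pos (t + 1) (a i'') ∈ Finset.Icc (22 - l) 20 := by
      intro i'' hm
      have h1 := hQp i'' hm
      rw [hR'] at h1
      have h2 : ¬ (21 ≤ hp.pos (t + 1) (a i'')) := fun hge =>
        HPAux.pin_high h3 hN1 ht (hi''ne9 i'' (hFpF i'' hm)) hge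
      rw [Finset.mem_Icc]
      omega
    by_cases hFmE : Fm.Nonempty
    · set Tm : Finset ℕ := Fm.image σf with hTmdef
      have hTmne : Tm.Nonempty := hFmE.image σf
      have hTmfacts : ∀ v ∈ Tm, v < 435 ∧ hp.pos v X = 15 ∧ hp.pos (v + 1) X = 16 := by
        intro v hv
        rw [hTmdef] at hv
        obtain ⟨i'', hi'', rfl⟩ := Finset.mem_image.mp hv
        obtain ⟨e0, e1, e2, e3, e4⟩ := hσfacts i'' (hFmF i'' hi'')
        exact ⟨e0, e1, e2⟩
      have hTmlt : ∀ v ∈ Tm, v < t := by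
        intro v hv
        rw [hTmdef] at hv
        obtain ⟨i'', hi'', rfl⟩ := Finset.mem_image.mp hv
        exact (Finset.mem_filter.mp hi'').2
      choose yf uf hyf using HPAux.partner_gen X Tm hTmfacts hTmne
      set mn : ℕ := Tm.min' hTmne with hmn
      have huflt : ∀ u' ∈ Tm.erase mn, uf u' < t := by
        intro u' hu'
        obtain ⟨-, hult, -⟩ := hyf u' hu'
        have := hTmlt u' (Finset.mem_of_mem_erase hu')
        omega
      have hcls : ∀ u' ∈ Tm.erase mn, ∃ m : Fin 10, yf u' = a m ∧ (j : ℕ) < (m : ℕ) := by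
        intro u' hu'
        obtain ⟨hmax, hult, h435, e16, e15, f15, f16, hsw⟩ := hyf u' hu'
        exact HPAux.passer_classify h3 hXdef h435 hsw (by omega)
      have hyf9 : ∀ u' ∈ Tm.erase mn, yf u' ≠ a 9 := by
        intro u' hu' he
        obtain ⟨hmax, hult, h435, e16, e15, f15, f16, hsw⟩ := hyf u' hu'
        have h13 := h9pre (uf u') (by have := huflt u' hu'; omega)
        rw [he] at f15
        omega
      have hmemY : ∀ u' ∈ Tm.erase mn, hp.pos (t + 1) (yf u') ∈ Finset.Icc (22 - l) 20 := by
        intro u' hu'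
        obtain ⟨m, hm, hmgt⟩ := hcls u' hu'
        obtain ⟨hmax, hult, h435, e16, e15, f15, f16, hsw⟩ := hyf u' hu'
        have hm9 : m ≠ (9 : Fin 10) := by
          intro h
          exact hyf9 u' hu' (by rw [hm, h])
        have haft := HPAux.after_swap hsw.1 h435 hsw (by omega) (t + 1)
          (by have := huflt u' hu'; omega) (by omega)
        rw [hR'] at haft
        have hhigh : ¬ (21 ≤ hp.pos (t + 1) (yf u')) := by
          rw [hm]
          exact fun hge => HPAux.pin_high h3 hN1 ht hm9 hge
        rw [Finset.mem_Icc]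
        omega
      have hyfinj : ∀ u1 ∈ Tm.erase mn, ∀ u2 ∈ Tm.erase mn, yf u1 = yf u2 → u1 = u2 := by
        intro u1 h1 u2 h2 he
        by_contra hne
        obtain ⟨hmax1, hult1, h4351, e161, e151, f151, f161, hsw1⟩ := hyf u1 h1
        obtain ⟨hmax2, hult2, h4352, e162, e152, f152, f162, hsw2⟩ := hyf u2 h2
        rw [he] at hsw1
        have hueq := HPAux.swap_unique hsw2.1 (by omega) (by omega) hsw1 hsw2
        rcases lt_or_gt_of_ne hne with hlt | hlt
        · have := hmax2 u1 (Finset.mem_of_mem_erase h1) hlt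
          omega
        · have := hmax1 u2 (Finset.mem_of_mem_erase h2) hlt
          omega
      have hTmcard : Tm.card = Fm.card := Finset.card_image_of_injOn
        (fun z1 h1 z2 h2 he => hσinj z1 (hFmF z1 h1) z2 (hFmF z2 h2) he)
      have herasecard : (Tm.erase mn).card = Tm.card - 1 :=
        Finset.card_erase_of_mem (Tm.min'_mem hTmne)
      set D : Finset (Fin 30) := Fp.image (fun i'' => a i'') ∪ (Tm.erase mn).image yf
        with hDdef
      have hc1 : (Fp.image (fun i'' => a i'')).card = Fp.card :=
        Finset.card_image_of_injOn (fun z1 _ z2 _ he => HPAux.a_injL h3 he)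
      have hc2 : ((Tm.erase mn).image yf).card = (Tm.erase mn).card :=
        Finset.card_image_of_injOn (fun z1 h1 z2 h2 he => hyfinj z1 h1 z2 h2 he)
      have hdisjD : Disjoint (Fp.image (fun i'' => a i'')) ((Tm.erase mn).image yf) := by
        rw [Finset.disjoint_left]
        intro z hz1 hz2
        obtain ⟨i'', hi'', rfl⟩ := Finset.mem_image.mp hz1
        obtain ⟨u', hu', heq⟩ := Finset.mem_image.mp hz2
        obtain ⟨m, hm, hmgt⟩ := hcls u' hu'
        rw [hm] at heq
        have hmi := HPAux.a_injL h3 heq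
        have hcontra := hlt_j i'' (hFlt i'' (hFpF i'' hi''))
        rw [← hmi] at hcontra
        rw [hjval] at hmgt
        omega
      have hDcard : D.card = Fp.card + (Tm.card - 1) := by
        rw [hDdef, Finset.card_union_of_disjoint hdisjD, hc1, hc2, herasecard]
      have hDsub : ∀ z ∈ D, hp.pos (t + 1) z ∈ Finset.Icc (22 - l) 20 := by
        intro z hz
        rw [hDdef, Finset.mem_union] at hz
        rcases hz with hz | hz
        · obtain ⟨i'', hi'', rfl⟩ := Finset.mem_image.mp hz
          exact hmemA i'' hi''
        · obtain ⟨u', hu', rfl⟩ := Finset.mem_image.mp hz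
          exact hmemY u' hu'
      have hijD : D.card ≤ (Finset.Icc (22 - l) 20).card :=
        Finset.card_le_card_of_injOn (hp.pos (t + 1)) hDsub
          (fun z1 _ z2 _ he => HPAux.pos_injE (by omega) he)
      rw [Nat.card_Icc, hDcard] at hijD
      have hFm1 : 0 < Fm.card := Finset.card_pos.mpr hFmE
      omega
    · have hFm0 : Fm.card = 0 := by
        rw [Finset.card_eq_zero]
        exact Finset.not_nonempty_iff_eq_empty.mp hFmE
      have hcard' : Fp.card ≤ (Finset.Icc (22 - l) 20).card :=
        Finset.card_le_card_of_injOn (fun i'' => hp.pos (t + 1) (a i'')) hmemA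
          (fun z1 _ z2 _ he => HPAux.a_injL h3 (HPAux.pos_injE (by omega) he))
      rw [Nat.card_Icc] at hcard'
      omega
end
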